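/- arXiv:2209.14543 — 10 statements merged into one kernel-verified Lean document; each statement's English description precedes it below -/
import Mathlib

section
/- Let ℓ ≥ 1 and let S = {i₁ < ⋯ < i_m} ⊆ {1,…,ℓ} be nonempty, with the convention i₀ = 0. Then for every 1 ≤ j ≤ m, the number of integers n with 1 ≤ n ≤ i_j such that |S ∩ {n, n+1, …, i_j}| is even equals S₂(j) = Σ_{k=1}^{⌊j/2⌋} (i_{j−2k+1} − i_{j−2k}). -/
/-- counting compact roots `γ_n + ⋯ + γ_{i_j}` in type `A_ℓ`. -/
theorem stmt1 (ℓ m : ℕ) (hℓ : 1 ≤ ℓ) (hm : 1 ≤ m)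
    (i : ℕ → ℕ) (h0 : i 0 = 0) (htop : i (m + 1) = ℓ + 1)
    (hmono : ∀ k ≤ m, i k < i (k + 1))
    (j : ℕ) (hj : 1 ≤ j) (hjm : j ≤ m) :
    (((Finset.Icc 1 (i j)).filter
        (fun n => Even ((((Finset.Icc 1 m).image i) ∩ Finset.Icc n (i j)).card))).card : ℤ)
      = ∑ k ∈ Finset.Icc 1 (j / 2),
          ((i (j - 2 * k + 1) : ℤ) - (i (j - 2 * k) : ℤ)) := by
  have hsm : ∀ {a b : ℕ}, a < b → b ≤ m + 1 → i a < i b := by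
    intro a b hab hb
    induction b with
    | zero => omega
    | succ b ih =>
      rcases Nat.lt_succ_iff_lt_or_eq.mp hab with h | h
      · exact (ih h (by omega)).trans (hmono b (by omega))
      · subst h; exact hmono a (by omega)
  have hle : ∀ {a b : ℕ}, a ≤ b → b ≤ m + 1 → i a ≤ i b := by
    intro a b hab hb
    rcases eq_or_lt_of_le hab with rfl | h
    · exact le_rfl
    · exact (hsm h hb).le
  -- key counting lemma: if `i s < n ≤ i (s+1)` with `s < j`, the intersection has card `j - s`
  have hcard : ∀ n s : ℕ, s < j → i s < n → n ≤ i (s + 1) →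
      ((((Finset.Icc 1 m).image i) ∩ Finset.Icc n (i j)).card) = j - s := by
    intro n s hsj hsn hns
    have heq : ((Finset.Icc 1 m).image i) ∩ Finset.Icc n (i j)
        = (Finset.Icc (s + 1) j).image i := by
      ext x
      simp only [Finset.mem_inter, Finset.mem_image, Finset.mem_Icc]
      constructor
      · rintro ⟨⟨k, ⟨hk1, hk2⟩, rfl⟩, hnx, hxj⟩
        refine ⟨k, ⟨?_, ?_⟩, rfl⟩
        · by_contra h
          have : i k ≤ i s := hle (by omega) (by omega)
          omega
        · by_contra h
          have : i j < i k := hsm (by omega) (by omega)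
          omega
      · rintro ⟨k, ⟨hk1, hk2⟩, rfl⟩
        have h1 : i (s + 1) ≤ i k := hle (by omega) (by omega)
        have h2 : i k ≤ i j := hle (by omega) (by omega)
        exact ⟨⟨k, ⟨by omega, by omega⟩, rfl⟩, by omega, h2⟩
    rw [heq, Finset.card_image_of_injOn, Nat.card_Icc]
    · omega
    · intro a ha b hb hab
      simp only [Finset.mem_coe, Finset.mem_Icc] at ha hb
      by_contra h
      rcases Nat.lt_or_ge a b with h' | h'
      · exact absurd hab (hsm h' (by omega)).ne
      · exact absurd hab.symm (hsm (by omega) (by omega)).ne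
  -- membership characterization
  have hmem : ∀ n : ℕ, (n ∈ (Finset.Icc 1 (i j)).filter
        (fun n => Even ((((Finset.Icc 1 m).image i) ∩ Finset.Icc n (i j)).card))) ↔
      ∃ k ∈ Finset.Icc 1 (j / 2), n ∈ Finset.Ioc (i (j - 2 * k)) (i (j - 2 * k + 1)) := by
    intro n
    simp only [Finset.mem_filter, Finset.mem_Icc, Finset.mem_Ioc]
    constructor
    · rintro ⟨⟨hn1, hn2⟩, heven⟩
      -- find the greatest s ≤ j with i s < n
      set s := Nat.findGreatest (fun k => i k < n) j with hs
      have hP0 : i 0 < n := by omega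
      have hspec : i s < n := Nat.findGreatest_spec (P := fun k => i k < n) (Nat.zero_le j) hP0
      have hsle : s ≤ j := Nat.findGreatest_le j
      have hsj : s < j := by
        rcases eq_or_lt_of_le hsle with h | h
        · rw [h] at hspec; omega
        · exact h
      have hns : n ≤ i (s + 1) := by
        have := Nat.findGreatest_is_greatest (P := fun k => i k < n)
          (Nat.lt_succ_self s) (by omega)
        simpa using le_of_not_gt this
      rw [hcard n s hsj hspec hns] at heven
      obtain ⟨c, hc⟩ := heven
      have h1 : j - 2 * c = s := by omega
      have h2 : j - 2 * c + 1 = s + 1 := by omega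
      refine ⟨c, ⟨by omega, by omega⟩, ?_⟩
      rw [h1]
      exact ⟨hspec, hns⟩
    · rintro ⟨k, ⟨hk1, hk2⟩, hn1, hn2⟩
      have h2k : 2 * k ≤ j := by omega
      have hsj : j - 2 * k < j := by omega
      have hn1' : 1 ≤ n := by omega
      have hnij : n ≤ i j := le_trans hn2 (hle (by omega) (by omega))
      rw [hcard n (j - 2 * k) hsj hn1 hn2]
      exact ⟨⟨hn1', hnij⟩, ⟨k, by omega⟩⟩
  have hdisj : ∀ a ∈ Finset.Icc 1 (j / 2), ∀ b ∈ Finset.Icc 1 (j / 2), a ≠ b →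
      Disjoint (Finset.Ioc (i (j - 2 * a)) (i (j - 2 * a + 1)))
        (Finset.Ioc (i (j - 2 * b)) (i (j - 2 * b + 1))) := by
    intro a ha b hb hab
    simp only [Finset.mem_Icc] at ha hb
    rw [Finset.disjoint_left]
    intro x hx1 hx2
    simp only [Finset.mem_Ioc] at hx1 hx2
    rcases Nat.lt_or_ge a b with h | h
    · have : i (j - 2 * b + 1) ≤ i (j - 2 * a) := hle (by omega) (by omega)
      omega
    · have h' : b < a := by omega
      have : i (j - 2 * a + 1) ≤ i (j - 2 * b) := hle (by omega) (by omega)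
      omega
  have hset : (Finset.Icc 1 (i j)).filter
        (fun n => Even ((((Finset.Icc 1 m).image i) ∩ Finset.Icc n (i j)).card))
      = (Finset.Icc 1 (j / 2)).biUnion
          (fun k => Finset.Ioc (i (j - 2 * k)) (i (j - 2 * k + 1))) := by
    ext n
    rw [hmem]
    simp [Finset.mem_biUnion]
  rw [hset, Finset.card_biUnion hdisj, Nat.cast_sum]
  refine Finset.sum_congr rfl ?_
  intro k hk
  simp only [Finset.mem_Icc] at hk
  rw [Nat.card_Ioc, Nat.cast_sub (hle (by omega) (by omega))]
end

section
/- Let ℓ ≥ 1 and let S = {i₁ < ⋯ < i_m} ⊆ {1,…,ℓ} be nonempty, with the convention i₀ = 0. Then for every 1 ≤ j ≤ m, the number of integers n with 1 ≤ n ≤ i_j − 1 such that |S ∩ {n, n+1, …, i_j − 1}| is even and nonzero equals T₁(j) = Σ_{k=1}^{⌊(j+1)/2⌋−1} (i_{j−2k} − i_{j−2k−1}). -/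
/-- counting relevant compact roots `γ_n + ⋯ + γ_{i_j - 1}` in type `A_ℓ`. -/
theorem stmt2 (ℓ m : ℕ) (hℓ : 1 ≤ ℓ) (hm : 1 ≤ m)
    (i : ℕ → ℕ) (h0 : i 0 = 0) (htop : i (m + 1) = ℓ + 1)
    (hmono : ∀ k ≤ m, i k < i (k + 1))
    (j : ℕ) (hj : 1 ≤ j) (hjm : j ≤ m) :
    (((Finset.Icc 1 (i j - 1)).filter
        (fun n => Even ((((Finset.Icc 1 m).image i) ∩ Finset.Icc n (i j - 1)).card) ∧
          (((Finset.Icc 1 m).image i) ∩ Finset.Icc n (i j - 1)).card ≠ 0)).card : ℤ)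
      = ∑ k ∈ Finset.Icc 1 ((j + 1) / 2 - 1),
          ((i (j - 2 * k) : ℤ) - (i (j - 2 * k - 1) : ℤ)) := by
  have mono : ∀ a b, a < b → b ≤ m + 1 → i a < i b := by
    intro a b hab hb
    induction b with
    | zero => omega
    | succ c ih =>
      rcases Nat.lt_succ_iff_lt_or_eq.mp hab with h | h
      · exact lt_trans (ih h (by omega)) (hmono c (by omega))
      · subst h; exact hmono a (by omega)
  have mono' : ∀ a b, a ≤ b → b ≤ m + 1 → i a ≤ i b := by
    intro a b hab hb
    rcases Nat.lt_or_ge a b with h | h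
    · exact le_of_lt (mono a b h hb)
    · have : a = b := by omega
      subst this; rfl
  have hij1 : 1 ≤ i j := by
    have := mono 0 j (by omega) (by omega); omega
  -- key cardinality computation
  have key : ∀ a n, a + 1 ≤ j → i a < n → n ≤ i (a + 1) →
      (((Finset.Icc 1 m).image i) ∩ Finset.Icc n (i j - 1)).card = j - 1 - a := by
    intro a n ha h1 h2
    have hset : ((Finset.Icc 1 m).image i) ∩ Finset.Icc n (i j - 1)
        = (Finset.Icc (a + 1) (j - 1)).image i := by
      ext x
      simp only [Finset.mem_inter, Finset.mem_image, Finset.mem_Icc]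
      constructor
      · rintro ⟨⟨k, ⟨hk1, hk2⟩, rfl⟩, hn, hx⟩
        refine ⟨k, ⟨?_, ?_⟩, rfl⟩
        · by_contra h; push_neg at h
          have := mono' k a (by omega) (by omega); omega
        · by_contra h; push_neg at h
          have := mono' j k (by omega) (by omega); omega
      · rintro ⟨k, ⟨hk1, hk2⟩, rfl⟩
        have h3 : i (a + 1) ≤ i k := mono' _ _ hk1 (by omega)
        have h4 : i k < i j := mono k j (by omega) (by omega)
        exact ⟨⟨k, ⟨by omega, by omega⟩, rfl⟩, by omega, by omega⟩
    rw [hset, Finset.card_image_of_injOn, Nat.card_Icc]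
    · omega
    · intro x hx y hy hxy
      simp only [Finset.coe_Icc, Set.mem_Icc] at hx hy
      by_contra hne
      rcases Nat.lt_or_ge x y with h | h
      · exact absurd hxy (Nat.ne_of_lt (mono x y h (by omega)))
      · exact absurd hxy.symm (Nat.ne_of_lt (mono y x (by omega) (by omega)))
  set K := (j + 1) / 2 - 1 with hK
  -- the filtered set is a disjoint union of intervals
  have hunion : (Finset.Icc 1 (i j - 1)).filter
      (fun n => Even ((((Finset.Icc 1 m).image i) ∩ Finset.Icc n (i j - 1)).card) ∧
        (((Finset.Icc 1 m).image i) ∩ Finset.Icc n (i j - 1)).card ≠ 0)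
      = (Finset.Icc 1 K).biUnion
          (fun k => Finset.Ioc (i (j - 2 * k - 1)) (i (j - 2 * k))) := by
    ext n
    simp only [Finset.mem_filter, Finset.mem_Icc, Finset.mem_biUnion, Finset.mem_Ioc]
    constructor
    · rintro ⟨⟨hn1, hn2⟩, heven, hne⟩
      set a := Nat.findGreatest (fun a => i a < n) (j - 1) with ha
      have hP : i a < n := Nat.findGreatest_spec (P := fun a => i a < n)
        (Nat.zero_le _) (by omega)
      have haj : a ≤ j - 1 := Nat.findGreatest_le _
      have hn3 : n ≤ i (a + 1) := by
        rcases Nat.lt_or_ge a (j - 1) with h | h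
        · have hg := Nat.findGreatest_is_greatest (P := fun a => i a < n)
            (n := j - 1) (k := a + 1) (by omega) (by omega)
          simp only [not_lt] at hg
          exact hg
        · have e : a + 1 = j := by omega
          rw [e]; omega
      have hcard := key a n (by omega) hP hn3
      rw [hcard] at heven hne
      obtain ⟨t, ht⟩ := heven
      refine ⟨t, ⟨by omega, by omega⟩, ?_, ?_⟩
      · have e1 : j - 2 * t - 1 = a := by omega
        rw [e1]; exact hP
      · have e2 : j - 2 * t = a + 1 := by omega
        rw [e2]; exact hn3
    · rintro ⟨k, ⟨hk1, hk2⟩, h1, h2⟩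
      have hkj : 2 * k ≤ j - 1 := by omega
      have e2 : j - 2 * k = (j - 2 * k - 1) + 1 := by omega
      have hcard := key (j - 2 * k - 1) n (by omega) h1 (by rw [← e2]; exact h2)
      have hx : i (j - 2 * k) < i j := mono _ _ (by omega) (by omega)
      refine ⟨⟨by omega, by omega⟩, ?_, ?_⟩
      · rw [hcard]; exact ⟨k, by omega⟩
      · rw [hcard]; omega
  have hdisj : ∀ x ∈ Finset.Icc 1 K, ∀ y ∈ Finset.Icc 1 K, x ≠ y →
      Disjoint (Finset.Ioc (i (j - 2 * x - 1)) (i (j - 2 * x)))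
        (Finset.Ioc (i (j - 2 * y - 1)) (i (j - 2 * y))) := by
    have main : ∀ x y : ℕ, x < y →
        Disjoint (Finset.Ioc (i (j - 2 * x - 1)) (i (j - 2 * x)))
          (Finset.Ioc (i (j - 2 * y - 1)) (i (j - 2 * y))) := by
      intro x y hxy
      have hle : i (j - 2 * y) ≤ i (j - 2 * x - 1) := mono' _ _ (by omega) (by omega)
      rw [Finset.disjoint_left]
      intro z hz hz'
      simp only [Finset.mem_Ioc] at hz hz'
      omega
    intro x hx y hy hne
    rcases Nat.lt_or_ge x y with h | h
    · exact main x y h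
    · exact (main y x (by omega)).symm
  rw [hunion, Finset.card_biUnion hdisj, Nat.cast_sum]
  refine Finset.sum_congr rfl ?_
  intro k hk
  simp only [Finset.mem_Icc] at hk
  rw [Nat.card_Ioc, Nat.cast_sub (mono' _ _ (by omega) (by omega))]
end

section
/- Let ℓ ≥ 1 and let S = {i₁ < ⋯ < i_m} ⊆ {1,…,ℓ} be nonempty, with the convention i_{m+1} = ℓ+1. Then for every 1 ≤ j ≤ m, the number of integers n with i_j + 1 ≤ n ≤ ℓ such that |S ∩ {i_j+1, …, n}| is even and nonzero equals T₂(j) = Σ_{k=1}^{⌈(m−j−1)/2⌉} (i_{j+2k+1} − i_{j+2k}). -/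
/-- counting relevant compact roots `γ_{i_j+1} + ⋯ + γ_n` in type `A_ℓ`. -/
theorem stmt3 (ℓ m : ℕ) (hℓ : 1 ≤ ℓ) (hm : 1 ≤ m)
    (i : ℕ → ℕ) (h0 : i 0 = 0) (htop : i (m + 1) = ℓ + 1)
    (hmono : ∀ k ≤ m, i k < i (k + 1))
    (j : ℕ) (hj : 1 ≤ j) (hjm : j ≤ m) :
    (((Finset.Icc (i j + 1) ℓ).filter
        (fun n => Even ((((Finset.Icc 1 m).image i) ∩ Finset.Icc (i j + 1) n).card) ∧
          (((Finset.Icc 1 m).image i) ∩ Finset.Icc (i j + 1) n).card ≠ 0)).card : ℤ)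
      = ∑ k ∈ Finset.Icc 1 ((m - j) / 2),
          ((i (j + 2 * k + 1) : ℤ) - (i (j + 2 * k) : ℤ)) := by
  -- strict monotonicity of i on [0, m+1]
  have hsm : ∀ b, b ≤ m + 1 → ∀ a, a < b → i a < i b := by
    intro b
    induction b with
    | zero => intro _ a ha; omega
    | succ c ih =>
      intro hb a ha
      have hc : i c < i (c + 1) := hmono c (by omega)
      rcases Nat.lt_succ_iff_lt_or_eq.mp ha with h | h
      · exact lt_trans (ih (by omega) a h) hc
      · subst h; exact hc
  have hmon : ∀ a b, a ≤ b → b ≤ m + 1 → i a ≤ i b := by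
    intro a b hab hb
    rcases eq_or_lt_of_le hab with rfl | h
    · exact le_rfl
    · exact (hsm b hb a h).le
  -- key cardinality computation
  have hcard : ∀ t, j ≤ t → t ≤ m → ∀ n, i t ≤ n → n < i (t + 1) →
      (((Finset.Icc 1 m).image i) ∩ Finset.Icc (i j + 1) n).card = t - j := by
    intro t hjt htm n h1 h2
    have hset : ((Finset.Icc 1 m).image i) ∩ Finset.Icc (i j + 1) n
        = (Finset.Icc (j + 1) t).image i := by
      ext x
      simp only [Finset.mem_inter, Finset.mem_image, Finset.mem_Icc]
      constructor
      · rintro ⟨⟨k, ⟨hk1, hk2⟩, rfl⟩, hx1, hx2⟩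
        refine ⟨k, ⟨?_, ?_⟩, rfl⟩
        · by_contra h
          push_neg at h
          have := hmon k j (by omega) (by omega)
          omega
        · by_contra h
          push_neg at h
          have := hmon (t + 1) k (by omega) (by omega)
          omega
      · rintro ⟨k, ⟨hk1, hk2⟩, rfl⟩
        refine ⟨⟨k, ⟨by omega, by omega⟩, rfl⟩, ?_, ?_⟩
        · have := hsm k (by omega) j (by omega); omega
        · exact le_trans (hmon k t hk2 (by omega)) h1
    rw [hset, Finset.card_image_of_injOn, Nat.card_Icc]
    · omega
    · intro a ha b hb hab
      simp only [Finset.coe_Icc, Set.mem_Icc] at ha hb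
      by_contra hne
      rcases Nat.lt_or_ge a b with h | h
      · exact absurd hab (Nat.ne_of_lt (hsm b (by omega) a h))
      · have hba : b < a := by omega
        exact absurd hab.symm (Nat.ne_of_lt (hsm a (by omega) b hba))
  -- existence of the "level" t of each n
  have hex : ∀ n, i j + 1 ≤ n → n ≤ ℓ → ∃ t, j ≤ t ∧ t ≤ m ∧ i t ≤ n ∧ n < i (t + 1) := by
    intro n hn1 hn2
    have hne : ((Finset.Icc j m).filter (fun t => i t ≤ n)).Nonempty := by
      exact ⟨j, by simp [Finset.mem_filter, Finset.mem_Icc]; omega⟩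
    set t := ((Finset.Icc j m).filter (fun t => i t ≤ n)).max' hne with ht
    have htmem := ((Finset.Icc j m).filter (fun t => i t ≤ n)).max'_mem hne
    simp only [Finset.mem_filter, Finset.mem_Icc] at htmem
    obtain ⟨⟨hjt, htm⟩, hitn⟩ := htmem
    refine ⟨t, hjt, htm, hitn, ?_⟩
    by_contra h
    push_neg at h
    rcases Nat.lt_or_ge t m with hlt | hge
    · have : t + 1 ∈ (Finset.Icc j m).filter (fun t => i t ≤ n) := by
        simp [Finset.mem_filter, Finset.mem_Icc]; omega
      have := Finset.le_max' _ _ this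
      omega
    · have htm' : t = m := by omega
      rw [htm', htop] at h
      omega
  -- main set identity
  have hmain : (Finset.Icc (i j + 1) ℓ).filter
        (fun n => Even ((((Finset.Icc 1 m).image i) ∩ Finset.Icc (i j + 1) n).card) ∧
          (((Finset.Icc 1 m).image i) ∩ Finset.Icc (i j + 1) n).card ≠ 0)
      = (Finset.Icc 1 ((m - j) / 2)).biUnion
          (fun k => Finset.Ico (i (j + 2 * k)) (i (j + 2 * k + 1))) := by
    ext n
    simp only [Finset.mem_filter, Finset.mem_Icc, Finset.mem_biUnion, Finset.mem_Ico]
    constructor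
    · rintro ⟨⟨hn1, hn2⟩, heven, hnz⟩
      obtain ⟨t, hjt, htm, ht1, ht2⟩ := hex n hn1 hn2
      rw [hcard t hjt htm n ht1 ht2] at heven hnz
      obtain ⟨c, hc⟩ := heven
      have hteq : t = j + 2 * c := by omega
      refine ⟨c, ⟨by omega, by omega⟩, ?_, ?_⟩
      · rw [← hteq]; exact ht1
      · rw [← hteq]; exact ht2
    · rintro ⟨k, ⟨hk1, hk2⟩, hn1, hn2⟩
      have htm : j + 2 * k ≤ m := by omega
      have hlow : i j < i (j + 2 * k) := hsm (j + 2 * k) (by omega) j (by omega)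
      have hub : i (j + 2 * k + 1) ≤ i (m + 1) := hmon _ _ (by omega) le_rfl
      have hbounds : i j + 1 ≤ n ∧ n ≤ ℓ := by omega
      refine ⟨hbounds, ?_, ?_⟩
      · rw [hcard (j + 2 * k) (by omega) htm n hn1 hn2]
        exact ⟨k, by omega⟩
      · rw [hcard (j + 2 * k) (by omega) htm n hn1 hn2]
        omega
  rw [hmain, Finset.card_biUnion]
  · push_cast
    refine Finset.sum_congr rfl ?_
    intro k hk
    simp only [Finset.mem_Icc] at hk
    rw [Nat.card_Ico]
    have hle : i (j + 2 * k) ≤ i (j + 2 * k + 1) := (hmono (j + 2 * k) (by omega)).le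
    omega
  · intro a ha b hb hab
    simp only [Finset.coe_Icc, Set.mem_Icc, Finset.mem_coe, Finset.mem_Icc] at ha hb
    rw [Function.onFun, Finset.disjoint_left]
    intro x hx1 hx2
    simp only [Finset.mem_Ico] at hx1 hx2
    rcases Nat.lt_or_ge a b with h | h
    · have := hmon (j + 2 * a + 1) (j + 2 * b) (by omega) (by omega)
      omega
    · have hba : b < a := by omega
      have := hmon (j + 2 * b + 1) (j + 2 * a) (by omega) (by omega)
      omega
end

section
/- Let ℓ ≥ 1 and let S = {i₁ < ⋯ < i_m} ⊆ {1,…,ℓ} be nonempty, with conventions i₀ = 0 and i_{m+1} = ℓ+1. Call an interval [a,b] ⊆ {1,…,ℓ} compact if |S ∩ [a,b]| is even, and relevant if in addition S ∩ [a,b] ≠ ∅. For 1 ≤ i ≤ ℓ let δᶜ_i denote the number of relevant compact intervals containing i, and set δᶜ_0 = δᶜ_{ℓ+1} = 0. Then for every 1 ≤ j ≤ m: −δᶜ_{i_j−1} + 2δᶜ_{i_j} − δᶜ_{i_j+1} = S₁(j) + S₂(j) − T₁(j) − T₂(j). -/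
/-- Number of relevant compact intervals `[a,b] ⊆ {1,…,ℓ}` (even, nonempty
intersection with `S`) containing `n`. -/
def deltaA (ℓ : ℕ) (S : Finset ℕ) (n : ℕ) : ℤ :=
  (((Finset.Icc 1 ℓ ×ˢ Finset.Icc 1 ℓ).filter
      (fun p => p.1 ≤ p.2 ∧ p.1 ≤ n ∧ n ≤ p.2 ∧
        Even ((S ∩ Finset.Icc p.1 p.2).card) ∧
        (S ∩ Finset.Icc p.1 p.2).Nonempty)).card : ℤ)

open Finset

section Aux

section Aux

variable {ℓ m : ℕ} {i : ℕ → ℕ}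

lemma imono (hmono : ∀ k ≤ m, i k < i (k + 1)) :
    ∀ {s t : ℕ}, s ≤ t → t ≤ m + 1 → i s ≤ i t := by
  intro s t hst htm
  induction t with
  | zero =>
    have : s = 0 := Nat.le_zero.mp hst
    simp [this]
  | succ t ih =>
    rcases Nat.lt_or_ge s (t + 1) with h | h
    · have h1 : i s ≤ i t := ih (by omega) (by omega)
      have h2 := hmono t (by omega)
      omega
    · have hst' : s = t + 1 := by omega
      subst hst'; exact le_rfl

lemma ireflect (hmono : ∀ k ≤ m, i k < i (k + 1)) {s t : ℕ}
    (h : i s < i t) (hs : s ≤ m + 1) : s < t := by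
  by_contra h'
  exact absurd (imono hmono (by omega : t ≤ s) hs) (by omega)

/-- locate `b` in a block `[i s, i (s+1))`, starting search from `t`. -/
lemma locate_b (htop : i (m + 1) = ℓ + 1) (hmono : ∀ k ≤ m, i k < i (k + 1))
    {b : ℕ} (hb : b ≤ ℓ) :
    ∀ d t, t + d = m + 1 → t ≤ m → i t ≤ b →
      ∃ s, t ≤ s ∧ s ≤ m ∧ i s ≤ b ∧ b < i (s + 1) := by
  intro d
  induction d with
  | zero => intro t h1 h2 _; omega
  | succ d ih =>
    intro t h1 h2 h3
    by_cases hc : i (t + 1) ≤ b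
    · rcases Nat.lt_or_ge t m with hm' | hm'
      · obtain ⟨s, hs⟩ := ih (t + 1) (by omega) (by omega) hc
        exact ⟨s, by omega, hs.2.1, hs.2.2⟩
      · have : t = m := by omega
        subst this
        rw [htop] at hc; omega
    · exact ⟨t, le_rfl, h2, h3, by omega⟩

lemma locate_b' (h0 : i 0 = 0) (htop : i (m + 1) = ℓ + 1)
    (hmono : ∀ k ≤ m, i k < i (k + 1)) {b : ℕ} (hb : b ≤ ℓ) (hm : 1 ≤ m) :
    ∃ s, s ≤ m ∧ i s ≤ b ∧ b < i (s + 1) := by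
  obtain ⟨s, hs⟩ := locate_b htop hmono hb (m + 1) 0 (by omega) (by omega) (by omega)
  exact ⟨s, hs.2⟩

lemma locate_a (h0 : i 0 = 0) (htop : i (m + 1) = ℓ + 1)
    (hmono : ∀ k ≤ m, i k < i (k + 1)) {a : ℕ} (ha : 1 ≤ a) (ha2 : a ≤ ℓ) (hm : 1 ≤ m) :
    ∃ p, 1 ≤ p ∧ p ≤ m + 1 ∧ i (p - 1) < a ∧ a ≤ i p := by
  obtain ⟨s, hsm, h1, h2⟩ := locate_b' h0 htop hmono (show a - 1 ≤ ℓ by omega) hm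
  exact ⟨s + 1, by omega, by omega, by simpa using (by omega : i s < a), by omega⟩

lemma inter_eq (hmono : ∀ k ≤ m, i k < i (k + 1)) {p s a b : ℕ}
    (hp1 : 1 ≤ p) (hpm : p ≤ m + 1) (hsm : s ≤ m)
    (ha1 : i (p - 1) < a) (ha2 : a ≤ i p) (hb1 : i s ≤ b) (hb2 : b < i (s + 1)) :
    ((Icc 1 m).image i) ∩ Icc a b = (Icc p s).image i := by
  ext x
  simp only [mem_inter, mem_image, mem_Icc]
  constructor
  · rintro ⟨⟨t, ⟨ht1, htm⟩, rfl⟩, hax, hxb⟩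
    refine ⟨t, ⟨?_, ?_⟩, rfl⟩
    · by_contra h
      have := imono hmono (show t ≤ p - 1 by omega) (by omega)
      omega
    · by_contra h
      have := imono hmono (show s + 1 ≤ t by omega) (by omega)
      omega
  · rintro ⟨t, ⟨hpt, hts⟩, rfl⟩
    have h1 := imono hmono hpt (by omega)
    have h2 := imono hmono hts (by omega)
    exact ⟨⟨t, ⟨by omega, by omega⟩, rfl⟩, by omega, by omega⟩

lemma inter_card (hmono : ∀ k ≤ m, i k < i (k + 1)) {p s a b : ℕ}
    (hp1 : 1 ≤ p) (hpm : p ≤ m + 1) (hsm : s ≤ m)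
    (ha1 : i (p - 1) < a) (ha2 : a ≤ i p) (hb1 : i s ≤ b) (hb2 : b < i (s + 1)) :
    (((Icc 1 m).image i) ∩ Icc a b).card = s + 1 - p := by
  rw [inter_eq hmono hp1 hpm hsm ha1 ha2 hb1 hb2]
  rw [Finset.card_image_of_injOn, Nat.card_Icc]
  intro x hx y hy hxy
  simp only [coe_Icc, Set.mem_Icc] at hx hy
  by_contra hne
  rcases Nat.lt_or_ge x y with h | h
  · have h1 := imono hmono (show x + 1 ≤ y by omega) (by omega)
    have h2 := hmono x (by omega)
    omega
  · have h1 := imono hmono (show y + 1 ≤ x by omega) (by omega)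
    have h2 := hmono y (by omega)
    omega

lemma cond_iff (hmono : ∀ k ≤ m, i k < i (k + 1)) {p s a b : ℕ}
    (hp1 : 1 ≤ p) (hpm : p ≤ m + 1) (hsm : s ≤ m)
    (ha1 : i (p - 1) < a) (ha2 : a ≤ i p) (hb1 : i s ≤ b) (hb2 : b < i (s + 1)) :
    (Even ((((Icc 1 m).image i) ∩ Icc a b).card) ∧
        (((Icc 1 m).image i) ∩ Icc a b).Nonempty) ↔ (p ≤ s ∧ Even (s + 1 - p)) := by
  rw [← Finset.card_pos, inter_card hmono hp1 hpm hsm ha1 ha2 hb1 hb2]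
  constructor
  · rintro ⟨h1, h2⟩; exact ⟨by omega, h1⟩
  · rintro ⟨h1, h2⟩
    refine ⟨h2, ?_⟩
    rcases h2 with ⟨c, hc⟩
    omega


lemma card_blocks {P : ℕ → Prop} [DecidablePred P] (lo hi K : ℕ) (f g : ℕ → ℕ)
    (hord : ∀ k k', 1 ≤ k → k < k' → k' ≤ K → g k ≤ f k' ∨ g k' ≤ f k)
    (hiff : ∀ x, (lo ≤ x ∧ x ≤ hi ∧ P x) ↔ ∃ k, 1 ≤ k ∧ k ≤ K ∧ f k ≤ x ∧ x < g k) :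
    ((Icc lo hi).filter P).card = ∑ k ∈ Icc 1 K, (g k - f k) := by
  have hset : (Icc lo hi).filter P = (Icc 1 K).biUnion (fun k => Ico (f k) (g k)) := by
    ext x
    simp only [mem_filter, mem_Icc, mem_biUnion, mem_Ico]
    constructor
    · rintro ⟨⟨h1, h2⟩, h3⟩
      obtain ⟨k, hk⟩ := (hiff x).mp ⟨h1, h2, h3⟩
      exact ⟨k, ⟨hk.1, hk.2.1⟩, hk.2.2⟩
    · rintro ⟨k, ⟨hk1, hk2⟩, hk3, hk4⟩
      obtain ⟨h1, h2, h3⟩ := (hiff x).mpr ⟨k, hk1, hk2, hk3, hk4⟩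
      exact ⟨⟨h1, h2⟩, h3⟩
  rw [hset, card_biUnion]
  · exact Finset.sum_congr rfl fun k _ => Nat.card_Ico _ _
  · intro k hk k' hk' hne
    simp only [coe_Icc, Set.mem_Icc, mem_Icc] at hk hk'
    rw [Function.onFun, Finset.disjoint_left]
    intro x hx hx'
    simp only [mem_Ico] at hx hx'
    rcases Nat.lt_or_ge k k' with h | h
    · rcases hord k k' hk.1 h hk'.2 with h' | h' <;> omega
    · rcases hord k' k hk'.1 (by omega) hk.2 with h' | h' <;> omega

lemma ij_le (htop : i (m + 1) = ℓ + 1) (hmono : ∀ k ≤ m, i k < i (k + 1))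
    {j : ℕ} (hjm : j ≤ m) : i j ≤ ℓ := by
  have h1 := imono hmono hjm (by omega)
  have h2 := hmono m le_rfl
  omega

lemma cardA (h0 : i 0 = 0) (htop : i (m + 1) = ℓ + 1)
    (hmono : ∀ k ≤ m, i k < i (k + 1)) {j : ℕ} (hj : 1 ≤ j) (hjm : j ≤ m) :
    ((Icc (i j) ℓ).filter (fun b => Even ((((Icc 1 m).image i) ∩ Icc (i j) b).card) ∧
        (((Icc 1 m).image i) ∩ Icc (i j) b).Nonempty)).card
      = ∑ k ∈ Icc 1 ((m - j + 1) / 2), (i (j + 2 * k) - i (j + 2 * k - 1)) := by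
  have hja : i (j - 1) < i j := by
    have h := hmono (j - 1) (by omega)
    rwa [show j - 1 + 1 = j by omega] at h
  apply card_blocks
  · intro k k' hk1 hkk hk'
    exact Or.inl (imono hmono (show j + 2 * k ≤ j + 2 * k' - 1 by omega) (by omega))
  · intro x
    constructor
    · rintro ⟨h1, h2, h3⟩
      obtain ⟨s, hsm, hs1, hs2⟩ := locate_b' h0 htop hmono h2 (by omega)
      have hsj : j ≤ s := by
        have := ireflect hmono (show i j < i (s + 1) by omega) (by omega)
        omega
      have hcond := (cond_iff hmono (p := j) hj (by omega) hsm hja le_rfl hs1 hs2).mp h3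
      obtain ⟨c, hc⟩ := hcond.2
      refine ⟨(s + 1 - j) / 2, by omega, by omega, ?_, ?_⟩
      · rwa [show j + 2 * ((s + 1 - j) / 2) - 1 = s by omega]
      · rwa [show j + 2 * ((s + 1 - j) / 2) = s + 1 by omega]
    · rintro ⟨k, hk1, hk2, hx1, hx2⟩
      have hs : j + 2 * k - 1 ≤ m := by omega
      have hb2 : x < i (j + 2 * k - 1 + 1) := by
        rwa [show j + 2 * k - 1 + 1 = j + 2 * k by omega]
      have h1 : i j ≤ x :=
        le_trans (imono hmono (show j ≤ j + 2 * k - 1 by omega) (by omega)) hx1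
      have h2 : x ≤ ℓ := by
        have := imono hmono (show j + 2 * k ≤ m + 1 by omega) le_rfl
        omega
      refine ⟨h1, h2, (cond_iff hmono hj (by omega) hs hja le_rfl hx1 hb2).mpr
        ⟨by omega, ?_⟩⟩
      rw [show j + 2 * k - 1 + 1 - j = k + k by omega]
      exact ⟨k, rfl⟩

lemma cardT2 (h0 : i 0 = 0) (htop : i (m + 1) = ℓ + 1)
    (hmono : ∀ k ≤ m, i k < i (k + 1)) {j : ℕ} (hj : 1 ≤ j) (hjm : j ≤ m) :
    ((Icc (i j + 1) ℓ).filter (fun b => Even ((((Icc 1 m).image i) ∩ Icc (i j + 1) b).card) ∧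
        (((Icc 1 m).image i) ∩ Icc (i j + 1) b).Nonempty)).card
      = ∑ k ∈ Icc 1 ((m - j) / 2), (i (j + 2 * k + 1) - i (j + 2 * k)) := by
  have ha1 : i (j + 1 - 1) < i j + 1 := by
    rw [show j + 1 - 1 = j by omega]; omega
  have ha2 : i j + 1 ≤ i (j + 1) := hmono j hjm
  apply card_blocks
  · intro k k' hk1 hkk hk'
    exact Or.inl (imono hmono (show j + 2 * k + 1 ≤ j + 2 * k' by omega) (by omega))
  · intro x
    constructor
    · rintro ⟨h1, h2, h3⟩
      obtain ⟨s, hsm, hs1, hs2⟩ := locate_b' h0 htop hmono h2 (by omega)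
      have hsj : j + 1 ≤ s + 1 := by
        have := ireflect hmono (show i j < i (s + 1) by omega) (by omega)
        omega
      have hcond := (cond_iff hmono (p := j + 1) (by omega) (by omega) hsm ha1 ha2
        hs1 hs2).mp h3
      obtain ⟨c, hc⟩ := hcond.2
      have hsj1 : j + 1 ≤ s := hcond.1
      refine ⟨(s - j) / 2, by omega, by omega, ?_, ?_⟩
      · rwa [show j + 2 * ((s - j) / 2) = s by omega]
      · rwa [show j + 2 * ((s - j) / 2) + 1 = s + 1 by omega]
    · rintro ⟨k, hk1, hk2, hx1, hx2⟩
      have hs : j + 2 * k ≤ m := by omega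
      have h1 : i j + 1 ≤ x := by
        have := imono hmono (show j + 1 ≤ j + 2 * k by omega) (by omega)
        omega
      have h2 : x ≤ ℓ := by
        have := imono hmono (show j + 2 * k + 1 ≤ m + 1 by omega) le_rfl
        omega
      refine ⟨h1, h2, (cond_iff hmono (p := j + 1) (by omega) (by omega) hs ha1 ha2
        hx1 hx2).mpr ⟨by omega, ?_⟩⟩
      rw [show j + 2 * k + 1 - (j + 1) = k + k by omega]
      exact ⟨k, rfl⟩

lemma cardS2 (h0 : i 0 = 0) (htop : i (m + 1) = ℓ + 1)
    (hmono : ∀ k ≤ m, i k < i (k + 1)) {j : ℕ} (hj : 1 ≤ j) (hjm : j ≤ m) :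
    ((Icc 1 (i j)).filter (fun a => Even ((((Icc 1 m).image i) ∩ Icc a (i j)).card) ∧
        (((Icc 1 m).image i) ∩ Icc a (i j)).Nonempty)).card
      = ∑ k ∈ Icc 1 (j / 2), (i (j - 2 * k + 1) - i (j - 2 * k)) := by
  have hijl : i j ≤ ℓ := ij_le htop hmono hjm
  have hb2 : i j < i (j + 1) := hmono j hjm
  have key := card_blocks (P := fun a => Even ((((Icc 1 m).image i) ∩ Icc a (i j)).card) ∧
      (((Icc 1 m).image i) ∩ Icc a (i j)).Nonempty) 1 (i j) (j / 2)
      (fun k => i (j - 2 * k) + 1) (fun k => i (j - 2 * k + 1) + 1) ?_ ?_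
  · rw [key]
    exact Finset.sum_congr rfl fun k _ => by omega
  · intro k k' hk1 hkk hk'
    refine Or.inr ?_
    have := imono hmono (show j - 2 * k' + 1 ≤ j - 2 * k by omega) (by omega)
    omega
  · intro x
    constructor
    · rintro ⟨h1, h2, h3⟩
      obtain ⟨p, hp1, hpm, hpa, hpb⟩ := locate_a h0 htop hmono h1 (by omega) (by omega)
      have hcond := (cond_iff hmono hp1 hpm hjm hpa hpb le_rfl hb2).mp h3
      obtain ⟨c, hc⟩ := hcond.2
      have hpj : p ≤ j := hcond.1
      refine ⟨(j + 1 - p) / 2, by omega, by omega, ?_, ?_⟩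
      · have h : j - 2 * ((j + 1 - p) / 2) = p - 1 := by omega
        simp only [h]
        omega
      · have h : j - 2 * ((j + 1 - p) / 2) + 1 = p := by omega
        simp only [h]
        omega
    · rintro ⟨k, hk1, hk2, hx1, hx2⟩
      have hpa : i (j - 2 * k + 1 - 1) < x := by
        rw [show j - 2 * k + 1 - 1 = j - 2 * k by omega]; omega
      have heven : Even (j + 1 - (j - 2 * k + 1)) := by
        rw [show j + 1 - (j - 2 * k + 1) = k + k by omega]
        exact ⟨k, rfl⟩
      have hcond := (cond_iff hmono (p := j - 2 * k + 1) (by omega) (by omega) hjm hpa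
        (by omega) le_rfl hb2).mpr ⟨by omega, heven⟩
      have hxj : x ≤ i j := by
        have := imono hmono (show j - 2 * k + 1 ≤ j by omega) (by omega)
        omega
      exact ⟨by omega, hxj, hcond⟩

lemma cardT1 (h0 : i 0 = 0) (htop : i (m + 1) = ℓ + 1)
    (hmono : ∀ k ≤ m, i k < i (k + 1)) {j : ℕ} (hj : 1 ≤ j) (hjm : j ≤ m) :
    ((Icc 1 (i j - 1)).filter (fun a =>
        Even ((((Icc 1 m).image i) ∩ Icc a (i j - 1)).card) ∧
        (((Icc 1 m).image i) ∩ Icc a (i j - 1)).Nonempty)).card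
      = ∑ k ∈ Icc 1 ((j + 1) / 2 - 1), (i (j - 2 * k) - i (j - 2 * k - 1)) := by
  have hijl : i j ≤ ℓ := ij_le htop hmono hjm
  have hja : i (j - 1) < i j := by
    have h := hmono (j - 1) (by omega)
    rwa [show j - 1 + 1 = j by omega] at h
  have hi1 : 1 ≤ i j := by omega
  have hb1 : i (j - 1) ≤ i j - 1 := by omega
  have hb2 : i j - 1 < i (j - 1 + 1) := by
    rw [show j - 1 + 1 = j by omega]; omega
  have key := card_blocks (P := fun a =>
      Even ((((Icc 1 m).image i) ∩ Icc a (i j - 1)).card) ∧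
      (((Icc 1 m).image i) ∩ Icc a (i j - 1)).Nonempty) 1 (i j - 1) ((j + 1) / 2 - 1)
      (fun k => i (j - 2 * k - 1) + 1) (fun k => i (j - 2 * k) + 1) ?_ ?_
  · rw [key]
    exact Finset.sum_congr rfl fun k _ => by omega
  · intro k k' hk1 hkk hk'
    refine Or.inr ?_
    have := imono hmono (show j - 2 * k' ≤ j - 2 * k - 1 by omega) (by omega)
    omega
  · intro x
    constructor
    · rintro ⟨h1, h2, h3⟩
      obtain ⟨p, hp1, hpm, hpa, hpb⟩ := locate_a h0 htop hmono h1 (by omega) (by omega)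
      have hcond := (cond_iff hmono hp1 hpm (by omega : j - 1 ≤ m) hpa hpb hb1 hb2).mp h3
      obtain ⟨c, hc⟩ := hcond.2
      have hpj : p ≤ j - 1 := hcond.1
      rw [show j - 1 + 1 - p = j - p by omega] at hc
      refine ⟨(j - p) / 2, by omega, by omega, ?_, ?_⟩
      · have h : j - 2 * ((j - p) / 2) - 1 = p - 1 := by omega
        simp only [h]
        omega
      · have h : j - 2 * ((j - p) / 2) = p := by omega
        simp only [h]
        omega
    · rintro ⟨k, hk1, hk2, hx1, hx2⟩
      have hpa' : i (j - 2 * k - 1 + 1 - 1) < x := by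
        rw [show j - 2 * k - 1 + 1 - 1 = j - 2 * k - 1 by omega]; omega
      have hpb : x ≤ i (j - 2 * k - 1 + 1) := by
        rw [show j - 2 * k - 1 + 1 = j - 2 * k by omega]; omega
      have heven : Even (j - 1 + 1 - (j - 2 * k - 1 + 1)) := by
        rw [show j - 1 + 1 - (j - 2 * k - 1 + 1) = k + k by omega]
        exact ⟨k, rfl⟩
      have hcond := (cond_iff hmono (p := j - 2 * k - 1 + 1) (by omega) (by omega)
        (by omega : j - 1 ≤ m) hpa' hpb hb1 hb2).mpr ⟨by omega, heven⟩
      have hxj : x ≤ i j - 1 := by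
        have h1 := imono hmono (show j - 2 * k ≤ j - 1 by omega) (by omega)
        omega
      exact ⟨by omega, hxj, hcond⟩


lemma key_card (u v : Finset (ℕ × ℕ)) :
    (u.card : ℤ) - v.card = ((u \ v).card : ℤ) - ((v \ u).card : ℤ) := by
  have h1 := Finset.card_inter_add_card_sdiff u v
  have h2 := Finset.card_inter_add_card_sdiff v u
  rw [Finset.inter_comm] at h2
  omega

lemma step_down (ℓ : ℕ) (S : Finset ℕ) {n : ℕ} (hn1 : 1 ≤ n) (hnl : n ≤ ℓ) :
    deltaA ℓ S n - deltaA ℓ S (n - 1)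
      = (((Icc n ℓ).filter (fun b => Even ((S ∩ Icc n b).card) ∧
            (S ∩ Icc n b).Nonempty)).card : ℤ)
        - (((Icc 1 (n - 1)).filter (fun a => Even ((S ∩ Icc a (n - 1)).card) ∧
            (S ∩ Icc a (n - 1)).Nonempty)).card : ℤ) := by
  unfold deltaA
  rw [key_card]
  have e1 : ((Icc 1 ℓ ×ˢ Icc 1 ℓ).filter
        (fun p => p.1 ≤ p.2 ∧ p.1 ≤ n ∧ n ≤ p.2 ∧
          Even ((S ∩ Icc p.1 p.2).card) ∧ (S ∩ Icc p.1 p.2).Nonempty))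
      \ ((Icc 1 ℓ ×ˢ Icc 1 ℓ).filter
        (fun p => p.1 ≤ p.2 ∧ p.1 ≤ n - 1 ∧ n - 1 ≤ p.2 ∧
          Even ((S ∩ Icc p.1 p.2).card) ∧ (S ∩ Icc p.1 p.2).Nonempty))
      = ((Icc n ℓ).filter (fun b => Even ((S ∩ Icc n b).card) ∧
          (S ∩ Icc n b).Nonempty)).image (fun b => (n, b)) := by
    ext q
    obtain ⟨a, b⟩ := q
    rw [mem_sdiff, mem_image]
    constructor
    · rintro ⟨hq1, hq2⟩
      rw [mem_filter] at hq1
      obtain ⟨hprod, hab, han, hnb, hcond⟩ := hq1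
      have hprod' := hprod
      rw [mem_product, mem_Icc, mem_Icc] at hprod'
      have ha : a = n := by
        by_contra hcon
        exact hq2 (mem_filter.mpr ⟨hprod, hab, by omega, by omega, hcond⟩)
      subst ha
      exact ⟨b, mem_filter.mpr ⟨mem_Icc.mpr ⟨hnb, hprod'.2.2⟩, hcond⟩, rfl⟩
    · rintro ⟨b', hb', heq⟩
      rw [mem_filter, mem_Icc] at hb'
      obtain ⟨⟨hnb, hbl⟩, hcond⟩ := hb'
      have ha : n = a := (Prod.ext_iff.mp heq).1
      have hb : b' = b := (Prod.ext_iff.mp heq).2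
      subst ha; subst hb
      constructor
      · exact mem_filter.mpr ⟨mem_product.mpr ⟨mem_Icc.mpr ⟨hn1, hnl⟩,
          mem_Icc.mpr ⟨by omega, hbl⟩⟩, hnb, le_rfl, hnb, hcond⟩
      · intro hmem
        rw [mem_filter] at hmem
        omega
  have e2 : ((Icc 1 ℓ ×ˢ Icc 1 ℓ).filter
        (fun p => p.1 ≤ p.2 ∧ p.1 ≤ n - 1 ∧ n - 1 ≤ p.2 ∧
          Even ((S ∩ Icc p.1 p.2).card) ∧ (S ∩ Icc p.1 p.2).Nonempty))
      \ ((Icc 1 ℓ ×ˢ Icc 1 ℓ).filter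
        (fun p => p.1 ≤ p.2 ∧ p.1 ≤ n ∧ n ≤ p.2 ∧
          Even ((S ∩ Icc p.1 p.2).card) ∧ (S ∩ Icc p.1 p.2).Nonempty))
      = ((Icc 1 (n - 1)).filter (fun a => Even ((S ∩ Icc a (n - 1)).card) ∧
          (S ∩ Icc a (n - 1)).Nonempty)).image (fun a => (a, n - 1)) := by
    ext q
    obtain ⟨a, b⟩ := q
    rw [mem_sdiff, mem_image]
    constructor
    · rintro ⟨hq1, hq2⟩
      rw [mem_filter] at hq1
      obtain ⟨hprod, hab, han, hnb, hcond⟩ := hq1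
      have hprod' := hprod
      rw [mem_product, mem_Icc, mem_Icc] at hprod'
      have hb : b = n - 1 := by
        by_contra hcon
        exact hq2 (mem_filter.mpr ⟨hprod, hab, by omega, by omega, hcond⟩)
      subst hb
      exact ⟨a, mem_filter.mpr ⟨mem_Icc.mpr ⟨hprod'.1.1, han⟩, hcond⟩, rfl⟩
    · rintro ⟨a', ha', heq⟩
      rw [mem_filter, mem_Icc] at ha'
      obtain ⟨⟨h1a, han⟩, hcond⟩ := ha'
      have ha : a' = a := (Prod.ext_iff.mp heq).1
      have hb : n - 1 = b := (Prod.ext_iff.mp heq).2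
      subst ha; subst hb
      constructor
      · exact mem_filter.mpr ⟨mem_product.mpr ⟨mem_Icc.mpr ⟨h1a, by omega⟩,
          mem_Icc.mpr ⟨by omega, by omega⟩⟩, han, han, le_rfl, hcond⟩
      · intro hmem
        rw [mem_filter] at hmem
        omega
  rw [e1, e2, Finset.card_image_of_injective _ (fun x y h => (Prod.ext_iff.mp h).2),
    Finset.card_image_of_injective _ (fun x y h => (Prod.ext_iff.mp h).1)]

lemma step_up (ℓ : ℕ) (S : Finset ℕ) {n : ℕ} (hn1 : 1 ≤ n) (hnl : n ≤ ℓ) :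
    deltaA ℓ S n - deltaA ℓ S (n + 1)
      = (((Icc 1 n).filter (fun a => Even ((S ∩ Icc a n).card) ∧
            (S ∩ Icc a n).Nonempty)).card : ℤ)
        - (((Icc (n + 1) ℓ).filter (fun b => Even ((S ∩ Icc (n + 1) b).card) ∧
            (S ∩ Icc (n + 1) b).Nonempty)).card : ℤ) := by
  unfold deltaA
  rw [key_card]
  have e1 : ((Icc 1 ℓ ×ˢ Icc 1 ℓ).filter
        (fun p => p.1 ≤ p.2 ∧ p.1 ≤ n ∧ n ≤ p.2 ∧
          Even ((S ∩ Icc p.1 p.2).card) ∧ (S ∩ Icc p.1 p.2).Nonempty))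
      \ ((Icc 1 ℓ ×ˢ Icc 1 ℓ).filter
        (fun p => p.1 ≤ p.2 ∧ p.1 ≤ n + 1 ∧ n + 1 ≤ p.2 ∧
          Even ((S ∩ Icc p.1 p.2).card) ∧ (S ∩ Icc p.1 p.2).Nonempty))
      = ((Icc 1 n).filter (fun a => Even ((S ∩ Icc a n).card) ∧
          (S ∩ Icc a n).Nonempty)).image (fun a => (a, n)) := by
    ext q
    obtain ⟨a, b⟩ := q
    rw [mem_sdiff, mem_image]
    constructor
    · rintro ⟨hq1, hq2⟩
      rw [mem_filter] at hq1
      obtain ⟨hprod, hab, han, hnb, hcond⟩ := hq1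
      have hprod' := hprod
      rw [mem_product, mem_Icc, mem_Icc] at hprod'
      have hb : b = n := by
        by_contra hcon
        exact hq2 (mem_filter.mpr ⟨hprod, hab, by omega, by omega, hcond⟩)
      subst hb
      exact ⟨a, mem_filter.mpr ⟨mem_Icc.mpr ⟨hprod'.1.1, han⟩, hcond⟩, rfl⟩
    · rintro ⟨a', ha', heq⟩
      rw [mem_filter, mem_Icc] at ha'
      obtain ⟨⟨h1a, han⟩, hcond⟩ := ha'
      have ha : a' = a := (Prod.ext_iff.mp heq).1
      have hb : n = b := (Prod.ext_iff.mp heq).2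
      subst ha; subst hb
      constructor
      · exact mem_filter.mpr ⟨mem_product.mpr ⟨mem_Icc.mpr ⟨h1a, by omega⟩,
          mem_Icc.mpr ⟨hn1, hnl⟩⟩, han, han, le_rfl, hcond⟩
      · intro hmem
        rw [mem_filter] at hmem
        omega
  have e2 : ((Icc 1 ℓ ×ˢ Icc 1 ℓ).filter
        (fun p => p.1 ≤ p.2 ∧ p.1 ≤ n + 1 ∧ n + 1 ≤ p.2 ∧
          Even ((S ∩ Icc p.1 p.2).card) ∧ (S ∩ Icc p.1 p.2).Nonempty))
      \ ((Icc 1 ℓ ×ˢ Icc 1 ℓ).filter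
        (fun p => p.1 ≤ p.2 ∧ p.1 ≤ n ∧ n ≤ p.2 ∧
          Even ((S ∩ Icc p.1 p.2).card) ∧ (S ∩ Icc p.1 p.2).Nonempty))
      = ((Icc (n + 1) ℓ).filter (fun b => Even ((S ∩ Icc (n + 1) b).card) ∧
          (S ∩ Icc (n + 1) b).Nonempty)).image (fun b => (n + 1, b)) := by
    ext q
    obtain ⟨a, b⟩ := q
    rw [mem_sdiff, mem_image]
    constructor
    · rintro ⟨hq1, hq2⟩
      rw [mem_filter] at hq1
      obtain ⟨hprod, hab, han, hnb, hcond⟩ := hq1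
      have hprod' := hprod
      rw [mem_product, mem_Icc, mem_Icc] at hprod'
      have ha : a = n + 1 := by
        by_contra hcon
        exact hq2 (mem_filter.mpr ⟨hprod, hab, by omega, by omega, hcond⟩)
      subst ha
      exact ⟨b, mem_filter.mpr ⟨mem_Icc.mpr ⟨hnb, hprod'.2.2⟩, hcond⟩, rfl⟩
    · rintro ⟨b', hb', heq⟩
      rw [mem_filter, mem_Icc] at hb'
      obtain ⟨⟨hnb, hbl⟩, hcond⟩ := hb'
      have ha : n + 1 = a := (Prod.ext_iff.mp heq).1
      have hb : b' = b := (Prod.ext_iff.mp heq).2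
      subst ha; subst hb
      constructor
      · exact mem_filter.mpr ⟨mem_product.mpr ⟨mem_Icc.mpr ⟨by omega, by omega⟩,
          mem_Icc.mpr ⟨by omega, hbl⟩⟩, hnb, le_rfl, hnb, hcond⟩
      · intro hmem
        rw [mem_filter] at hmem
        omega
  rw [e1, e2, Finset.card_image_of_injective _ (fun x y h => (Prod.ext_iff.mp h).1),
    Finset.card_image_of_injective _ (fun x y h => (Prod.ext_iff.mp h).2)]

end Aux

/-- `−δᶜ_{i_j−1} + 2δᶜ_{i_j} − δᶜ_{i_j+1} = S₁(j) + S₂(j) − T₁(j) − T₂(j)`. -/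
theorem stmt7 (ℓ m : ℕ) (hℓ : 1 ≤ ℓ) (hm : 1 ≤ m)
    (i : ℕ → ℕ) (h0 : i 0 = 0) (htop : i (m + 1) = ℓ + 1)
    (hmono : ∀ k ≤ m, i k < i (k + 1))
    (j : ℕ) (hj : 1 ≤ j) (hjm : j ≤ m) :
    -(deltaA ℓ ((Finset.Icc 1 m).image i) (i j - 1))
      + 2 * deltaA ℓ ((Finset.Icc 1 m).image i) (i j)
      - deltaA ℓ ((Finset.Icc 1 m).image i) (i j + 1)
      = (∑ k ∈ Finset.Icc 1 ((m - j + 1) / 2),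
          ((i (j + 2 * k) : ℤ) - (i (j + 2 * k - 1) : ℤ)))
        + (∑ k ∈ Finset.Icc 1 (j / 2),
          ((i (j - 2 * k + 1) : ℤ) - (i (j - 2 * k) : ℤ)))
        - (∑ k ∈ Finset.Icc 1 ((j + 1) / 2 - 1),
          ((i (j - 2 * k) : ℤ) - (i (j - 2 * k - 1) : ℤ)))
        - (∑ k ∈ Finset.Icc 1 ((m - j) / 2),
          ((i (j + 2 * k + 1) : ℤ) - (i (j + 2 * k) : ℤ))) := by
  have hij1 : 1 ≤ i j := by
    have h1 := imono hmono (show 1 ≤ j from hj) (by omega)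
    have h2 : 0 < i 1 := by simpa [h0] using hmono 0 (by omega)
    omega
  have hijl : i j ≤ ℓ := ij_le htop hmono hjm
  have e1 := step_down ℓ ((Finset.Icc 1 m).image i) hij1 hijl
  have e2 := step_up ℓ ((Finset.Icc 1 m).image i) hij1 hijl
  rw [cardA h0 htop hmono hj hjm, cardT1 h0 htop hmono hj hjm] at e1
  rw [cardS2 h0 htop hmono hj hjm, cardT2 h0 htop hmono hj hjm] at e2
  have c1 : ((∑ k ∈ Icc 1 ((m - j + 1) / 2), (i (j + 2 * k) - i (j + 2 * k - 1)) : ℕ) : ℤ)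
      = ∑ k ∈ Finset.Icc 1 ((m - j + 1) / 2),
          ((i (j + 2 * k) : ℤ) - (i (j + 2 * k - 1) : ℤ)) := by
    rw [Nat.cast_sum]
    refine Finset.sum_congr rfl fun k hk => ?_
    rw [mem_Icc] at hk
    exact Nat.cast_sub (imono hmono (by omega) (by omega))
  have c2 : ((∑ k ∈ Icc 1 (j / 2), (i (j - 2 * k + 1) - i (j - 2 * k)) : ℕ) : ℤ)
      = ∑ k ∈ Finset.Icc 1 (j / 2),
          ((i (j - 2 * k + 1) : ℤ) - (i (j - 2 * k) : ℤ)) := by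
    rw [Nat.cast_sum]
    refine Finset.sum_congr rfl fun k hk => ?_
    rw [mem_Icc] at hk
    exact Nat.cast_sub (imono hmono (by omega) (by omega))
  have c3 : ((∑ k ∈ Icc 1 ((j + 1) / 2 - 1), (i (j - 2 * k) - i (j - 2 * k - 1)) : ℕ) : ℤ)
      = ∑ k ∈ Finset.Icc 1 ((j + 1) / 2 - 1),
          ((i (j - 2 * k) : ℤ) - (i (j - 2 * k - 1) : ℤ)) := by
    rw [Nat.cast_sum]
    refine Finset.sum_congr rfl fun k hk => ?_
    rw [mem_Icc] at hk
    exact Nat.cast_sub (imono hmono (by omega) (by omega))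
  have c4 : ((∑ k ∈ Icc 1 ((m - j) / 2), (i (j + 2 * k + 1) - i (j + 2 * k)) : ℕ) : ℤ)
      = ∑ k ∈ Finset.Icc 1 ((m - j) / 2),
          ((i (j + 2 * k + 1) : ℤ) - (i (j + 2 * k) : ℤ)) := by
    rw [Nat.cast_sum]
    refine Finset.sum_congr rfl fun k hk => ?_
    rw [mem_Icc] at hk
    exact Nat.cast_sub (imono hmono (by omega) (by omega))
  rw [c1, c3] at e1
  rw [c2, c4] at e2
  linarith [e1, e2]
end Aux
end

section
/- Let ℓ ≥ 1 and let S = {i₁ < ⋯ < i_m} ⊆ {1,…,ℓ} be nonempty, with conventions i₀ = 0 and i_{m+1} = ℓ+1. Consider the root system of type A_ℓ with simple roots γ₁,…,γ_ℓ, Cartan matrix A (A_{ii} = 2, A_{i,i±1} = −1, else 0), positive roots the interval sums Σ_{i=a}^{b} γ_i (1 ≤ a ≤ b ≤ ℓ), and call a positive root compact iff |S ∩ [a,b]| is even. Let R be the coefficient vector (in the basis γ₁,…,γ_ℓ) of the sum of all compact positive roots, and P the coefficient vector of the sum of all positive roots Σ_{i=a}^{b} γ_i with S ∩ [a,b] =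 ∅. Define ξ_i = −4 + 4(AR)_i − 2(AP)_i. Then for every 1 ≤ j ≤ m: ξ_{i_j} = 2( i_{j−1} − i_{j+1} + 2(S₊(j) − S₋(j)) ), where S₊(j) = Σ_{k=j+1}^{m} 2(−1)^{k−j} i_k + i_{j+1} + (−1)^{m−j+1}(ℓ+1) and S₋(j) = Σ_{k=1}^{j−1} 2(−1)^{k−j} i_k + i_{j−1}. -/
open Finset


/-- `n`-th coefficient of the sum of all compact positive roots of type `A_ℓ`
(intervals `[a,b]` with `|S ∩ [a,b]|` even). -/
def compactCoeffA (ℓ : ℕ) (S : Finset ℕ) (n : ℕ) : ℤ :=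
  (((Finset.Icc 1 ℓ ×ˢ Finset.Icc 1 ℓ).filter
      (fun p => p.1 ≤ p.2 ∧ p.1 ≤ n ∧ n ≤ p.2 ∧
        Even ((S ∩ Finset.Icc p.1 p.2).card))).card : ℤ)

/-- `n`-th coefficient of the sum of all positive roots of type `A_ℓ` lying in the
span of the simple roots not indexed by `S` (intervals `[a,b]` with `S ∩ [a,b] = ∅`). -/
def spanCoeffA (ℓ : ℕ) (S : Finset ℕ) (n : ℕ) : ℤ :=
  (((Finset.Icc 1 ℓ ×ˢ Finset.Icc 1 ℓ).filter
      (fun p => p.1 ≤ p.2 ∧ p.1 ≤ n ∧ n ≤ p.2 ∧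
        S ∩ Finset.Icc p.1 p.2 = ∅)).card : ℤ)

/-- Application of the type `A_ℓ` Cartan matrix to a coefficient vector. -/
def cartanA (x : ℕ → ℤ) (t : ℕ) : ℤ := -x (t - 1) + 2 * x t - x (t + 1)

/-- cartanA of an interval-count vector counts endpoints. -/
lemma cartan_endpoint (T : Finset (ℕ × ℕ)) (hT : ∀ p ∈ T, 1 ≤ p.1 ∧ p.1 ≤ p.2)
    (t : ℕ) (ht : 1 ≤ t) :
    cartanA (fun n => ((T.filter (fun p => p.1 ≤ n ∧ n ≤ p.2)).card : ℤ)) t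
      = ((T.filter (fun p => p.1 = t)).card : ℤ) + (T.filter (fun p => p.2 = t)).card
        - (T.filter (fun p => p.1 = t + 1)).card - (T.filter (fun p => p.2 = t - 1)).card := by
  have key : ∀ (P Q R : ℕ × ℕ → Prop) [DecidablePred P] [DecidablePred Q] [DecidablePred R],
      (∀ p ∈ T, (P p ↔ Q p ∨ R p)) → (∀ p ∈ T, ¬ (Q p ∧ R p)) →
      (T.filter P).card = (T.filter Q).card + (T.filter R).card := by
    intro P Q R _ _ _ hiff hdisj
    have hd : Disjoint (T.filter Q) (T.filter R) := by
      rw [disjoint_left]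
      intro p hp hp'
      simp only [mem_filter] at hp hp'
      exact hdisj p hp.1 ⟨hp.2, hp'.2⟩
    rw [filter_congr hiff, filter_or, card_union_of_disjoint hd]
  have h1 : (T.filter (fun p => p.1 ≤ t ∧ t ≤ p.2)).card
      = (T.filter (fun p => p.1 ≤ t - 1 ∧ t ≤ p.2)).card + (T.filter (fun p => p.1 = t)).card := by
    apply key
    · intro p hp; have := hT p hp; omega
    · intro p hp; omega
  have h2 : (T.filter (fun p => p.1 ≤ t - 1 ∧ t - 1 ≤ p.2)).card
      = (T.filter (fun p => p.1 ≤ t - 1 ∧ t ≤ p.2)).card + (T.filter (fun p => p.2 = t - 1)).card := by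
    apply key
    · intro p hp; have := hT p hp; omega
    · intro p hp; omega
  have h3 : (T.filter (fun p => p.1 ≤ t ∧ t ≤ p.2)).card
      = (T.filter (fun p => p.1 ≤ t ∧ t + 1 ≤ p.2)).card + (T.filter (fun p => p.2 = t)).card := by
    apply key
    · intro p hp; have := hT p hp; omega
    · intro p hp; omega
  have h4 : (T.filter (fun p => p.1 ≤ t + 1 ∧ t + 1 ≤ p.2)).card
      = (T.filter (fun p => p.1 ≤ t ∧ t + 1 ≤ p.2)).card + (T.filter (fun p => p.1 = t + 1)).card := by
    apply key
    · intro p hp; have := hT p hp; omega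
    · intro p hp; omega
  simp only [cartanA]
  omega

lemma card_slice_fst (ℓ t : ℕ) (ht1 : 1 ≤ t) (C : ℕ → ℕ → Prop)
    [∀ a b, Decidable (C a b)] :
    (((Icc 1 ℓ ×ˢ Icc 1 ℓ).filter (fun p => p.1 ≤ p.2 ∧ C p.1 p.2)).filter
        (fun p => p.1 = t)).card
      = ((Icc t ℓ).filter (fun b => C t b)).card := by
  refine card_bij' (fun p _ => p.2) (fun b _ => (t, b)) ?_ ?_ ?_ ?_
  · intro p hp
    simp only [mem_filter, mem_product, mem_Icc] at hp ⊢
    obtain ⟨⟨⟨ha, hb⟩, hle, hC⟩, heq⟩ := hp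
    subst heq
    exact ⟨⟨hle, hb.2⟩, hC⟩
  · intro b hb
    obtain ⟨hb1, hb2⟩ := mem_filter.mp hb
    obtain ⟨hbt, hbl⟩ := mem_Icc.mp hb1
    exact mem_filter.mpr ⟨mem_filter.mpr ⟨mem_product.mpr
      ⟨mem_Icc.mpr ⟨ht1, le_trans hbt hbl⟩, mem_Icc.mpr ⟨le_trans ht1 hbt, hbl⟩⟩, hbt, hb2⟩, rfl⟩
  · intro p hp
    obtain ⟨p1, p2⟩ := p
    simp only [mem_filter] at hp
    simp [hp.2]
  · intro b _
    rfl

lemma card_slice_snd (ℓ t : ℕ) (htℓ : t ≤ ℓ) (C : ℕ → ℕ → Prop)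
    [∀ a b, Decidable (C a b)] :
    (((Icc 1 ℓ ×ˢ Icc 1 ℓ).filter (fun p => p.1 ≤ p.2 ∧ C p.1 p.2)).filter
        (fun p => p.2 = t)).card
      = ((Icc 1 t).filter (fun a => C a t)).card := by
  refine card_bij' (fun p _ => p.1) (fun a _ => (a, t)) ?_ ?_ ?_ ?_
  · intro p hp
    simp only [mem_filter, mem_product, mem_Icc] at hp ⊢
    obtain ⟨⟨⟨ha, hb⟩, hle, hC⟩, heq⟩ := hp
    subst heq
    exact ⟨⟨ha.1, hle⟩, hC⟩
  · intro a ha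
    obtain ⟨ha1, ha2⟩ := mem_filter.mp ha
    obtain ⟨hat, hal⟩ := mem_Icc.mp ha1
    exact mem_filter.mpr ⟨mem_filter.mpr ⟨mem_product.mpr
      ⟨mem_Icc.mpr ⟨hat, le_trans hal htℓ⟩, mem_Icc.mpr ⟨le_trans hat hal, htℓ⟩⟩, hal, ha2⟩, rfl⟩
  · intro p hp
    obtain ⟨p1, p2⟩ := p
    simp only [mem_filter] at hp
    simp [hp.2]
  · intro a _
    rfl

lemma mono_lt (i : ℕ → ℕ) (m : ℕ) (hmono : ∀ k ≤ m, i k < i (k + 1)) :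
    ∀ b ≤ m + 1, ∀ a < b, i a < i b := by
  intro b
  induction b with
  | zero => intro _ a ha; omega
  | succ n ih =>
    intro hb a ha
    rcases Nat.lt_or_ge a n with h | h
    · exact lt_trans (ih (by omega) a h) (hmono n (by omega))
    · have : a = n := by omega
      subst this
      exact hmono a (by omega)

lemma mono_le (i : ℕ → ℕ) (m : ℕ) (hmono : ∀ k ≤ m, i k < i (k + 1)) :
    ∀ b ≤ m + 1, ∀ a ≤ b, i a ≤ i b := by
  intro b hb a ha
  rcases Nat.eq_or_lt_of_le ha with h | h
  · rw [h]
  · exact le_of_lt (mono_lt i m hmono b hb a h)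

lemma cardInter (i : ℕ → ℕ) (m : ℕ) (hmono : ∀ k ≤ m, i k < i (k + 1))
    (q k a b : ℕ) (hq1 : 1 ≤ q) (hqm : q ≤ m + 1) (hkm : k ≤ m)
    (ha1 : i (q - 1) < a) (ha2 : a ≤ i q) (hb1 : i k ≤ b) (hb2 : b < i (k + 1)) :
    (((Icc 1 m).image i) ∩ Icc a b).card = k + 1 - q := by
  have hset : ((Icc 1 m).image i) ∩ Icc a b = (Icc q k).image i := by
    ext x
    simp only [mem_inter, mem_image, mem_Icc]
    constructor
    · rintro ⟨⟨r, ⟨hr1, hrm⟩, rfl⟩, hax, hxb⟩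
      refine ⟨r, ⟨?_, ?_⟩, rfl⟩
      · by_contra hc
        push_neg at hc
        have : i r ≤ i (q - 1) := mono_le i m hmono (q - 1) (by omega) r (by omega)
        omega
      · by_contra hc
        push_neg at hc
        have : i (k + 1) ≤ i r := mono_le i m hmono r (by omega) (k + 1) (by omega)
        omega
    · rintro ⟨r, ⟨hqr, hrk⟩, rfl⟩
      refine ⟨⟨r, ⟨by omega, by omega⟩, rfl⟩, ?_, ?_⟩
      · have : i q ≤ i r := mono_le i m hmono r (by omega) q hqr
        omega
      · have : i r ≤ i k := mono_le i m hmono k (by omega) r hrk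
        omega
  rw [hset, card_image_of_injOn, Nat.card_Icc]
  intro x hx y hy hxy
  simp only [mem_coe, mem_Icc] at hx hy
  by_contra hne
  rcases Nat.lt_or_ge x y with h | h
  · have := mono_lt i m hmono y (by omega) x h; omega
  · have := mono_lt i m hmono x (by omega) y (by omega); omega

lemma sumIco (i : ℕ → ℕ) (m : ℕ) (hmono : ∀ k ≤ m, i k < i (k + 1))
    (g : ℕ → Prop) [DecidablePred g] (Q : ℕ → Prop) [DecidablePred Q] (u : ℕ) :
    ∀ r, u ≤ r → r ≤ m + 1 →
    (∀ k, u ≤ k → k < r → ∀ x, i k ≤ x → x < i (k + 1) → (g x ↔ Q k)) →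
    ((Finset.Ico (i u) (i r)).filter g).card
      = ∑ k ∈ Finset.Ico u r, if Q k then i (k + 1) - i k else 0 := by
  intro r
  induction r with
  | zero =>
    intro hu _ _
    have : u = 0 := by omega
    subst this
    simp
  | succ n ih =>
    intro hu hn hcond
    rcases Nat.eq_or_lt_of_le hu with h | h
    · rw [← h]; simp
    · have hun : u ≤ n := by omega
      have hnm : n ≤ m := by omega
      have hIco : Finset.Ico (i u) (i (n + 1)) = Finset.Ico (i u) (i n) ∪ Finset.Ico (i n) (i (n + 1)) := by
        rw [Finset.Ico_union_Ico_eq_Ico]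
        · exact mono_le i m hmono n (by omega) u hun
        · exact le_of_lt (hmono n hnm)
      rw [hIco, filter_union, card_union_of_disjoint, ih hun (by omega)
          (fun k hk1 hk2 => hcond k hk1 (by omega)),
          Finset.sum_Ico_succ_top hun]
      · congr 1
        by_cases hQ : Q n
        · rw [if_pos hQ, filter_true_of_mem, Nat.card_Ico]
          intro x hx
          rw [mem_Ico] at hx
          exact (hcond n hun (by omega) x hx.1 hx.2).mpr hQ
        · rw [if_neg hQ, filter_false_of_mem, card_empty]
          intro x hx
          rw [mem_Ico] at hx
          rw [hcond n hun (by omega) x hx.1 hx.2]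
          exact hQ
      · exact disjoint_filter_filter (Finset.Ico_disjoint_Ico_consecutive _ _ _)

lemma cast_ite_sum (i : ℕ → ℕ) (m : ℕ) (hmono : ∀ k ≤ m, i k < i (k + 1)) (u r : ℕ)
    (hr : r ≤ m + 1) (Q : ℕ → Prop) [DecidablePred Q] :
    ((∑ k ∈ Finset.Ico u r, if Q k then i (k + 1) - i k else 0 : ℕ) : ℤ)
      = ∑ k ∈ Finset.Ico u r, if Q k then ((i (k + 1) : ℤ) - (i k : ℤ)) else 0 := by
  rw [Nat.cast_sum]
  apply Finset.sum_congr rfl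
  intro k hk
  rw [mem_Ico] at hk
  have h2 := hmono k (by omega)
  split_ifs
  · exact Nat.cast_sub (le_of_lt h2)
  · simp

lemma neg_one_pow_sub (j q : ℕ) (h : q ≤ j) : (-1 : ℤ) ^ (j - q) = (-1) ^ j * (-1) ^ q := by
  have h1 : (-1 : ℤ) ^ (j - q) * (-1) ^ q = (-1) ^ j := by
    rw [← pow_add]
    congr 1
    omega
  have h2 : (-1 : ℤ) ^ q * (-1) ^ q = 1 := by
    rw [← pow_add]
    exact Even.neg_one_pow ⟨q, rfl⟩
  calc (-1 : ℤ) ^ (j - q) = (-1) ^ (j - q) * ((-1) ^ q * (-1) ^ q) := by rw [h2, mul_one]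
    _ = ((-1) ^ (j - q) * (-1) ^ q) * (-1) ^ q := by ring
    _ = (-1) ^ j * (-1) ^ q := by rw [h1]

lemma sumE1 (i : ℕ → ℕ) (j : ℕ) : ∀ m, j ≤ m →
    ∑ k ∈ Finset.Icc j m, (-1 : ℤ) ^ (k - j + 1) * ((i (k + 1) : ℤ) - (i k : ℤ))
      = (i j : ℤ) + (∑ k ∈ Finset.Icc (j + 1) m, 2 * (-1 : ℤ) ^ (k - j) * (i k : ℤ))
        + (-1 : ℤ) ^ (m - j + 1) * (i (m + 1) : ℤ) := by
  refine Nat.le_induction ?_ ?_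
  · rw [Finset.Icc_self, Finset.sum_singleton, Finset.Icc_eq_empty (by omega),
      Finset.sum_empty, Nat.sub_self]
    ring
  · intro n hn ih
    rw [Finset.sum_Icc_succ_top (by omega : j ≤ n + 1), ih,
      Finset.sum_Icc_succ_top (by omega : j + 1 ≤ n + 1)]
    have h1 : n + 1 - j = (n - j) + 1 := by omega
    rw [h1]
    ring

lemma sumE2aux (i : ℕ → ℕ) (n : ℕ) :
    ∑ q ∈ Finset.range (n + 1), (-1 : ℤ) ^ q * ((i (q + 1) : ℤ) - (i q : ℤ))
      = (-1 : ℤ) ^ n * (i (n + 1) : ℤ)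
        + (∑ k ∈ Finset.Icc 1 n, 2 * (-1 : ℤ) ^ (k - 1) * (i k : ℤ)) - (i 0 : ℤ) := by
  induction n with
  | zero => simp
  | succ n ih =>
    rw [Finset.sum_range_succ, ih, Finset.sum_Icc_succ_top (by omega : 1 ≤ n + 1),
      Nat.add_sub_cancel]
    ring

lemma sumE2 (i : ℕ → ℕ) (h0 : i 0 = 0) (j : ℕ) (hj : 1 ≤ j) :
    ∑ q ∈ Finset.Ico 0 j, (-1 : ℤ) ^ (j - q) * ((i (q + 1) : ℤ) - (i q : ℤ))
      = -(i j : ℤ) - ∑ k ∈ Finset.Icc 1 (j - 1), 2 * (-1 : ℤ) ^ (j - k) * (i k : ℤ) := by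
  have step1 : ∀ q ∈ Finset.Ico 0 j, (-1 : ℤ) ^ (j - q) * ((i (q + 1) : ℤ) - (i q : ℤ))
      = (-1 : ℤ) ^ j * ((-1 : ℤ) ^ q * ((i (q + 1) : ℤ) - (i q : ℤ))) := by
    intro q hq
    rw [mem_Ico] at hq
    rw [neg_one_pow_sub j q (by omega)]
    ring
  rw [Finset.sum_congr rfl step1, ← Finset.mul_sum,
    show Finset.Ico 0 j = Finset.range j from (Finset.range_eq_Ico j).symm]
  obtain ⟨n, rfl⟩ : ∃ n, j = n + 1 := ⟨j - 1, by omega⟩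
  rw [sumE2aux i n, Nat.add_sub_cancel, h0]
  have hpow : (-1 : ℤ) ^ (n + 1) * (-1 : ℤ) ^ n = -1 := by
    rw [← pow_add]
    exact Odd.neg_one_pow ⟨n, by ring⟩
  have hsum : ∀ k ∈ Finset.Icc 1 n, (-1 : ℤ) ^ (n + 1) * (2 * (-1 : ℤ) ^ (k - 1) * (i k : ℤ))
      = -(2 * (-1 : ℤ) ^ (n + 1 - k) * (i k : ℤ)) := by
    intro k hk
    rw [mem_Icc] at hk
    rw [neg_one_pow_sub (n + 1) k (by omega)]
    have hk1 : (-1 : ℤ) ^ k = -(-1 : ℤ) ^ (k - 1) := by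
      conv_lhs => rw [show k = (k - 1) + 1 from by omega]
      rw [pow_succ]
      ring
    rw [hk1]
    ring
  have key : (-1 : ℤ) ^ (n + 1) * ∑ k ∈ Finset.Icc 1 n, 2 * (-1 : ℤ) ^ (k - 1) * (i k : ℤ)
      = -∑ k ∈ Finset.Icc 1 n, 2 * (-1 : ℤ) ^ (n + 1 - k) * (i k : ℤ) := by
    rw [Finset.mul_sum, Finset.sum_congr rfl hsum, Finset.sum_neg_distrib]
  rw [Nat.cast_zero, sub_zero, mul_add, ← mul_assoc, hpow, key]
  ring

/-- Theorem 3.2 of the paper, type `A_ℓ`: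
`ξ_{i_j} = 2(i_{j−1} − i_{j+1} + 2(S₊(j) − S₋(j)))`. -/
theorem stmt8 (ℓ m : ℕ) (hℓ : 1 ≤ ℓ) (hm : 1 ≤ m)
    (i : ℕ → ℕ) (h0 : i 0 = 0) (htop : i (m + 1) = ℓ + 1)
    (hmono : ∀ k ≤ m, i k < i (k + 1))
    (j : ℕ) (hj : 1 ≤ j) (hjm : j ≤ m) :
    -4 + 4 * cartanA (compactCoeffA ℓ ((Finset.Icc 1 m).image i)) (i j)
      - 2 * cartanA (spanCoeffA ℓ ((Finset.Icc 1 m).image i)) (i j)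
      = 2 * ((i (j - 1) : ℤ) - (i (j + 1) : ℤ)
        + 2 * (((∑ k ∈ Finset.Icc (j + 1) m, 2 * (-1 : ℤ) ^ (k - j) * (i k : ℤ))
            + (i (j + 1) : ℤ) + (-1 : ℤ) ^ (m - j + 1) * ((ℓ : ℤ) + 1))
          - ((∑ k ∈ Finset.Icc 1 (j - 1), 2 * (-1 : ℤ) ^ (j - k) * (i k : ℤ))
            + (i (j - 1) : ℤ)))) := by
  classical
  have ht1 : 1 ≤ i j := by
    have := mono_lt i m hmono j (by omega) 0 (by omega)
    omega
  have htl : i j ≤ ℓ := by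
    have := mono_lt i m hmono (m + 1) (le_refl _) j (by omega)
    omega
  have hjj1 : i j < i (j + 1) := hmono j hjm
  have hj1j : i (j - 1) < i j := mono_lt i m hmono j (by omega) (j - 1) (by omega)
  -- rewrite the coefficient functions as counts over a fixed interval set
  have hcomp : compactCoeffA ℓ ((Finset.Icc 1 m).image i)
      = fun n => ((((Finset.Icc 1 ℓ ×ˢ Finset.Icc 1 ℓ).filter
        (fun p => p.1 ≤ p.2 ∧ Even ((((Finset.Icc 1 m).image i) ∩ Finset.Icc p.1 p.2).card))).filter
        (fun p => p.1 ≤ n ∧ n ≤ p.2)).card : ℤ) := by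
    funext n
    unfold compactCoeffA
    rw [Finset.filter_filter]
    exact congrArg (fun s => ((Finset.card s : ℕ) : ℤ))
      (Finset.filter_congr (fun p _ => by tauto))
  have hspan : spanCoeffA ℓ ((Finset.Icc 1 m).image i)
      = fun n => ((((Finset.Icc 1 ℓ ×ˢ Finset.Icc 1 ℓ).filter
        (fun p => p.1 ≤ p.2 ∧ (((Finset.Icc 1 m).image i) ∩ Finset.Icc p.1 p.2 = ∅))).filter
        (fun p => p.1 ≤ n ∧ n ≤ p.2)).card : ℤ) := by
    funext n
    unfold spanCoeffA
    rw [Finset.filter_filter]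
    exact congrArg (fun s => ((Finset.card s : ℕ) : ℤ))
      (Finset.filter_congr (fun p _ => by tauto))
  have hTcompact : ∀ p ∈ (Finset.Icc 1 ℓ ×ˢ Finset.Icc 1 ℓ).filter
      (fun p => p.1 ≤ p.2 ∧ Even ((((Finset.Icc 1 m).image i) ∩ Finset.Icc p.1 p.2).card)),
      1 ≤ p.1 ∧ p.1 ≤ p.2 := by
    intro p hp
    rw [Finset.mem_filter, Finset.mem_product] at hp
    obtain ⟨⟨hp1, hp2⟩, hp3, hp4⟩ := hp
    rw [Finset.mem_Icc] at hp1
    exact ⟨hp1.1, hp3⟩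
  have hTspan : ∀ p ∈ (Finset.Icc 1 ℓ ×ˢ Finset.Icc 1 ℓ).filter
      (fun p => p.1 ≤ p.2 ∧ (((Finset.Icc 1 m).image i) ∩ Finset.Icc p.1 p.2 = ∅)),
      1 ≤ p.1 ∧ p.1 ≤ p.2 := by
    intro p hp
    rw [Finset.mem_filter, Finset.mem_product] at hp
    obtain ⟨⟨hp1, hp2⟩, hp3, hp4⟩ := hp
    rw [Finset.mem_Icc] at hp1
    exact ⟨hp1.1, hp3⟩
  rw [hcomp, hspan, cartan_endpoint _ hTcompact (i j) ht1, cartan_endpoint _ hTspan (i j) ht1]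
  -- reduce the eight slice counts to one-variable counts
  have e1 := card_slice_fst ℓ (i j) ht1
    (fun a b => Even ((((Finset.Icc 1 m).image i) ∩ Finset.Icc a b).card))
  have e2 := card_slice_snd ℓ (i j) htl
    (fun a b => Even ((((Finset.Icc 1 m).image i) ∩ Finset.Icc a b).card))
  have e3 := card_slice_fst ℓ (i j + 1) (by omega)
    (fun a b => Even ((((Finset.Icc 1 m).image i) ∩ Finset.Icc a b).card))
  have e4 := card_slice_snd ℓ (i j - 1) (by omega)
    (fun a b => Even ((((Finset.Icc 1 m).image i) ∩ Finset.Icc a b).card))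
  have e5 := card_slice_fst ℓ (i j) ht1
    (fun a b => (((Finset.Icc 1 m).image i) ∩ Finset.Icc a b = ∅))
  have e6 := card_slice_snd ℓ (i j) htl
    (fun a b => (((Finset.Icc 1 m).image i) ∩ Finset.Icc a b = ∅))
  have e7 := card_slice_fst ℓ (i j + 1) (by omega)
    (fun a b => (((Finset.Icc 1 m).image i) ∩ Finset.Icc a b = ∅))
  have e8 := card_slice_snd ℓ (i j - 1) (by omega)
    (fun a b => (((Finset.Icc 1 m).image i) ∩ Finset.Icc a b = ∅))
  rw [e1, e2, e3, e4, e5, e6, e7, e8]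
  -- interval manipulations
  have hIcoIcc : Finset.Icc (i j) ℓ = Finset.Ico (i j) (i (m + 1)) := by
    rw [htop, Finset.Ico_add_one_right_eq_Icc]
  have hins3 : Finset.Ico (i j) (i (m + 1)) = insert (i j) (Finset.Icc (i j + 1) ℓ) := by
    rw [htop]
    ext x
    simp only [Finset.mem_Ico, Finset.mem_insert, Finset.mem_Icc]
    omega
  have hins4 : Finset.Ico (i 0) (i j) = insert (i j - 1) (Finset.Ico 0 (i j - 1)) := by
    rw [h0]
    ext x
    simp only [Finset.mem_Ico, Finset.mem_insert]
    omega
  have himg : ∀ c : ℕ, Finset.Icc 1 c = (Finset.Ico 0 c).image (· + 1) := by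
    intro c
    ext x
    simp only [Finset.mem_Icc, Finset.mem_image, Finset.mem_Ico]
    constructor
    · rintro ⟨h1, h2⟩
      exact ⟨x - 1, ⟨by omega, by omega⟩, by omega⟩
    · rintro ⟨a, ⟨_, ha⟩, rfl⟩
      omega
  have himgcard : ∀ (c : ℕ) (g : ℕ → Prop) (_ : DecidablePred g),
      ((Finset.Icc 1 c).filter g).card = ((Finset.Ico 0 c).filter (fun x => g (x + 1))).card := by
    intro c g _
    rw [himg c, Finset.filter_image, Finset.card_image_of_injective _ (add_left_injective 1)]
  -- the four compact counts
  have c1 : ((Finset.Icc (i j) ℓ).filter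
        (fun b => Even ((((Finset.Icc 1 m).image i) ∩ Finset.Icc (i j) b).card))).card
      = ∑ k ∈ Finset.Ico j (m + 1), if Even (k + 1 - j) then i (k + 1) - i k else 0 := by
    rw [hIcoIcc]
    apply sumIco i m hmono _ _ j (m + 1) (by omega) (le_refl _)
    intro k hk1 hk2 x hx1 hx2
    rw [cardInter i m hmono j k (i j) x (by omega) (by omega) (by omega)
      (mono_lt i m hmono j (by omega) (j - 1) (by omega)) (le_refl _) hx1 hx2]
  have c2 : ((Finset.Icc 1 (i j)).filter
        (fun a => Even ((((Finset.Icc 1 m).image i) ∩ Finset.Icc a (i j)).card))).card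
      = ∑ q ∈ Finset.Ico 0 j, if Even (j - q) then i (q + 1) - i q else 0 := by
    rw [himgcard (i j) (fun a => Even ((((Finset.Icc 1 m).image i) ∩ Finset.Icc a (i j)).card))
      inferInstance, show Finset.Ico 0 (i j) = Finset.Ico (i 0) (i j) from by rw [h0]]
    apply sumIco i m hmono _ _ 0 j (by omega) (by omega)
    intro q hq1 hq2 x hx1 hx2
    rw [cardInter i m hmono (q + 1) j (x + 1) (i j) (by omega) (by omega) (by omega)
      (by rw [Nat.add_sub_cancel]; omega) (by omega) (le_refl _) hjj1,
      show j + 1 - (q + 1) = j - q from by omega]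
  have c3 : ((Finset.Icc (i j + 1) ℓ).filter
        (fun b => Even ((((Finset.Icc 1 m).image i) ∩ Finset.Icc (i j + 1) b).card))).card + 1
      = ∑ k ∈ Finset.Ico j (m + 1), if Even (k - j) then i (k + 1) - i k else 0 := by
    have hg3 : Even ((((Finset.Icc 1 m).image i) ∩ Finset.Icc (i j + 1) (i j)).card) := by
      rw [Finset.Icc_eq_empty (by omega : ¬ i j + 1 ≤ i j), Finset.inter_empty, Finset.card_empty]
      exact Even.zero
    have hn3 : (i j) ∉ Finset.Icc (i j + 1) ℓ := by
      rw [Finset.mem_Icc]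
      omega
    have hsum := sumIco i m hmono
      (fun b => Even ((((Finset.Icc 1 m).image i) ∩ Finset.Icc (i j + 1) b).card))
      (fun k => Even (k - j)) j (m + 1) (by omega) (le_refl _) ?_
    · rw [hins3, Finset.filter_insert, if_pos hg3,
        Finset.card_insert_of_notMem (fun hmem => hn3 (Finset.mem_of_mem_filter _ hmem))] at hsum
      beta_reduce at hsum
      omega
    · intro k hk1 hk2 x hx1 hx2
      show Even ((((Finset.Icc 1 m).image i) ∩ Finset.Icc (i j + 1) x).card) ↔ Even (k - j)
      rw [cardInter i m hmono (j + 1) k (i j + 1) x (by omega) (by omega) (by omega)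
        (by rw [Nat.add_sub_cancel]; omega) (by omega) hx1 hx2,
        show k + 1 - (j + 1) = k - j from by omega]
  have c4 : ((Finset.Icc 1 (i j - 1)).filter
        (fun a => Even ((((Finset.Icc 1 m).image i) ∩ Finset.Icc a (i j - 1)).card))).card + 1
      = ∑ q ∈ Finset.Ico 0 j, if Even (j - 1 - q) then i (q + 1) - i q else 0 := by
    have hg4 : Even ((((Finset.Icc 1 m).image i) ∩ Finset.Icc (i j - 1 + 1) (i j - 1)).card) := by
      rw [Finset.Icc_eq_empty (by omega : ¬ i j - 1 + 1 ≤ i j - 1), Finset.inter_empty,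
        Finset.card_empty]
      exact Even.zero
    have hn4 : (i j - 1) ∉ Finset.Ico 0 (i j - 1) := by
      rw [Finset.mem_Ico]
      omega
    have hsum := sumIco i m hmono
      (fun x => Even ((((Finset.Icc 1 m).image i) ∩ Finset.Icc (x + 1) (i j - 1)).card))
      (fun q => Even (j - 1 - q)) 0 j (by omega) (by omega) ?_
    · rw [hins4, Finset.filter_insert, if_pos hg4,
        Finset.card_insert_of_notMem (fun hmem => hn4 (Finset.mem_of_mem_filter _ hmem))] at hsum
      rw [himgcard (i j - 1)
        (fun a => Even ((((Finset.Icc 1 m).image i) ∩ Finset.Icc a (i j - 1)).card)) inferInstance]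
      beta_reduce at hsum ⊢
      omega
    · intro q hq1 hq2 x hx1 hx2
      show Even ((((Finset.Icc 1 m).image i) ∩ Finset.Icc (x + 1) (i j - 1)).card) ↔ Even (j - 1 - q)
      rw [cardInter i m hmono (q + 1) (j - 1) (x + 1) (i j - 1) (by omega) (by omega) (by omega)
        (by rw [Nat.add_sub_cancel]; omega) (by omega) (by omega)
        (by rw [show j - 1 + 1 = j from by omega]; omega),
        show j - 1 + 1 - (q + 1) = j - 1 - q from by omega]
  -- the four span counts
  have s1 : ((Finset.Icc (i j) ℓ).filter
        (fun b => ((Finset.Icc 1 m).image i) ∩ Finset.Icc (i j) b = ∅)).card = 0 := by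
    rw [Finset.card_eq_zero, Finset.filter_eq_empty_iff]
    intro b hb
    rw [Finset.mem_Icc] at hb
    intro hemp
    have hmem : i j ∈ ((Finset.Icc 1 m).image i) ∩ Finset.Icc (i j) b :=
      Finset.mem_inter.mpr ⟨Finset.mem_image.mpr ⟨j, Finset.mem_Icc.mpr ⟨hj, hjm⟩, rfl⟩,
        Finset.mem_Icc.mpr ⟨le_refl _, hb.1⟩⟩
    rw [hemp] at hmem
    exact absurd hmem (Finset.notMem_empty _)
  have s2 : ((Finset.Icc 1 (i j)).filter
        (fun a => ((Finset.Icc 1 m).image i) ∩ Finset.Icc a (i j) = ∅)).card = 0 := by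
    rw [Finset.card_eq_zero, Finset.filter_eq_empty_iff]
    intro a ha
    rw [Finset.mem_Icc] at ha
    intro hemp
    have hmem : i j ∈ ((Finset.Icc 1 m).image i) ∩ Finset.Icc a (i j) :=
      Finset.mem_inter.mpr ⟨Finset.mem_image.mpr ⟨j, Finset.mem_Icc.mpr ⟨hj, hjm⟩, rfl⟩,
        Finset.mem_Icc.mpr ⟨ha.2, le_refl _⟩⟩
    rw [hemp] at hmem
    exact absurd hmem (Finset.notMem_empty _)
  have s3 : ((Finset.Icc (i j + 1) ℓ).filter
        (fun b => ((Finset.Icc 1 m).image i) ∩ Finset.Icc (i j + 1) b = ∅)).card + 1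
      = i (j + 1) - i j := by
    have hg3 : ((Finset.Icc 1 m).image i) ∩ Finset.Icc (i j + 1) (i j) = ∅ := by
      rw [Finset.Icc_eq_empty (by omega : ¬ i j + 1 ≤ i j), Finset.inter_empty]
    have hn3 : (i j) ∉ Finset.Icc (i j + 1) ℓ := by
      rw [Finset.mem_Icc]
      omega
    have hsum := sumIco i m hmono
      (fun b => ((Finset.Icc 1 m).image i) ∩ Finset.Icc (i j + 1) b = ∅)
      (fun k => k = j) j (m + 1) (by omega) (le_refl _) ?_
    · rw [hins3, Finset.filter_insert, if_pos hg3,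
        Finset.card_insert_of_notMem (fun hmem => hn3 (Finset.mem_of_mem_filter _ hmem))] at hsum
      beta_reduce at hsum
      rw [Finset.sum_ite_eq' (Finset.Ico j (m + 1)) j (fun k => i (k + 1) - i k),
        if_pos (Finset.mem_Ico.mpr ⟨le_refl _, by omega⟩)] at hsum
      omega
    · intro k hk1 hk2 x hx1 hx2
      show (((Finset.Icc 1 m).image i) ∩ Finset.Icc (i j + 1) x = ∅) ↔ k = j
      rw [← Finset.card_eq_zero,
        cardInter i m hmono (j + 1) k (i j + 1) x (by omega) (by omega) (by omega)
          (by rw [Nat.add_sub_cancel]; omega) (by omega) hx1 hx2]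
      omega
  have s4 : ((Finset.Icc 1 (i j - 1)).filter
        (fun a => ((Finset.Icc 1 m).image i) ∩ Finset.Icc a (i j - 1) = ∅)).card + 1
      = i j - i (j - 1) := by
    have hg4 : ((Finset.Icc 1 m).image i) ∩ Finset.Icc (i j - 1 + 1) (i j - 1) = ∅ := by
      rw [Finset.Icc_eq_empty (by omega : ¬ i j - 1 + 1 ≤ i j - 1), Finset.inter_empty]
    have hn4 : (i j - 1) ∉ Finset.Ico 0 (i j - 1) := by
      rw [Finset.mem_Ico]
      omega
    have hsum := sumIco i m hmono
      (fun x => ((Finset.Icc 1 m).image i) ∩ Finset.Icc (x + 1) (i j - 1) = ∅)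
      (fun q => q = j - 1) 0 j (by omega) (by omega) ?_
    · rw [hins4, Finset.filter_insert, if_pos hg4,
        Finset.card_insert_of_notMem (fun hmem => hn4 (Finset.mem_of_mem_filter _ hmem))] at hsum
      rw [Finset.sum_ite_eq' (Finset.Ico 0 j) (j - 1) (fun k => i (k + 1) - i k),
        if_pos (Finset.mem_Ico.mpr ⟨by omega, by omega⟩)] at hsum
      rw [himgcard (i j - 1)
        (fun a => ((Finset.Icc 1 m).image i) ∩ Finset.Icc a (i j - 1) = ∅) inferInstance]
      beta_reduce at hsum ⊢
      rw [show j - 1 + 1 = j from by omega] at hsum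
      omega
    · intro q hq1 hq2 x hx1 hx2
      show (((Finset.Icc 1 m).image i) ∩ Finset.Icc (x + 1) (i j - 1) = ∅) ↔ q = j - 1
      rw [← Finset.card_eq_zero,
        cardInter i m hmono (q + 1) (j - 1) (x + 1) (i j - 1) (by omega) (by omega) (by omega)
          (by rw [Nat.add_sub_cancel]; omega) (by omega) (by omega)
          (by rw [show j - 1 + 1 = j from by omega]; omega)]
      omega
  -- cast everything to ℤ
  have zc1 : (((Finset.Icc (i j) ℓ).filter
        (fun b => Even ((((Finset.Icc 1 m).image i) ∩ Finset.Icc (i j) b).card))).card : ℤ)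
      = ∑ k ∈ Finset.Ico j (m + 1),
          if Even (k + 1 - j) then ((i (k + 1) : ℤ) - (i k : ℤ)) else 0 := by
    rw [c1]
    exact cast_ite_sum i m hmono j (m + 1) (le_refl _) _
  have zc2 : (((Finset.Icc 1 (i j)).filter
        (fun a => Even ((((Finset.Icc 1 m).image i) ∩ Finset.Icc a (i j)).card))).card : ℤ)
      = ∑ q ∈ Finset.Ico 0 j,
          if Even (j - q) then ((i (q + 1) : ℤ) - (i q : ℤ)) else 0 := by
    rw [c2]
    exact cast_ite_sum i m hmono 0 j (by omega) _
  have zc3 : (((Finset.Icc (i j + 1) ℓ).filter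
        (fun b => Even ((((Finset.Icc 1 m).image i) ∩ Finset.Icc (i j + 1) b).card))).card : ℤ)
      = (∑ k ∈ Finset.Ico j (m + 1),
          if Even (k - j) then ((i (k + 1) : ℤ) - (i k : ℤ)) else 0) - 1 := by
    rw [← cast_ite_sum i m hmono j (m + 1) (le_refl _) _, ← c3]
    push_cast
    ring
  have zc4 : (((Finset.Icc 1 (i j - 1)).filter
        (fun a => Even ((((Finset.Icc 1 m).image i) ∩ Finset.Icc a (i j - 1)).card))).card : ℤ)
      = (∑ q ∈ Finset.Ico 0 j,
          if Even (j - 1 - q) then ((i (q + 1) : ℤ) - (i q : ℤ)) else 0) - 1 := by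
    rw [← cast_ite_sum i m hmono 0 j (by omega) _, ← c4]
    push_cast
    ring
  have zs1 : (((Finset.Icc (i j) ℓ).filter
        (fun b => ((Finset.Icc 1 m).image i) ∩ Finset.Icc (i j) b = ∅)).card : ℤ) = 0 := by
    exact_mod_cast congrArg (Nat.cast : ℕ → ℤ) s1
  have zs2 : (((Finset.Icc 1 (i j)).filter
        (fun a => ((Finset.Icc 1 m).image i) ∩ Finset.Icc a (i j) = ∅)).card : ℤ) = 0 := by
    exact_mod_cast congrArg (Nat.cast : ℕ → ℤ) s2
  have zs3 : (((Finset.Icc (i j + 1) ℓ).filter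
        (fun b => ((Finset.Icc 1 m).image i) ∩ Finset.Icc (i j + 1) b = ∅)).card : ℤ)
      = ((i (j + 1) : ℤ) - (i j : ℤ)) - 1 := by
    have := congrArg (Nat.cast : ℕ → ℤ) s3
    push_cast [Nat.cast_sub (le_of_lt hjj1)] at this
    omega
  have zs4 : (((Finset.Icc 1 (i j - 1)).filter
        (fun a => ((Finset.Icc 1 m).image i) ∩ Finset.Icc a (i j - 1) = ∅)).card : ℤ)
      = ((i j : ℤ) - (i (j - 1) : ℤ)) - 1 := by
    have := congrArg (Nat.cast : ℕ → ℤ) s4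
    push_cast [Nat.cast_sub (le_of_lt hj1j)] at this
    omega
  rw [zc1, zc2, zc3, zc4, zs1, zs2, zs3, zs4]
  -- the two alternating-sum identities
  have hAC : (∑ k ∈ Finset.Ico j (m + 1),
          if Even (k + 1 - j) then ((i (k + 1) : ℤ) - (i k : ℤ)) else 0)
        - (∑ k ∈ Finset.Ico j (m + 1),
          if Even (k - j) then ((i (k + 1) : ℤ) - (i k : ℤ)) else 0)
      = (i j : ℤ) + (∑ k ∈ Finset.Icc (j + 1) m, 2 * (-1 : ℤ) ^ (k - j) * (i k : ℤ))
        + (-1 : ℤ) ^ (m - j + 1) * (i (m + 1) : ℤ) := by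
    rw [← Finset.sum_sub_distrib, show Finset.Ico j (m + 1) = Finset.Icc j m from
      Finset.Ico_add_one_right_eq_Icc j m, ← sumE1 i j m hjm]
    apply Finset.sum_congr rfl
    intro k hk
    rw [Finset.mem_Icc] at hk
    by_cases he : Even (k - j)
    · have h1 : ¬ Even (k + 1 - j) := by
        rw [show k + 1 - j = (k - j) + 1 from by omega, Nat.even_add_one]
        exact fun h => h he
      have h2 : (-1 : ℤ) ^ (k - j + 1) = -1 := Odd.neg_one_pow (Even.add_one he)
      rw [if_neg h1, if_pos he, h2]
      ring
    · have h1 : Even (k + 1 - j) := by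
        rw [show k + 1 - j = (k - j) + 1 from by omega, Nat.even_add_one]
        exact he
      have h2 : (-1 : ℤ) ^ (k - j + 1) = 1 :=
        Even.neg_one_pow (Nat.even_add_one.mpr he)
      rw [if_pos h1, if_neg he, h2]
      ring
  have hBD : (∑ q ∈ Finset.Ico 0 j,
          if Even (j - q) then ((i (q + 1) : ℤ) - (i q : ℤ)) else 0)
        - (∑ q ∈ Finset.Ico 0 j,
          if Even (j - 1 - q) then ((i (q + 1) : ℤ) - (i q : ℤ)) else 0)
      = -(i j : ℤ) - ∑ k ∈ Finset.Icc 1 (j - 1), 2 * (-1 : ℤ) ^ (j - k) * (i k : ℤ) := by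
    rw [← Finset.sum_sub_distrib, ← sumE2 i h0 j hj]
    apply Finset.sum_congr rfl
    intro q hq
    rw [Finset.mem_Ico] at hq
    by_cases he : Even (j - q)
    · have h1 : ¬ Even (j - 1 - q) := by
        have h' : Even ((j - 1 - q) + 1) := by
          rw [show (j - 1 - q) + 1 = j - q from by omega]
          exact he
        rw [Nat.even_add_one] at h'
        exact h'
      rw [if_pos he, if_neg h1, Even.neg_one_pow he]
      ring
    · have h1 : Even (j - 1 - q) := by
        by_contra hc
        have h' : Even ((j - 1 - q) + 1) := Nat.even_add_one.mpr hc
        rw [show (j - 1 - q) + 1 = j - q from by omega] at h'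
        exact he h'
      rw [if_neg he, if_pos h1, Odd.neg_one_pow (Nat.not_even_iff_odd.mp he)]
      ring
  have hltop : ((ℓ : ℤ) + 1) = ((i (m + 1) : ℕ) : ℤ) := by
    rw [htop]
    push_cast
    ring
  rw [hltop]
  linear_combination 4 * hAC + 4 * hBD
end

section
/- Let ℓ ≥ 2 and let S = {i₁ < ⋯ < i_m} ⊆ {1,…,ℓ} be nonempty with i_m < ℓ (convention i₀ = 0). In the root system of type B_ℓ, the positive roots are Σ_{i=a}^{b} γ_i (1 ≤ a ≤ b ≤ ℓ) and Σ_{i=a}^{b} γ_i + Σ_{i=b+1}^{ℓ} 2γ_i (1 ≤ a ≤ b ≤ ℓ−1); call such a root compact iff |S ∩ [a,b]| is even, and relevant if moreover its support involves at least one index of S (i.e., it does not lie in the span of {γ_i : i ∉ S}). Let δᶜ ∈ ℤ^ℓ be the coefficient vector of the sum of all relevant compact positive roots. Then −δᶜ_{i_m−1} + 2δᶜ_{i_m} − δᶜ_{i_m+1} = i_m − i_{m−1} − 1, where δᶜ_0 = 0. -/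
/-- `n`-th coefficient of the sum of all relevant compact positive roots of type `B_ℓ`.
Positive roots are `Σ_{i=a}^{b} γ_i` (`1 ≤ a ≤ b ≤ ℓ`) and
`Σ_{i=a}^{b} γ_i + Σ_{i=b+1}^{ℓ} 2γ_i` (`1 ≤ a ≤ b ≤ ℓ−1`); a root `Σ nᵢγᵢ` is
compact iff `Σ_{i∈S} nᵢ` is even, and relevant iff moreover `Σ_{i∈S} nᵢ > 0`. -/
def deltaB (ℓ : ℕ) (S : Finset ℕ) (n : ℕ) : ℤ :=
  (∑ p ∈ (Finset.Icc 1 ℓ ×ˢ Finset.Icc 1 ℓ).filter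
      (fun p => p.1 ≤ p.2 ∧
        Even ((S ∩ Finset.Icc p.1 p.2).card) ∧
        0 < (S ∩ Finset.Icc p.1 p.2).card),
      (if p.1 ≤ n ∧ n ≤ p.2 then (1 : ℤ) else 0))
  + ∑ p ∈ (Finset.Icc 1 ℓ ×ˢ Finset.Icc 1 (ℓ - 1)).filter
      (fun p => p.1 ≤ p.2 ∧
        Even ((S ∩ Finset.Icc p.1 p.2).card + 2 * (S ∩ Finset.Icc (p.2 + 1) ℓ).card) ∧
        0 < (S ∩ Finset.Icc p.1 p.2).card + 2 * (S ∩ Finset.Icc (p.2 + 1) ℓ).card),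
      ((if p.1 ≤ n ∧ n ≤ p.2 then (1 : ℤ) else 0)
        + (if p.2 + 1 ≤ n ∧ n ≤ ℓ then (2 : ℤ) else 0))

set_option maxHeartbeats 1600000 in
/-- type `B_ℓ`, case `j = m`, `i_m < ℓ`:
`−δᶜ_{i_m−1} + 2δᶜ_{i_m} − δᶜ_{i_m+1} = i_m − i_{m−1} − 1`. -/
theorem stmt9 (ℓ m : ℕ) (hℓ : 2 ≤ ℓ) (hm : 1 ≤ m)
    (i : ℕ → ℕ) (h0 : i 0 = 0)
    (hmono : ∀ k ≤ m, i k < i (k + 1)) (him : i m < ℓ) :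
    -(deltaB ℓ ((Finset.Icc 1 m).image i) (i m - 1))
      + 2 * deltaB ℓ ((Finset.Icc 1 m).image i) (i m)
      - deltaB ℓ ((Finset.Icc 1 m).image i) (i m + 1)
      = (i m : ℤ) - (i (m - 1) : ℤ) - 1 := by
  set S : Finset ℕ := (Finset.Icc 1 m).image i with hS
  set n := i m with hndef
  set q := i (m - 1) with hqdef
  -- monotonicity of `i` up to `m`
  have mono : ∀ j k, j ≤ k → k ≤ m → i j ≤ i k := by
    intro j k hjk
    induction hjk with
    | refl => intro _; exact le_rfl
    | @step k' h ih =>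
      intro hkm
      exact le_trans (ih (by omega)) (le_of_lt (hmono k' (by omega)))
  have smono : ∀ j k, j < k → k ≤ m → i j < i k := by
    intro j k hjk hkm
    have h1 := mono j (k - 1) (by omega) (by omega)
    have h2 := hmono (k - 1) (by omega)
    have hk : k - 1 + 1 = k := by omega
    rw [hk] at h2
    omega
  have hn1 : 1 ≤ n := by
    have h := smono 0 m (by omega) le_rfl
    omega
  have hqn : q < n := by
    have h := smono (m - 1) m (by omega) le_rfl
    omega
  have hSle : ∀ x ∈ S, x ≤ n := by
    intro x hx
    rw [hS, Finset.mem_image] at hx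
    obtain ⟨k, hk, rfl⟩ := hx
    rw [Finset.mem_Icc] at hk
    have := mono k m hk.2 le_rfl
    omega
  have hSn : n ∈ S := by
    rw [hS, Finset.mem_image]
    exact ⟨m, Finset.mem_Icc.mpr ⟨hm, le_rfl⟩, hndef.symm⟩
  have hSq : ∀ x ∈ S, x < n → x ≤ q := by
    intro x hx hxn
    rw [hS, Finset.mem_image] at hx
    obtain ⟨k, hk, rfl⟩ := hx
    rw [Finset.mem_Icc] at hk
    have hkm : k ≠ m := by rintro rfl; omega
    have := mono k (m - 1) (by omega) (by omega)
    omega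
  have hqmem : 1 ≤ q → q ∈ S := by
    intro hq1
    rw [hS, Finset.mem_image]
    refine ⟨m - 1, Finset.mem_Icc.mpr ⟨?_, by omega⟩, hqdef.symm⟩
    by_contra h
    have hm0 : m - 1 = 0 := by omega
    rw [hm0, h0] at hqdef
    omega
  -- intersection lemmas
  have hcapLarge : ∀ a b : ℕ, n < a → S ∩ Finset.Icc a b = ∅ := by
    intro a b hna
    rw [Finset.eq_empty_iff_forall_notMem]
    intro x hx
    rw [Finset.mem_inter, Finset.mem_Icc] at hx
    have := hSle x hx.1
    omega
  have hcapN : ∀ b : ℕ, n ≤ b → S ∩ Finset.Icc n b = {n} := by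
    intro b hb
    ext x
    rw [Finset.mem_inter, Finset.mem_Icc, Finset.mem_singleton]
    constructor
    · rintro ⟨h1, h2, h3⟩
      have := hSle x h1
      omega
    · rintro rfl
      exact ⟨hSn, le_rfl, hb⟩
  have hcapQ : ∀ a b : ℕ, q < a → b ≤ n - 1 → S ∩ Finset.Icc a b = ∅ := by
    intro a b hqa hbn
    rw [Finset.eq_empty_iff_forall_notMem]
    intro x hx
    rw [Finset.mem_inter, Finset.mem_Icc] at hx
    have h1 := hSle x hx.1
    have h2 := hSq x hx.1 (by omega)
    omega
  have hcapQmem : ∀ a : ℕ, 1 ≤ a → a ≤ q → q ∈ S ∩ Finset.Icc a (n - 1) := by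
    intro a h1 h2
    rw [Finset.mem_inter, Finset.mem_Icc]
    exact ⟨hqmem (by omega), h2, by omega⟩
  -- name the two index sets
  set T1 := (Finset.Icc 1 ℓ ×ˢ Finset.Icc 1 ℓ).filter
      (fun p => p.1 ≤ p.2 ∧
        Even ((S ∩ Finset.Icc p.1 p.2).card) ∧
        0 < (S ∩ Finset.Icc p.1 p.2).card) with hT1
  set T2 := (Finset.Icc 1 ℓ ×ˢ Finset.Icc 1 (ℓ - 1)).filter
      (fun p => p.1 ≤ p.2 ∧
        Even ((S ∩ Finset.Icc p.1 p.2).card + 2 * (S ∩ Finset.Icc (p.2 + 1) ℓ).card) ∧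
        0 < (S ∩ Finset.Icc p.1 p.2).card + 2 * (S ∩ Finset.Icc (p.2 + 1) ℓ).card) with hT2
  -- step 1 : rewrite the Laplacian as a sum of pointwise Laplacians
  have step1 : -(deltaB ℓ S (n - 1)) + 2 * deltaB ℓ S n - deltaB ℓ S (n + 1)
      = (∑ p ∈ T1, (-(if p.1 ≤ n - 1 ∧ n - 1 ≤ p.2 then (1:ℤ) else 0)
          + 2 * (if p.1 ≤ n ∧ n ≤ p.2 then (1:ℤ) else 0)
          - (if p.1 ≤ n + 1 ∧ n + 1 ≤ p.2 then (1:ℤ) else 0)))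
      + (∑ p ∈ T2, (-((if p.1 ≤ n - 1 ∧ n - 1 ≤ p.2 then (1:ℤ) else 0)
            + (if p.2 + 1 ≤ n - 1 ∧ n - 1 ≤ ℓ then (2:ℤ) else 0))
          + 2 * ((if p.1 ≤ n ∧ n ≤ p.2 then (1:ℤ) else 0)
            + (if p.2 + 1 ≤ n ∧ n ≤ ℓ then (2:ℤ) else 0))
          - ((if p.1 ≤ n + 1 ∧ n + 1 ≤ p.2 then (1:ℤ) else 0)
            + (if p.2 + 1 ≤ n + 1 ∧ n + 1 ≤ ℓ then (2:ℤ) else 0)))) := by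
    rw [hT1, hT2]
    simp only [deltaB, Finset.sum_sub_distrib, Finset.sum_add_distrib,
      Finset.sum_neg_distrib, ← Finset.mul_sum]
    ring
  -- step 2 : pointwise evaluation of the Laplacian, first sum
  have step2 : (∑ p ∈ T1, (-(if p.1 ≤ n - 1 ∧ n - 1 ≤ p.2 then (1:ℤ) else 0)
          + 2 * (if p.1 ≤ n ∧ n ≤ p.2 then (1:ℤ) else 0)
          - (if p.1 ≤ n + 1 ∧ n + 1 ≤ p.2 then (1:ℤ) else 0)))
      = ∑ p ∈ T1, ((if p.1 = n then (1:ℤ) else 0) + (if p.2 = n then (1:ℤ) else 0)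
          - (if p.2 = n - 1 then (1:ℤ) else 0) - (if p.1 = n + 1 then (1:ℤ) else 0)) := by
    refine Finset.sum_congr rfl fun p hp => ?_
    simp only [hT1, Finset.mem_filter, Finset.mem_product, Finset.mem_Icc] at hp
    obtain ⟨⟨⟨h1, h2⟩, h3, h4⟩, h5, -⟩ := hp
    split_ifs <;> omega
  -- step 3 : pointwise evaluation of the Laplacian, second sum
  have step3 : (∑ p ∈ T2, (-((if p.1 ≤ n - 1 ∧ n - 1 ≤ p.2 then (1:ℤ) else 0)
            + (if p.2 + 1 ≤ n - 1 ∧ n - 1 ≤ ℓ then (2:ℤ) else 0))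
          + 2 * ((if p.1 ≤ n ∧ n ≤ p.2 then (1:ℤ) else 0)
            + (if p.2 + 1 ≤ n ∧ n ≤ ℓ then (2:ℤ) else 0))
          - ((if p.1 ≤ n + 1 ∧ n + 1 ≤ p.2 then (1:ℤ) else 0)
            + (if p.2 + 1 ≤ n + 1 ∧ n + 1 ≤ ℓ then (2:ℤ) else 0))))
      = ∑ p ∈ T2, ((if p.1 = n then (1:ℤ) else 0) + (if p.2 = n - 1 then (1:ℤ) else 0)
          - (if p.1 = n + 1 then (1:ℤ) else 0) - (if p.2 = n then (1:ℤ) else 0)) := by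
    refine Finset.sum_congr rfl fun p hp => ?_
    simp only [hT2, Finset.mem_filter, Finset.mem_product, Finset.mem_Icc] at hp
    obtain ⟨⟨⟨h1, h2⟩, h3, h4⟩, h5, -⟩ := hp
    split_ifs <;> omega
  -- vanishing of the `p.1 = n` and `p.1 = n+1` contributions
  have hA1 : (∑ p ∈ T1, if p.1 = n then (1:ℤ) else 0) = 0 := by
    refine Finset.sum_eq_zero fun p hp => ?_
    simp only [hT1, Finset.mem_filter, Finset.mem_product, Finset.mem_Icc] at hp
    obtain ⟨⟨⟨h1, h2⟩, h3, h4⟩, h5, h6, h7⟩ := hp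
    rw [if_neg]
    intro hpn
    rw [hpn, hcapN p.2 (by omega), Finset.card_singleton] at h6
    simp at h6
  have hD1 : (∑ p ∈ T1, if p.1 = n + 1 then (1:ℤ) else 0) = 0 := by
    refine Finset.sum_eq_zero fun p hp => ?_
    simp only [hT1, Finset.mem_filter, Finset.mem_product, Finset.mem_Icc] at hp
    obtain ⟨⟨⟨h1, h2⟩, h3, h4⟩, h5, h6, h7⟩ := hp
    rw [if_neg]
    intro hpn
    rw [hpn, hcapLarge (n + 1) p.2 (by omega), Finset.card_empty] at h7
    omega
  have hA2 : (∑ p ∈ T2, if p.1 = n then (1:ℤ) else 0) = 0 := by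
    refine Finset.sum_eq_zero fun p hp => ?_
    simp only [hT2, Finset.mem_filter, Finset.mem_product, Finset.mem_Icc] at hp
    obtain ⟨⟨⟨h1, h2⟩, h3, h4⟩, h5, h6, h7⟩ := hp
    rw [if_neg]
    intro hpn
    rw [hpn, hcapN p.2 (by omega), Finset.card_singleton] at h6
    rw [Nat.even_iff] at h6
    omega
  have hD2 : (∑ p ∈ T2, if p.1 = n + 1 then (1:ℤ) else 0) = 0 := by
    refine Finset.sum_eq_zero fun p hp => ?_
    simp only [hT2, Finset.mem_filter, Finset.mem_product, Finset.mem_Icc] at hp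
    obtain ⟨⟨⟨h1, h2⟩, h3, h4⟩, h5, h6, h7⟩ := hp
    rw [if_neg]
    intro hpn
    rw [hpn, hcapLarge (n + 1) p.2 (by omega),
      hcapLarge (p.2 + 1) ℓ (by omega), Finset.card_empty] at h7
    omega
  -- the `p.2 = n` contributions coincide
  have hfil : T1.filter (fun p => p.2 = n) = T2.filter (fun p => p.2 = n) := by
    ext p
    obtain ⟨a, b⟩ := p
    simp only [hT1, hT2, Finset.mem_filter, Finset.mem_product, Finset.mem_Icc]
    constructor
    · rintro ⟨⟨⟨⟨h1, h2⟩, h3, h4⟩, h5, h6, h7⟩, rfl⟩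
      refine ⟨⟨⟨⟨h1, h2⟩, h3, by omega⟩, h5, ?_, ?_⟩, rfl⟩
      · rw [hcapLarge (n + 1) ℓ (by omega), Finset.card_empty]
        simpa using h6
      · rw [hcapLarge (n + 1) ℓ (by omega), Finset.card_empty]
        omega
    · rintro ⟨⟨⟨⟨h1, h2⟩, h3, h4⟩, h5, h6, h7⟩, rfl⟩
      rw [hcapLarge (n + 1) ℓ (by omega), Finset.card_empty] at h6 h7
      refine ⟨⟨⟨⟨h1, h2⟩, h3, by omega⟩, h5, by simpa using h6, by omega⟩, rfl⟩
  have hB : (∑ p ∈ T1, if p.2 = n then (1:ℤ) else 0)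
      = (∑ p ∈ T2, if p.2 = n then (1:ℤ) else 0) := by
    rw [Finset.sum_boole, Finset.sum_boole, hfil]
  -- the `p.2 = n - 1` contributions differ by `n - q - 1`
  have hsub : T1.filter (fun p => p.2 = n - 1) ⊆ T2.filter (fun p => p.2 = n - 1) := by
    intro p hp
    obtain ⟨a, b⟩ := p
    simp only [hT1, hT2, Finset.mem_filter, Finset.mem_product, Finset.mem_Icc] at hp ⊢
    obtain ⟨⟨⟨⟨h1, h2⟩, h3, h4⟩, h5, h6, h7⟩, rfl⟩ := hp
    refine ⟨⟨⟨⟨h1, h2⟩, h3, by omega⟩, h5, ?_, ?_⟩, rfl⟩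
    · rw [show n - 1 + 1 = n from by omega, hcapN ℓ (by omega), Finset.card_singleton]
      simpa using h6.add even_two
    · rw [show n - 1 + 1 = n from by omega, hcapN ℓ (by omega), Finset.card_singleton]
      omega
  have hdiff : T2.filter (fun p => p.2 = n - 1) \ T1.filter (fun p => p.2 = n - 1)
      = (Finset.Icc (q + 1) (n - 1)).image (fun a => (a, n - 1)) := by
    ext p
    obtain ⟨a, b⟩ := p
    simp only [hT1, hT2, Finset.mem_sdiff, Finset.mem_filter, Finset.mem_product,
      Finset.mem_Icc, Finset.mem_image]
    constructor
    · rintro ⟨⟨⟨⟨⟨h1, h2⟩, h3, h4⟩, h5, h6, h7⟩, rfl⟩, hnot⟩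
      rw [show n - 1 + 1 = n from by omega, hcapN ℓ (by omega), Finset.card_singleton] at h6
      have hevc : Even ((S ∩ Finset.Icc a (n - 1)).card) := by
        rw [Nat.even_iff] at h6 ⊢
        omega
      have hc0 : (S ∩ Finset.Icc a (n - 1)).card = 0 := by
        by_contra hc
        exact hnot ⟨⟨⟨⟨h1, h2⟩, h3, by omega⟩, h5, hevc, by omega⟩, rfl⟩
      have hqa : q < a := by
        by_contra hqa
        have hpos := Finset.card_pos.mpr ⟨q, hcapQmem a h1 (by omega)⟩
        omega
      exact ⟨a, ⟨by omega, h5⟩, rfl⟩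
    · rintro ⟨x, ⟨hx1, hx2⟩, heq⟩
      rw [Prod.mk.injEq] at heq
      obtain ⟨rfl, h⟩ := heq
      subst h
      have hc0 : S ∩ Finset.Icc x (n - 1) = ∅ := hcapQ x (n - 1) (by omega) le_rfl
      constructor
      · refine ⟨⟨⟨⟨by omega, by omega⟩, by omega, by omega⟩, by omega, ?_, ?_⟩, rfl⟩
        · rw [hc0, show n - 1 + 1 = n from by omega, hcapN ℓ (by omega),
            Finset.card_singleton, Finset.card_empty]
          simp
        · rw [hc0, show n - 1 + 1 = n from by omega, hcapN ℓ (by omega),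
            Finset.card_singleton, Finset.card_empty]
          omega
      · rintro ⟨⟨-, -, -, hpos⟩, -⟩
        rw [hc0, Finset.card_empty] at hpos
        omega
  have hinj : Function.Injective (fun a : ℕ => (a, n - 1)) := by
    intro x y h
    simpa using h
  have hC : (∑ p ∈ T2, if p.2 = n - 1 then (1:ℤ) else 0)
      - (∑ p ∈ T1, if p.2 = n - 1 then (1:ℤ) else 0) = (n : ℤ) - (q : ℤ) - 1 := by
    rw [Finset.sum_boole, Finset.sum_boole]
    have hcard := Finset.card_sdiff_of_subset hsub
    rw [hdiff, Finset.card_image_of_injective _ hinj, Nat.card_Icc] at hcard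
    have hle := Finset.card_le_card hsub
    omega
  rw [step1, step2, step3]
  simp only [Finset.sum_add_distrib, Finset.sum_sub_distrib]
  rw [hA1, hD1, hA2, hD2]
  linarith [hB, hC]
end

section
/- Let ℓ ≥ 2 and let S = {i₁ < ⋯ < i_m} ⊆ {1,…,ℓ} with i_m = ℓ (convention i₀ = 0). In the root system of type B_ℓ with compact positive roots defined by the parity rule (α = Σ n_i γ_i is compact iff Σ_{i∈S} n_i is even) and relevant compact roots those with Σ_{i∈S} n_i > 0, let δᶜ ∈ ℤ^ℓ be the coefficient vector of the sum of all relevant compact positive roots. Then −2δᶜ_{ℓ−1} + 2δᶜ_ℓ = 2(ℓ − i_{m−1} − 1). -/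
lemma auxmono (m : ℕ) (i : ℕ → ℕ) (hmono : ∀ k ≤ m, i k < i (k + 1)) :
    ∀ j k, j < k → k ≤ m + 1 → i j < i k := by
  intro j k hjk hkm
  induction k with
  | zero => omega
  | succ n ih =>
    have h1 : i n < i (n + 1) := hmono n (by omega)
    rcases Nat.lt_or_ge j n with h | h
    · exact lt_trans (ih h (by omega)) h1
    · have : j = n := by omega
      subst this; exact h1

/-- type `B_ℓ`, painted last node `i_m = ℓ`:
`−2δᶜ_{ℓ−1} + 2δᶜ_ℓ = 2(ℓ − i_{m−1} − 1)`. -/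
theorem stmt10 (ℓ m : ℕ) (hℓ : 2 ≤ ℓ) (hm : 1 ≤ m)
    (i : ℕ → ℕ) (h0 : i 0 = 0)
    (hmono : ∀ k ≤ m, i k < i (k + 1)) (him : i m = ℓ) :
    -2 * deltaB ℓ ((Finset.Icc 1 m).image i) (ℓ - 1)
      + 2 * deltaB ℓ ((Finset.Icc 1 m).image i) ℓ
      = 2 * ((ℓ : ℤ) - (i (m - 1) : ℤ) - 1) := by
  classical
  have hsm : ∀ j k, j < k → k ≤ m + 1 → i j < i k := auxmono m i hmono
  set S := (Finset.Icc 1 m).image i with hSdef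
  have hlmem : ℓ ∈ S := by
    rw [hSdef]
    exact Finset.mem_image.2 ⟨m, Finset.mem_Icc.2 ⟨hm, le_rfl⟩, him⟩
  have hcardll : (S ∩ Finset.Icc ℓ ℓ).card = 1 := by
    rw [Finset.Icc_self, Finset.inter_eq_right.2 (by simpa using hlmem)]
    simp
  have him1 : i (m - 1) < ℓ := by
    have h1 := hmono (m - 1) (by omega)
    have h2 : m - 1 + 1 = m := by omega
    rw [h2] at h1
    omega
  have hempty : ∀ a, 1 ≤ a → ((S ∩ Finset.Icc a (ℓ - 1)).card = 0 ↔ i (m - 1) < a) := by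
    intro a ha
    rw [Finset.card_eq_zero, Finset.eq_empty_iff_forall_notMem]
    constructor
    · intro h
      by_contra hc
      push_neg at hc
      have hm2 : 2 ≤ m := by
        by_contra hc2
        have hm1 : m = 1 := by omega
        rw [hm1] at hc
        norm_num [h0] at hc
        omega
      refine h (i (m - 1)) ?_
      rw [Finset.mem_inter, Finset.mem_Icc]
      exact ⟨Finset.mem_image.2 ⟨m - 1, Finset.mem_Icc.2 ⟨by omega, by omega⟩, rfl⟩, hc, by omega⟩
    · intro h x hx
      rw [Finset.mem_inter, Finset.mem_Icc] at hx
      obtain ⟨hxS, hax, hxl⟩ := hx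
      obtain ⟨k, hk, rfl⟩ := Finset.mem_image.1 hxS
      rw [Finset.mem_Icc] at hk
      have hkm : k < m := by
        by_contra hc
        have hkm' : k = m := by omega
        subst hkm'
        omega
      have hle : i k ≤ i (m - 1) := by
        rcases Nat.lt_or_ge k (m - 1) with h1 | h1
        · exact le_of_lt (hsm _ _ h1 (by omega))
        · have : k = m - 1 := by omega
          subst this; exact le_rfl
      omega
  -- the two counting quantities
  set N1 := ((Finset.Icc 1 (ℓ - 1)).filter
      (fun a => Even ((S ∩ Finset.Icc a (ℓ - 1)).card) ∧
        0 < (S ∩ Finset.Icc a (ℓ - 1)).card)).card with hN1def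
  set NE := ((Finset.Icc 1 (ℓ - 1)).filter
      (fun a => Even ((S ∩ Finset.Icc a (ℓ - 1)).card))).card with hNEdef
  set N0 := ((Finset.Icc 1 (ℓ - 1)).filter
      (fun a => (S ∩ Finset.Icc a (ℓ - 1)).card = 0)).card with hN0def
  -- type 1 contribution
  have key1 :
      -2 * (∑ p ∈ (Finset.Icc 1 ℓ ×ˢ Finset.Icc 1 ℓ).filter
          (fun p => p.1 ≤ p.2 ∧
            Even ((S ∩ Finset.Icc p.1 p.2).card) ∧
            0 < (S ∩ Finset.Icc p.1 p.2).card),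
          (if p.1 ≤ ℓ - 1 ∧ ℓ - 1 ≤ p.2 then (1 : ℤ) else 0))
        + 2 * (∑ p ∈ (Finset.Icc 1 ℓ ×ˢ Finset.Icc 1 ℓ).filter
          (fun p => p.1 ≤ p.2 ∧
            Even ((S ∩ Finset.Icc p.1 p.2).card) ∧
            0 < (S ∩ Finset.Icc p.1 p.2).card),
          (if p.1 ≤ ℓ ∧ ℓ ≤ p.2 then (1 : ℤ) else 0))
      = -2 * (N1 : ℤ) := by
    rw [Finset.mul_sum, Finset.mul_sum, ← Finset.sum_add_distrib]
    have hcongr : ∀ p ∈ (Finset.Icc 1 ℓ ×ˢ Finset.Icc 1 ℓ).filter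
        (fun p => p.1 ≤ p.2 ∧
          Even ((S ∩ Finset.Icc p.1 p.2).card) ∧
          0 < (S ∩ Finset.Icc p.1 p.2).card),
        (-2 * (if p.1 ≤ ℓ - 1 ∧ ℓ - 1 ≤ p.2 then (1 : ℤ) else 0)
          + 2 * (if p.1 ≤ ℓ ∧ ℓ ≤ p.2 then (1 : ℤ) else 0))
        = (if p.2 = ℓ - 1 then (-2 : ℤ) else 0) := by
      intro p hp
      simp only [Finset.mem_filter, Finset.mem_product, Finset.mem_Icc] at hp
      obtain ⟨⟨⟨h11, h12⟩, h21, h22⟩, hle, hev, hpos⟩ := hp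
      by_cases hc : p.2 = ℓ - 1
      · rw [if_pos hc, if_pos ⟨by omega, by omega⟩, if_neg (by omega)]; ring
      · rw [if_neg hc]
        by_cases hc2 : p.2 = ℓ
        · have hp1 : p.1 ≤ ℓ - 1 := by
            by_contra hh
            have hp1l : p.1 = ℓ := by omega
            rw [hp1l, hc2, hcardll] at hev
            simp at hev
          rw [if_pos ⟨by omega, by omega⟩, if_pos ⟨by omega, by omega⟩]; ring
        · rw [if_neg (by omega), if_neg (by omega)]; ring
    rw [Finset.sum_congr rfl hcongr, ← Finset.sum_filter, Finset.sum_const, nsmul_eq_mul]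
    have himg : ((Finset.Icc 1 ℓ ×ˢ Finset.Icc 1 ℓ).filter
        (fun p => p.1 ≤ p.2 ∧
          Even ((S ∩ Finset.Icc p.1 p.2).card) ∧
          0 < (S ∩ Finset.Icc p.1 p.2).card)).filter (fun p => p.2 = ℓ - 1)
        = ((Finset.Icc 1 (ℓ - 1)).filter
          (fun a => Even ((S ∩ Finset.Icc a (ℓ - 1)).card) ∧
            0 < (S ∩ Finset.Icc a (ℓ - 1)).card)).image (fun a => (a, ℓ - 1)) := by
      ext ⟨x, y⟩
      simp only [Finset.mem_filter, Finset.mem_product, Finset.mem_Icc, Finset.mem_image,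
        Prod.mk.injEq]
      constructor
      · rintro ⟨⟨⟨⟨h11, h12⟩, h21, h22⟩, hle, hev, hpos⟩, rfl⟩
        exact ⟨x, ⟨⟨h11, hle⟩, hev, hpos⟩, rfl, rfl⟩
      · rintro ⟨a, ⟨⟨ha1, ha2⟩, hev, hpos⟩, rfl, rfl⟩
        exact ⟨⟨⟨⟨ha1, by omega⟩, by omega, by omega⟩, ha2, hev, hpos⟩, rfl⟩
    rw [himg, Finset.card_image_of_injective _ (fun a b h => by simpa using h)]
    rw [hN1def]; ring
  -- type 2 contribution
  have key2 :
      -2 * (∑ p ∈ (Finset.Icc 1 ℓ ×ˢ Finset.Icc 1 (ℓ - 1)).filter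
          (fun p => p.1 ≤ p.2 ∧
            Even ((S ∩ Finset.Icc p.1 p.2).card + 2 * (S ∩ Finset.Icc (p.2 + 1) ℓ).card) ∧
            0 < (S ∩ Finset.Icc p.1 p.2).card + 2 * (S ∩ Finset.Icc (p.2 + 1) ℓ).card),
          ((if p.1 ≤ ℓ - 1 ∧ ℓ - 1 ≤ p.2 then (1 : ℤ) else 0)
            + (if p.2 + 1 ≤ ℓ - 1 ∧ ℓ - 1 ≤ ℓ then (2 : ℤ) else 0)))
        + 2 * (∑ p ∈ (Finset.Icc 1 ℓ ×ˢ Finset.Icc 1 (ℓ - 1)).filter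
          (fun p => p.1 ≤ p.2 ∧
            Even ((S ∩ Finset.Icc p.1 p.2).card + 2 * (S ∩ Finset.Icc (p.2 + 1) ℓ).card) ∧
            0 < (S ∩ Finset.Icc p.1 p.2).card + 2 * (S ∩ Finset.Icc (p.2 + 1) ℓ).card),
          ((if p.1 ≤ ℓ ∧ ℓ ≤ p.2 then (1 : ℤ) else 0)
            + (if p.2 + 1 ≤ ℓ ∧ ℓ ≤ ℓ then (2 : ℤ) else 0)))
      = 2 * (NE : ℤ) := by
    rw [Finset.mul_sum, Finset.mul_sum, ← Finset.sum_add_distrib]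
    have hcongr : ∀ p ∈ (Finset.Icc 1 ℓ ×ˢ Finset.Icc 1 (ℓ - 1)).filter
        (fun p => p.1 ≤ p.2 ∧
          Even ((S ∩ Finset.Icc p.1 p.2).card + 2 * (S ∩ Finset.Icc (p.2 + 1) ℓ).card) ∧
          0 < (S ∩ Finset.Icc p.1 p.2).card + 2 * (S ∩ Finset.Icc (p.2 + 1) ℓ).card),
        (-2 * ((if p.1 ≤ ℓ - 1 ∧ ℓ - 1 ≤ p.2 then (1 : ℤ) else 0)
            + (if p.2 + 1 ≤ ℓ - 1 ∧ ℓ - 1 ≤ ℓ then (2 : ℤ) else 0))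
          + 2 * ((if p.1 ≤ ℓ ∧ ℓ ≤ p.2 then (1 : ℤ) else 0)
            + (if p.2 + 1 ≤ ℓ ∧ ℓ ≤ ℓ then (2 : ℤ) else 0)))
        = (if p.2 = ℓ - 1 then (2 : ℤ) else 0) := by
      intro p hp
      simp only [Finset.mem_filter, Finset.mem_product, Finset.mem_Icc] at hp
      obtain ⟨⟨⟨h11, h12⟩, h21, h22⟩, hle, hev, hpos⟩ := hp
      by_cases hc : p.2 = ℓ - 1
      · rw [if_pos hc, if_pos ⟨by omega, by omega⟩, if_neg (by omega),
          if_neg (by omega), if_pos ⟨by omega, by omega⟩]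
        ring
      · rw [if_neg hc, if_neg (by omega), if_pos ⟨by omega, by omega⟩,
          if_neg (by omega), if_pos ⟨by omega, by omega⟩]
        ring
    rw [Finset.sum_congr rfl hcongr, ← Finset.sum_filter, Finset.sum_const, nsmul_eq_mul]
    have himg : ((Finset.Icc 1 ℓ ×ˢ Finset.Icc 1 (ℓ - 1)).filter
        (fun p => p.1 ≤ p.2 ∧
          Even ((S ∩ Finset.Icc p.1 p.2).card + 2 * (S ∩ Finset.Icc (p.2 + 1) ℓ).card) ∧
          0 < (S ∩ Finset.Icc p.1 p.2).card + 2 * (S ∩ Finset.Icc (p.2 + 1) ℓ).card)).filter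
          (fun p => p.2 = ℓ - 1)
        = ((Finset.Icc 1 (ℓ - 1)).filter
          (fun a => Even ((S ∩ Finset.Icc a (ℓ - 1)).card))).image (fun a => (a, ℓ - 1)) := by
      ext ⟨x, y⟩
      simp only [Finset.mem_filter, Finset.mem_product, Finset.mem_Icc, Finset.mem_image,
        Prod.mk.injEq]
      have hll : ℓ - 1 + 1 = ℓ := by omega
      constructor
      · rintro ⟨⟨⟨⟨h11, h12⟩, h21, h22⟩, hle, hev, hpos⟩, rfl⟩
        rw [hll, hcardll, Nat.even_add] at hev
        refine ⟨x, ⟨⟨h11, hle⟩, ?_⟩, rfl, rfl⟩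
        simpa using hev
      · rintro ⟨a, ⟨⟨ha1, ha2⟩, hev⟩, rfl, rfl⟩
        refine ⟨⟨⟨⟨ha1, by omega⟩, by omega, by omega⟩, ha2, ?_, by rw [hll, hcardll]; omega⟩, rfl⟩
        rw [hll, hcardll, Nat.even_add]
        simpa using hev
    rw [himg, Finset.card_image_of_injective _ (fun a b h => by simpa using h)]
    rw [hNEdef]; ring
  -- counting identity: NE = N1 + N0
  have hsplit : NE = N1 + N0 := by
    rw [hNEdef, hN1def, hN0def]
    have hunion : (Finset.Icc 1 (ℓ - 1)).filter
        (fun a => Even ((S ∩ Finset.Icc a (ℓ - 1)).card))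
        = ((Finset.Icc 1 (ℓ - 1)).filter
            (fun a => Even ((S ∩ Finset.Icc a (ℓ - 1)).card) ∧
              0 < (S ∩ Finset.Icc a (ℓ - 1)).card))
          ∪ ((Finset.Icc 1 (ℓ - 1)).filter
            (fun a => (S ∩ Finset.Icc a (ℓ - 1)).card = 0)) := by
      ext a
      simp only [Finset.mem_filter, Finset.mem_union]
      constructor
      · rintro ⟨ha, he⟩
        rcases Nat.eq_zero_or_pos ((S ∩ Finset.Icc a (ℓ - 1)).card) with h | h
        · exact Or.inr ⟨ha, h⟩
        · exact Or.inl ⟨ha, he, h⟩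
      · rintro (⟨ha, he, -⟩ | ⟨ha, h⟩)
        · exact ⟨ha, he⟩
        · exact ⟨ha, h ▸ Even.zero⟩
    rw [hunion, Finset.card_union_of_disjoint]
    rw [Finset.disjoint_left]
    rintro a ha hb
    simp only [Finset.mem_filter] at ha hb
    omega
  -- N0 = ℓ - 1 - i (m - 1)
  have hN0 : N0 = ℓ - 1 - i (m - 1) := by
    rw [hN0def]
    have heq : (Finset.Icc 1 (ℓ - 1)).filter
        (fun a => (S ∩ Finset.Icc a (ℓ - 1)).card = 0)
        = Finset.Icc (i (m - 1) + 1) (ℓ - 1) := by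
      ext a
      simp only [Finset.mem_filter, Finset.mem_Icc]
      constructor
      · rintro ⟨⟨h1, h2⟩, h3⟩
        have := (hempty a h1).1 h3
        omega
      · rintro ⟨h1, h2⟩
        have ha1 : 1 ≤ a := by omega
        exact ⟨⟨ha1, h2⟩, (hempty a ha1).2 (by omega)⟩
    rw [heq, Nat.card_Icc]; omega
  -- conclude
  rw [deltaB, deltaB]
  have halg : ∀ A B C D : ℤ, -2 * (A + B) + 2 * (C + D) = (-2 * A + 2 * C) + (-2 * B + 2 * D) :=
    fun A B C D => by ring
  rw [halg, key1, key2]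
  have hc1 : (NE : ℤ) = (N1 : ℤ) + (N0 : ℤ) := by exact_mod_cast hsplit
  have hc2 : (N0 : ℤ) = (ℓ : ℤ) - 1 - (i (m - 1) : ℤ) := by
    rw [hN0]; omega
  omega
end

section
/- Let ℓ ≥ 3 and let S = {i₁ < ⋯ < i_m} ⊆ {1,…,ℓ} with i_m = ℓ (convention i₀ = 0). In the root system of type C_ℓ, positive roots are Σ_{i=a}^{b} γ_i (1 ≤ a ≤ b ≤ ℓ), Σ_{i=a}^{ℓ−1} 2γ_i + γ_ℓ (1 ≤ a ≤ ℓ−1), and Σ_{i=a}^{b} γ_i + Σ_{i=b+1}^{ℓ−1} 2γ_i + γ_ℓ (1 ≤ a ≤ b ≤ ℓ−2); a root α = Σ n_i γ_i is compact iff Σ_{i∈S} n_i is even, and relevant if moreover Σ_{i∈S} n_i > 0. Let δᶜ ∈ ℤ^ℓ be the coefficient vector of the sum of all relevant compact positive roots. Then −δᶜ_{ℓ−1} + 2δᶜ_ℓ = S₂(m) − T₁(m), where S₂(m) = Σ_{k=1}^{⌊m/2⌋}(i_{m−2k+1} − i_{m−2k}) and T₁(m) = Σ_{k=1}^{⌊(m+1)/2⌋−1}(i_{m−2k}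 − i_{m−2k−1}). -/
/-- `n`-th coefficient of the sum of all relevant compact positive roots of type `C_ℓ`.
Positive roots are `Σ_{i=a}^{b} γ_i` (`1 ≤ a ≤ b ≤ ℓ`), `Σ_{i=a}^{ℓ−1} 2γ_i + γ_ℓ`
(`1 ≤ a ≤ ℓ−1`), and `Σ_{i=a}^{b} γ_i + Σ_{i=b+1}^{ℓ−1} 2γ_i + γ_ℓ` (`1 ≤ a ≤ b ≤ ℓ−2`);
a root `Σ nᵢγᵢ` is compact iff `Σ_{i∈S} nᵢ` is even, relevant iff moreover
`Σ_{i∈S} nᵢ > 0`. -/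
def deltaC (ℓ : ℕ) (S : Finset ℕ) (n : ℕ) : ℤ :=
  (∑ p ∈ (Finset.Icc 1 ℓ ×ˢ Finset.Icc 1 ℓ).filter
      (fun p => p.1 ≤ p.2 ∧
        Even ((S ∩ Finset.Icc p.1 p.2).card) ∧
        0 < (S ∩ Finset.Icc p.1 p.2).card),
      (if p.1 ≤ n ∧ n ≤ p.2 then (1 : ℤ) else 0))
  + (∑ a ∈ (Finset.Icc 1 (ℓ - 1)).filter
      (fun a =>
        Even (2 * (S ∩ Finset.Icc a (ℓ - 1)).card + (if ℓ ∈ S then 1 else 0)) ∧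
        0 < 2 * (S ∩ Finset.Icc a (ℓ - 1)).card + (if ℓ ∈ S then 1 else 0)),
      ((if a ≤ n ∧ n ≤ ℓ - 1 then (2 : ℤ) else 0) + (if n = ℓ then (1 : ℤ) else 0)))
  + ∑ p ∈ (Finset.Icc 1 ℓ ×ˢ Finset.Icc 1 (ℓ - 2)).filter
      (fun p => p.1 ≤ p.2 ∧
        Even ((S ∩ Finset.Icc p.1 p.2).card
          + 2 * (S ∩ Finset.Icc (p.2 + 1) (ℓ - 1)).card + (if ℓ ∈ S then 1 else 0)) ∧
        0 < (S ∩ Finset.Icc p.1 p.2).card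
          + 2 * (S ∩ Finset.Icc (p.2 + 1) (ℓ - 1)).card + (if ℓ ∈ S then 1 else 0)),
      ((if p.1 ≤ n ∧ n ≤ p.2 then (1 : ℤ) else 0)
        + (if p.2 + 1 ≤ n ∧ n ≤ ℓ - 1 then (2 : ℤ) else 0)
        + (if n = ℓ then (1 : ℤ) else 0))

namespace Stmt11Aux

open Finset

variable {ℓ m : ℕ} {i : ℕ → ℕ}

lemma imono (hmono : ∀ k ≤ m, i k < i (k + 1)) :
    ∀ {a b : ℕ}, a < b → b ≤ m → i a < i b := by
  intro a b hab hbm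
  induction b with
  | zero => omega
  | succ b ih =>
    rcases Nat.lt_succ_iff_lt_or_eq.mp hab with h | h
    · exact (ih h (by omega)).trans (hmono b (by omega))
    · subst h; exact hmono a (by omega)

lemma imono' (hmono : ∀ k ≤ m, i k < i (k + 1)) :
    ∀ {a b : ℕ}, a ≤ b → b ≤ m → i a ≤ i b := by
  intro a b hab hbm
  rcases eq_or_lt_of_le hab with rfl | h
  · exact le_rfl
  · exact (imono hmono h hbm).le

lemma card_inter (hmono : ∀ k ≤ m, i k < i (k + 1)) (a c : ℕ) :
    (((Finset.Icc 1 m).image i) ∩ Finset.Icc a c).card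
      = ((Finset.Icc 1 m).filter (fun k => a ≤ i k ∧ i k ≤ c)).card := by
  have himg : ((Finset.Icc 1 m).image i) ∩ Finset.Icc a c
      = ((Finset.Icc 1 m).filter (fun k => a ≤ i k ∧ i k ≤ c)).image i := by
    ext x
    simp only [mem_inter, mem_image, mem_filter, mem_Icc]
    constructor
    · rintro ⟨⟨k, hk, rfl⟩, h2⟩; exact ⟨k, ⟨hk, h2⟩, rfl⟩
    · rintro ⟨k, ⟨hk, h2⟩, rfl⟩; exact ⟨⟨k, hk, rfl⟩, h2⟩
  rw [himg, Finset.card_image_of_injOn]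
  intro x hx y hy hxy
  simp only [coe_filter, Set.mem_setOf_eq, mem_Icc] at hx hy
  by_contra hne
  rcases Nat.lt_or_ge x y with h | h
  · exact absurd hxy (Nat.ne_of_lt (imono hmono h hy.1.2))
  · exact absurd hxy.symm (Nat.ne_of_lt (imono hmono (by omega) hx.1.2))

lemma cardNl (hmono : ∀ k ≤ m, i k < i (k + 1)) (him : i m = ℓ)
    {j a : ℕ} (hj : j < m) (ha1 : i j < a) (ha2 : a ≤ i (j + 1)) :
    ((Finset.Icc 1 m).filter (fun k => a ≤ i k ∧ i k ≤ ℓ)).card = m - j := by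
  have heq : (Finset.Icc 1 m).filter (fun k => a ≤ i k ∧ i k ≤ ℓ)
      = Finset.Icc (j + 1) m := by
    ext k
    simp only [mem_filter, mem_Icc]
    constructor
    · rintro ⟨⟨hk1, hk2⟩, hak, _⟩
      refine ⟨?_, hk2⟩
      by_contra hc
      have hkj : k ≤ j := by omega
      have := imono' hmono hkj (by omega)
      omega
    · rintro ⟨hk1, hk2⟩
      exact ⟨⟨by omega, hk2⟩, ha2.trans (imono' hmono hk1 hk2),
        him ▸ imono' hmono hk2 le_rfl⟩
  rw [heq, Nat.card_Icc]
  omega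

lemma cardNl1 (hℓ : 1 ≤ ℓ) (hmono : ∀ k ≤ m, i k < i (k + 1)) (him : i m = ℓ)
    {j a : ℕ} (hj : j < m) (ha1 : i j < a) (ha2 : a ≤ i (j + 1)) :
    ((Finset.Icc 1 m).filter (fun k => a ≤ i k ∧ i k ≤ ℓ - 1)).card = m - 1 - j := by
  have heq : (Finset.Icc 1 m).filter (fun k => a ≤ i k ∧ i k ≤ ℓ - 1)
      = Finset.Icc (j + 1) (m - 1) := by
    ext k
    simp only [mem_filter, mem_Icc]
    constructor
    · rintro ⟨⟨hk1, hk2⟩, hak, hkl⟩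
      constructor
      · by_contra hc
        have hkj : k ≤ j := by omega
        have := imono' hmono hkj (by omega)
        omega
      · by_contra hc
        have hk : k = m := by omega
        rw [hk, him] at hkl
        omega
    · rintro ⟨hk1, hk2⟩
      have hkm : k ≤ m := by omega
      refine ⟨⟨by omega, hkm⟩, ha2.trans (imono' hmono hk1 hkm), ?_⟩
      have : i k < i m := imono hmono (by omega) le_rfl
      omega
  rw [heq, Nat.card_Icc]
  omega

lemma partition (hmono : ∀ k ≤ m, i k < i (k + 1)) (h0 : i 0 = 0) (him : i m = ℓ) :
    Finset.Icc 1 ℓ = (Finset.range m).biUnion (fun j => Finset.Icc (i j + 1) (i (j + 1))) := by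
  ext a
  simp only [mem_biUnion, mem_range, mem_Icc]
  constructor
  · rintro ⟨ha1, ha2⟩
    have hP0 : i 0 < a := by omega
    set j := Nat.findGreatest (fun k => i k < a) m with hjdef
    have hPj : i j < a :=
      Nat.findGreatest_spec (P := fun k => i k < a) (Nat.zero_le m) hP0
    have hjle : j ≤ m := Nat.findGreatest_le m
    have hjm : j < m := by
      by_contra h
      have hjm' : j = m := by omega
      rw [hjm', him] at hPj
      omega
    have hnext : ¬ i (j + 1) < a :=
      Nat.findGreatest_is_greatest (P := fun k => i k < a) (Nat.lt_succ_self j) (by omega)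
    exact ⟨j, hjm, by omega, by omega⟩
  · rintro ⟨j, hjm, ha1, ha2⟩
    have : i (j + 1) ≤ i m := imono' hmono (by omega) le_rfl
    omega

lemma blocks_disj (hmono : ∀ k ≤ m, i k < i (k + 1)) :
    ∀ j ∈ Finset.range m, ∀ j' ∈ Finset.range m, j ≠ j' →
      Disjoint (Finset.Icc (i j + 1) (i (j + 1))) (Finset.Icc (i j' + 1) (i (j' + 1))) := by
  intro j hj j' hj' hne
  simp only [mem_range] at hj hj'
  rw [Finset.disjoint_left]
  intro x hx hx'
  simp only [mem_Icc] at hx hx'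
  rcases Nat.lt_or_ge j j' with h | h
  · have : i (j + 1) ≤ i j' := imono' hmono (by omega) (by omega)
    omega
  · have : i (j' + 1) ≤ i j := imono' hmono (by omega) (by omega)
    omega

lemma count_filter (hmono : ∀ k ≤ m, i k < i (k + 1)) (h0 : i 0 = 0) (him : i m = ℓ)
    (P : ℕ → Prop) [DecidablePred P] (Q : ℕ → Prop) [DecidablePred Q]
    (hconst : ∀ j < m, ∀ a, i j < a → a ≤ i (j + 1) → (P a ↔ Q j)) :
    ((Finset.Icc 1 ℓ).filter P).card
      = ∑ j ∈ Finset.range m, if Q j then i (j + 1) - i j else 0 := by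
  rw [partition hmono h0 him, Finset.filter_biUnion, Finset.card_biUnion]
  · refine Finset.sum_congr rfl fun j hj => ?_
    simp only [mem_range] at hj
    have hP : ∀ a ∈ Finset.Icc (i j + 1) (i (j + 1)), P a ↔ Q j := by
      intro a ha
      simp only [mem_Icc] at ha
      exact hconst j hj a (by omega) ha.2
    by_cases hQ : Q j
    · rw [if_pos hQ, Finset.filter_true_of_mem (fun a ha => (hP a ha).mpr hQ), Nat.card_Icc]
      have : i j ≤ i (j + 1) := (hmono j (by omega)).le
      omega
    · rw [if_neg hQ, Finset.filter_false_of_mem (fun a ha => fun hp => hQ ((hP a ha).mp hp)),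
        Finset.card_empty]
  · intro j hj j' hj' hne
    exact Finset.disjoint_filter_filter (blocks_disj hmono j hj j' hj' hne)

lemma reindexA :
    ∑ j ∈ Finset.range m, (if Even (m - j) then i (j + 1) - i j else 0)
      = ∑ k ∈ Finset.Icc 1 (m / 2), (i (m - 2 * k + 1) - i (m - 2 * k)) := by
  rw [← Finset.sum_filter]
  refine Finset.sum_nbij' (fun j => (m - j) / 2) (fun k => m - 2 * k) ?_ ?_ ?_ ?_ ?_
  · intro j hj
    simp only [mem_filter, mem_range, Nat.even_iff] at hj
    simp only [mem_Icc]
    omega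
  · intro k hk
    simp only [mem_Icc] at hk
    simp only [mem_filter, mem_range, Nat.even_iff]
    omega
  · intro j hj
    simp only [mem_filter, mem_range, Nat.even_iff] at hj
    beta_reduce
    omega
  · intro k hk
    simp only [mem_Icc] at hk
    beta_reduce
    omega
  · intro j hj
    simp only [mem_filter, mem_range, Nat.even_iff] at hj
    have h1 : m - 2 * ((m - j) / 2) = j := by omega
    rw [h1]

lemma reindexB :
    ∑ j ∈ Finset.range m, (if Even (m - 1 - j) ∧ 0 < m - 1 - j then i (j + 1) - i j else 0)
      = ∑ k ∈ Finset.Icc 1 ((m + 1) / 2 - 1), (i (m - 2 * k) - i (m - 2 * k - 1)) := by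
  rw [← Finset.sum_filter]
  refine Finset.sum_nbij' (fun j => (m - 1 - j) / 2) (fun k => m - 2 * k - 1) ?_ ?_ ?_ ?_ ?_
  · intro j hj
    simp only [mem_filter, mem_range, Nat.even_iff] at hj
    simp only [mem_Icc]
    omega
  · intro k hk
    simp only [mem_Icc] at hk
    simp only [mem_filter, mem_range, Nat.even_iff]
    omega
  · intro j hj
    simp only [mem_filter, mem_range, Nat.even_iff] at hj
    beta_reduce
    omega
  · intro k hk
    simp only [mem_Icc] at hk
    beta_reduce
    omega
  · intro j hj
    simp only [mem_filter, mem_range, Nat.even_iff] at hj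
    have h1 : m - 2 * ((m - 1 - j) / 2) = j + 1 := by omega
    rw [h1]
    simp

end Stmt11Aux

open Finset Stmt11Aux in
/-- type `C_ℓ`, `i_m = ℓ`: `−δᶜ_{ℓ−1} + 2δᶜ_ℓ = S₂(m) − T₁(m)`. -/
theorem stmt11 (ℓ m : ℕ) (hℓ : 3 ≤ ℓ) (hm : 1 ≤ m)
    (i : ℕ → ℕ) (h0 : i 0 = 0)
    (hmono : ∀ k ≤ m, i k < i (k + 1)) (him : i m = ℓ) :
    -(deltaC ℓ ((Finset.Icc 1 m).image i) (ℓ - 1))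
      + 2 * deltaC ℓ ((Finset.Icc 1 m).image i) ℓ
      = (∑ k ∈ Finset.Icc 1 (m / 2),
          ((i (m - 2 * k + 1) : ℤ) - (i (m - 2 * k) : ℤ)))
        - (∑ k ∈ Finset.Icc 1 ((m + 1) / 2 - 1),
          ((i (m - 2 * k) : ℤ) - (i (m - 2 * k - 1) : ℤ))) := by
  set S : Finset ℕ := (Finset.Icc 1 m).image i with hS
  have hlS : ℓ ∈ S := Finset.mem_image.mpr ⟨m, Finset.mem_Icc.mpr ⟨hm, le_rfl⟩, him⟩
  -- cardinalities of intersections on blocks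
  have hNl : ∀ j < m, ∀ a, i j < a → a ≤ i (j + 1) →
      (S ∩ Finset.Icc a ℓ).card = m - j := by
    intro j hj a h1 h2
    rw [hS, card_inter hmono]
    exact cardNl hmono him hj h1 h2
  have hNl1 : ∀ j < m, ∀ a, i j < a → a ≤ i (j + 1) →
      (S ∩ Finset.Icc a (ℓ - 1)).card = m - 1 - j := by
    intro j hj a h1 h2
    rw [hS, card_inter hmono]
    exact cardNl1 (by omega) hmono him hj h1 h2
  -- ¬ cond ℓ ℓ
  have hcll : ¬ ((ℓ : ℕ) ≤ ℓ ∧ Even ((S ∩ Finset.Icc ℓ ℓ).card) ∧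
      0 < (S ∩ Finset.Icc ℓ ℓ).card) := by
    have h1 : i (m - 1) < ℓ := by
      have h := hmono (m - 1) (by omega)
      have he : m - 1 + 1 = m := by omega
      rw [he, him] at h
      exact h
    have hN : (S ∩ Finset.Icc ℓ ℓ).card = m - (m - 1) := by
      refine hNl (m - 1) (by omega) ℓ h1 ?_
      have he : m - 1 + 1 = m := by omega
      rw [he, him]
    rintro ⟨-, he, -⟩
    rw [hN] at he
    have : m - (m - 1) = 1 := by omega
    rw [this] at he
    exact (Nat.not_even_iff_odd.mpr odd_one) he
  -- second sums vanish
  have hf2 : (Finset.Icc 1 (ℓ - 1)).filter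
      (fun a =>
        Even (2 * (S ∩ Finset.Icc a (ℓ - 1)).card + (if ℓ ∈ S then 1 else 0)) ∧
        0 < 2 * (S ∩ Finset.Icc a (ℓ - 1)).card + (if ℓ ∈ S then 1 else 0)) = ∅ := by
    rw [Finset.filter_eq_empty_iff]
    rintro a - ⟨he, -⟩
    rw [if_pos hlS] at he
    exact (Nat.even_add_one.mp he) (even_two_mul _)
  -- third sums cancel
  have h3mem : ∀ p ∈ (Finset.Icc 1 ℓ ×ˢ Finset.Icc 1 (ℓ - 2)).filter
      (fun p => p.1 ≤ p.2 ∧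
        Even ((S ∩ Finset.Icc p.1 p.2).card
          + 2 * (S ∩ Finset.Icc (p.2 + 1) (ℓ - 1)).card + (if ℓ ∈ S then 1 else 0)) ∧
        0 < (S ∩ Finset.Icc p.1 p.2).card
          + 2 * (S ∩ Finset.Icc (p.2 + 1) (ℓ - 1)).card + (if ℓ ∈ S then 1 else 0)),
      p.2 ≤ ℓ - 2 := by
    intro p hp
    simp only [Finset.mem_filter, Finset.mem_product, Finset.mem_Icc] at hp
    exact hp.1.2.2
  have key3 :
      -(∑ p ∈ (Finset.Icc 1 ℓ ×ˢ Finset.Icc 1 (ℓ - 2)).filter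
        (fun p => p.1 ≤ p.2 ∧
          Even ((S ∩ Finset.Icc p.1 p.2).card
            + 2 * (S ∩ Finset.Icc (p.2 + 1) (ℓ - 1)).card + (if ℓ ∈ S then 1 else 0)) ∧
          0 < (S ∩ Finset.Icc p.1 p.2).card
            + 2 * (S ∩ Finset.Icc (p.2 + 1) (ℓ - 1)).card + (if ℓ ∈ S then 1 else 0)),
        ((if p.1 ≤ ℓ - 1 ∧ ℓ - 1 ≤ p.2 then (1 : ℤ) else 0)
          + (if p.2 + 1 ≤ ℓ - 1 ∧ ℓ - 1 ≤ ℓ - 1 then (2 : ℤ) else 0)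
          + (if ℓ - 1 = ℓ then (1 : ℤ) else 0)))
      + 2 * (∑ p ∈ (Finset.Icc 1 ℓ ×ˢ Finset.Icc 1 (ℓ - 2)).filter
        (fun p => p.1 ≤ p.2 ∧
          Even ((S ∩ Finset.Icc p.1 p.2).card
            + 2 * (S ∩ Finset.Icc (p.2 + 1) (ℓ - 1)).card + (if ℓ ∈ S then 1 else 0)) ∧
          0 < (S ∩ Finset.Icc p.1 p.2).card
            + 2 * (S ∩ Finset.Icc (p.2 + 1) (ℓ - 1)).card + (if ℓ ∈ S then 1 else 0)),
        ((if p.1 ≤ ℓ ∧ ℓ ≤ p.2 then (1 : ℤ) else 0)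
          + (if p.2 + 1 ≤ ℓ ∧ ℓ ≤ ℓ - 1 then (2 : ℤ) else 0)
          + (1 : ℤ))) = 0 := by
    rw [show (∑ p ∈ (Finset.Icc 1 ℓ ×ˢ Finset.Icc 1 (ℓ - 2)).filter
        (fun p => p.1 ≤ p.2 ∧
          Even ((S ∩ Finset.Icc p.1 p.2).card
            + 2 * (S ∩ Finset.Icc (p.2 + 1) (ℓ - 1)).card + (if ℓ ∈ S then 1 else 0)) ∧
          0 < (S ∩ Finset.Icc p.1 p.2).card
            + 2 * (S ∩ Finset.Icc (p.2 + 1) (ℓ - 1)).card + (if ℓ ∈ S then 1 else 0)),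
        ((if p.1 ≤ ℓ - 1 ∧ ℓ - 1 ≤ p.2 then (1 : ℤ) else 0)
          + (if p.2 + 1 ≤ ℓ - 1 ∧ ℓ - 1 ≤ ℓ - 1 then (2 : ℤ) else 0)
          + (if ℓ - 1 = ℓ then (1 : ℤ) else 0)))
        = ∑ p ∈ (Finset.Icc 1 ℓ ×ˢ Finset.Icc 1 (ℓ - 2)).filter
        (fun p => p.1 ≤ p.2 ∧
          Even ((S ∩ Finset.Icc p.1 p.2).card
            + 2 * (S ∩ Finset.Icc (p.2 + 1) (ℓ - 1)).card + (if ℓ ∈ S then 1 else 0)) ∧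
          0 < (S ∩ Finset.Icc p.1 p.2).card
            + 2 * (S ∩ Finset.Icc (p.2 + 1) (ℓ - 1)).card + (if ℓ ∈ S then 1 else 0)),
        (2 : ℤ) from Finset.sum_congr rfl fun p hp => by
          have hb := h3mem p hp
          rw [if_neg (by omega), if_pos (by omega), if_neg (by omega)]
          norm_num]
    rw [show (∑ p ∈ (Finset.Icc 1 ℓ ×ˢ Finset.Icc 1 (ℓ - 2)).filter
        (fun p => p.1 ≤ p.2 ∧
          Even ((S ∩ Finset.Icc p.1 p.2).card
            + 2 * (S ∩ Finset.Icc (p.2 + 1) (ℓ - 1)).card + (if ℓ ∈ S then 1 else 0)) ∧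
          0 < (S ∩ Finset.Icc p.1 p.2).card
            + 2 * (S ∩ Finset.Icc (p.2 + 1) (ℓ - 1)).card + (if ℓ ∈ S then 1 else 0)),
        ((if p.1 ≤ ℓ ∧ ℓ ≤ p.2 then (1 : ℤ) else 0)
          + (if p.2 + 1 ≤ ℓ ∧ ℓ ≤ ℓ - 1 then (2 : ℤ) else 0)
          + (1 : ℤ)))
        = ∑ p ∈ (Finset.Icc 1 ℓ ×ˢ Finset.Icc 1 (ℓ - 2)).filter
        (fun p => p.1 ≤ p.2 ∧
          Even ((S ∩ Finset.Icc p.1 p.2).card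
            + 2 * (S ∩ Finset.Icc (p.2 + 1) (ℓ - 1)).card + (if ℓ ∈ S then 1 else 0)) ∧
          0 < (S ∩ Finset.Icc p.1 p.2).card
            + 2 * (S ∩ Finset.Icc (p.2 + 1) (ℓ - 1)).card + (if ℓ ∈ S then 1 else 0)),
        (1 : ℤ) from Finset.sum_congr rfl fun p hp => by
          have hb := h3mem p hp
          rw [if_neg (by omega), if_neg (by omega)]
          norm_num]
    rw [Finset.sum_const, Finset.sum_const, nsmul_eq_mul, nsmul_eq_mul]
    ring
  -- first sums
  have key1 :
      -(∑ p ∈ (Finset.Icc 1 ℓ ×ˢ Finset.Icc 1 ℓ).filter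
        (fun p => p.1 ≤ p.2 ∧
          Even ((S ∩ Finset.Icc p.1 p.2).card) ∧
          0 < (S ∩ Finset.Icc p.1 p.2).card),
        (if p.1 ≤ ℓ - 1 ∧ ℓ - 1 ≤ p.2 then (1 : ℤ) else 0))
      + 2 * (∑ p ∈ (Finset.Icc 1 ℓ ×ˢ Finset.Icc 1 ℓ).filter
        (fun p => p.1 ≤ p.2 ∧
          Even ((S ∩ Finset.Icc p.1 p.2).card) ∧
          0 < (S ∩ Finset.Icc p.1 p.2).card),
        (if p.1 ≤ ℓ ∧ ℓ ≤ p.2 then (1 : ℤ) else 0))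
      = (((Finset.Icc 1 ℓ).filter
          (fun a => a ≤ ℓ ∧ Even ((S ∩ Finset.Icc a ℓ).card) ∧
            0 < (S ∩ Finset.Icc a ℓ).card)).card : ℤ)
        - (((Finset.Icc 1 ℓ).filter
          (fun a => a ≤ ℓ - 1 ∧ Even ((S ∩ Finset.Icc a (ℓ - 1)).card) ∧
            0 < (S ∩ Finset.Icc a (ℓ - 1)).card)).card : ℤ) := by
    rw [← Finset.sum_neg_distrib, Finset.mul_sum, ← Finset.sum_add_distrib,
      Finset.sum_filter, Finset.sum_product]
    have inner : ∀ a ∈ Finset.Icc 1 ℓ,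
        (∑ b ∈ Finset.Icc 1 ℓ,
          if a ≤ b ∧ Even ((S ∩ Finset.Icc a b).card) ∧ 0 < (S ∩ Finset.Icc a b).card then
            (-(if a ≤ ℓ - 1 ∧ ℓ - 1 ≤ b then (1 : ℤ) else 0)
              + 2 * (if a ≤ ℓ ∧ ℓ ≤ b then (1 : ℤ) else 0))
          else 0)
        = (if a ≤ ℓ ∧ Even ((S ∩ Finset.Icc a ℓ).card) ∧ 0 < (S ∩ Finset.Icc a ℓ).card
            then (1 : ℤ) else 0)
          - (if a ≤ ℓ - 1 ∧ Even ((S ∩ Finset.Icc a (ℓ - 1)).card) ∧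
              0 < (S ∩ Finset.Icc a (ℓ - 1)).card then (1 : ℤ) else 0) := by
      intro a ha
      simp only [Finset.mem_Icc] at ha
      have hsub : ({ℓ - 1, ℓ} : Finset ℕ) ⊆ Finset.Icc 1 ℓ := by
        intro x hx
        simp only [Finset.mem_insert, Finset.mem_singleton] at hx
        simp only [Finset.mem_Icc]
        omega
      rw [← Finset.sum_subset hsub ?_]
      · rw [Finset.sum_pair (show (ℓ : ℕ) - 1 ≠ ℓ by omega)]
        have t1 : (if a ≤ ℓ - 1 ∧ Even ((S ∩ Finset.Icc a (ℓ - 1)).card) ∧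
              0 < (S ∩ Finset.Icc a (ℓ - 1)).card then
            (-(if a ≤ ℓ - 1 ∧ ℓ - 1 ≤ ℓ - 1 then (1 : ℤ) else 0)
              + 2 * (if a ≤ ℓ ∧ ℓ ≤ ℓ - 1 then (1 : ℤ) else 0))
          else 0)
            = -(if a ≤ ℓ - 1 ∧ Even ((S ∩ Finset.Icc a (ℓ - 1)).card) ∧
              0 < (S ∩ Finset.Icc a (ℓ - 1)).card then (1 : ℤ) else 0) := by
          by_cases hc : a ≤ ℓ - 1 ∧ Even ((S ∩ Finset.Icc a (ℓ - 1)).card) ∧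
              0 < (S ∩ Finset.Icc a (ℓ - 1)).card
          · rw [if_pos hc, if_pos hc, if_pos ⟨hc.1, le_rfl⟩, if_neg (by omega)]
            ring
          · rw [if_neg hc, if_neg hc]
            ring
        have t2 : (if a ≤ ℓ ∧ Even ((S ∩ Finset.Icc a ℓ).card) ∧
              0 < (S ∩ Finset.Icc a ℓ).card then
            (-(if a ≤ ℓ - 1 ∧ ℓ - 1 ≤ ℓ then (1 : ℤ) else 0)
              + 2 * (if a ≤ ℓ ∧ ℓ ≤ ℓ then (1 : ℤ) else 0))
          else 0)
            = (if a ≤ ℓ ∧ Even ((S ∩ Finset.Icc a ℓ).card) ∧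
              0 < (S ∩ Finset.Icc a ℓ).card then (1 : ℤ) else 0) := by
          by_cases hae : a = ℓ
          · subst hae
            rw [if_neg hcll, if_neg hcll]
          · by_cases hc : a ≤ ℓ ∧ Even ((S ∩ Finset.Icc a ℓ).card) ∧
                0 < (S ∩ Finset.Icc a ℓ).card
            · rw [if_pos hc, if_pos hc, if_pos ⟨by omega, by omega⟩, if_pos ⟨hc.1, le_rfl⟩]
              ring
            · rw [if_neg hc, if_neg hc]
        rw [t1, t2]
        ring
      · intro b hb hnb
        simp only [Finset.mem_Icc] at hb
        simp only [Finset.mem_insert, Finset.mem_singleton] at hnb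
        push_neg at hnb
        have hg : (-(if a ≤ ℓ - 1 ∧ ℓ - 1 ≤ b then (1 : ℤ) else 0)
            + 2 * (if a ≤ ℓ ∧ ℓ ≤ b then (1 : ℤ) else 0)) = 0 := by
          rw [if_neg (by omega), if_neg (by omega)]
          ring
        rw [hg, ite_self]
    rw [Finset.sum_congr rfl inner, Finset.sum_sub_distrib, Finset.sum_boole, Finset.sum_boole]
  -- counting A and B
  have hconstA : ∀ j < m, ∀ a, i j < a → a ≤ i (j + 1) →
      ((a ≤ ℓ ∧ Even ((S ∩ Finset.Icc a ℓ).card) ∧ 0 < (S ∩ Finset.Icc a ℓ).card)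
        ↔ Even (m - j)) := by
    intro j hj a h1 h2'
    have hN := hNl j hj a h1 h2'
    have haℓ : a ≤ ℓ := by
      have h4 : i (j + 1) ≤ i m := imono' hmono (by omega) le_rfl
      omega
    rw [hN]
    constructor
    · rintro ⟨-, he, -⟩; exact he
    · intro he; exact ⟨haℓ, he, by omega⟩
  have hconstB : ∀ j < m, ∀ a, i j < a → a ≤ i (j + 1) →
      ((a ≤ ℓ - 1 ∧ Even ((S ∩ Finset.Icc a (ℓ - 1)).card) ∧
          0 < (S ∩ Finset.Icc a (ℓ - 1)).card)
        ↔ (Even (m - 1 - j) ∧ 0 < m - 1 - j)) := by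
    intro j hj a h1 h2'
    have hN := hNl1 j hj a h1 h2'
    rw [hN]
    constructor
    · rintro ⟨-, he, hp⟩; exact ⟨he, hp⟩
    · rintro ⟨he, hp⟩
      refine ⟨?_, he, hp⟩
      have h3 : i (j + 1) ≤ i (m - 1) := imono' hmono (by omega) (by omega)
      have h4 : i (m - 1) < i m := imono hmono (by omega) le_rfl
      omega
  have hA := count_filter hmono h0 him
    (fun a => a ≤ ℓ ∧ Even ((S ∩ Finset.Icc a ℓ).card) ∧ 0 < (S ∩ Finset.Icc a ℓ).card)
    (fun j => Even (m - j)) hconstA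
  have hB := count_filter hmono h0 him
    (fun a => a ≤ ℓ - 1 ∧ Even ((S ∩ Finset.Icc a (ℓ - 1)).card) ∧
      0 < (S ∩ Finset.Icc a (ℓ - 1)).card)
    (fun j => Even (m - 1 - j) ∧ 0 < m - 1 - j) hconstB
  have hAZ : ((((Finset.Icc 1 ℓ).filter
      (fun a => a ≤ ℓ ∧ Even ((S ∩ Finset.Icc a ℓ).card) ∧
        0 < (S ∩ Finset.Icc a ℓ).card)).card : ℕ) : ℤ)
      = ∑ k ∈ Finset.Icc 1 (m / 2),
          ((i (m - 2 * k + 1) : ℤ) - (i (m - 2 * k) : ℤ)) := by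
    rw [hA, reindexA, Nat.cast_sum]
    refine Finset.sum_congr rfl fun k hk => ?_
    exact Nat.cast_sub (hmono (m - 2 * k) (by omega)).le
  have hBZ : ((((Finset.Icc 1 ℓ).filter
      (fun a => a ≤ ℓ - 1 ∧ Even ((S ∩ Finset.Icc a (ℓ - 1)).card) ∧
        0 < (S ∩ Finset.Icc a (ℓ - 1)).card)).card : ℕ) : ℤ)
      = ∑ k ∈ Finset.Icc 1 ((m + 1) / 2 - 1),
          ((i (m - 2 * k) : ℤ) - (i (m - 2 * k - 1) : ℤ)) := by
    rw [hB, reindexB, Nat.cast_sum]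
    refine Finset.sum_congr rfl fun k hk => ?_
    simp only [Finset.mem_Icc] at hk
    have he : m - 2 * k - 1 + 1 = m - 2 * k := by omega
    have hle : i (m - 2 * k - 1) ≤ i (m - 2 * k) := by
      have h := (hmono (m - 2 * k - 1) (by omega)).le
      rwa [he] at h
    exact Nat.cast_sub hle
  -- assemble
  show
    -((∑ p ∈ (Finset.Icc 1 ℓ ×ˢ Finset.Icc 1 ℓ).filter
        (fun p => p.1 ≤ p.2 ∧
          Even ((S ∩ Finset.Icc p.1 p.2).card) ∧
          0 < (S ∩ Finset.Icc p.1 p.2).card),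
        (if p.1 ≤ ℓ - 1 ∧ ℓ - 1 ≤ p.2 then (1 : ℤ) else 0))
      + (∑ a ∈ (Finset.Icc 1 (ℓ - 1)).filter
        (fun a =>
          Even (2 * (S ∩ Finset.Icc a (ℓ - 1)).card + (if ℓ ∈ S then 1 else 0)) ∧
          0 < 2 * (S ∩ Finset.Icc a (ℓ - 1)).card + (if ℓ ∈ S then 1 else 0)),
        ((if a ≤ ℓ - 1 ∧ ℓ - 1 ≤ ℓ - 1 then (2 : ℤ) else 0)
          + (if ℓ - 1 = ℓ then (1 : ℤ) else 0)))
      + ∑ p ∈ (Finset.Icc 1 ℓ ×ˢ Finset.Icc 1 (ℓ - 2)).filter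
        (fun p => p.1 ≤ p.2 ∧
          Even ((S ∩ Finset.Icc p.1 p.2).card
            + 2 * (S ∩ Finset.Icc (p.2 + 1) (ℓ - 1)).card + (if ℓ ∈ S then 1 else 0)) ∧
          0 < (S ∩ Finset.Icc p.1 p.2).card
            + 2 * (S ∩ Finset.Icc (p.2 + 1) (ℓ - 1)).card + (if ℓ ∈ S then 1 else 0)),
        ((if p.1 ≤ ℓ - 1 ∧ ℓ - 1 ≤ p.2 then (1 : ℤ) else 0)
          + (if p.2 + 1 ≤ ℓ - 1 ∧ ℓ - 1 ≤ ℓ - 1 then (2 : ℤ) else 0)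
          + (if ℓ - 1 = ℓ then (1 : ℤ) else 0)))
    + 2 * ((∑ p ∈ (Finset.Icc 1 ℓ ×ˢ Finset.Icc 1 ℓ).filter
        (fun p => p.1 ≤ p.2 ∧
          Even ((S ∩ Finset.Icc p.1 p.2).card) ∧
          0 < (S ∩ Finset.Icc p.1 p.2).card),
        (if p.1 ≤ ℓ ∧ ℓ ≤ p.2 then (1 : ℤ) else 0))
      + (∑ a ∈ (Finset.Icc 1 (ℓ - 1)).filter
        (fun a =>
          Even (2 * (S ∩ Finset.Icc a (ℓ - 1)).card + (if ℓ ∈ S then 1 else 0)) ∧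
          0 < 2 * (S ∩ Finset.Icc a (ℓ - 1)).card + (if ℓ ∈ S then 1 else 0)),
        ((if a ≤ ℓ ∧ ℓ ≤ ℓ - 1 then (2 : ℤ) else 0) + (if ℓ = ℓ then (1 : ℤ) else 0)))
      + ∑ p ∈ (Finset.Icc 1 ℓ ×ˢ Finset.Icc 1 (ℓ - 2)).filter
        (fun p => p.1 ≤ p.2 ∧
          Even ((S ∩ Finset.Icc p.1 p.2).card
            + 2 * (S ∩ Finset.Icc (p.2 + 1) (ℓ - 1)).card + (if ℓ ∈ S then 1 else 0)) ∧
          0 < (S ∩ Finset.Icc p.1 p.2).card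
            + 2 * (S ∩ Finset.Icc (p.2 + 1) (ℓ - 1)).card + (if ℓ ∈ S then 1 else 0)),
        ((if p.1 ≤ ℓ ∧ ℓ ≤ p.2 then (1 : ℤ) else 0)
          + (if p.2 + 1 ≤ ℓ ∧ ℓ ≤ ℓ - 1 then (2 : ℤ) else 0)
          + (if ℓ = ℓ then (1 : ℤ) else 0)))
    = (∑ k ∈ Finset.Icc 1 (m / 2),
          ((i (m - 2 * k + 1) : ℤ) - (i (m - 2 * k) : ℤ)))
        - (∑ k ∈ Finset.Icc 1 ((m + 1) / 2 - 1),
          ((i (m - 2 * k) : ℤ) - (i (m - 2 * k - 1) : ℤ)))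
  rw [hf2]
  simp only [Finset.sum_empty, eq_self_iff_true, if_true]
  rw [← hAZ, ← hBZ]
  linear_combination key1 + key3
end

section
/- Let ℓ ≥ 3 and let S = {i₁ < ⋯ < i_m} ⊆ {1,…,ℓ} with i_m = ℓ−1 and ℓ ∉ S (convention i₀ = 0, so i_{m−1} denotes the predecessor of ℓ−1 in S, or 0). In the root system of type C_ℓ with compactness and relevance defined by the parity rule (α = Σ n_i γ_i is compact iff Σ_{i∈S} n_i is even; relevant iff moreover Σ_{i∈S} n_i > 0), let δᶜ ∈ ℤ^ℓ be the coefficient vector of the sum of all relevant compact positive roots. Then −δᶜ_{ℓ−2} + 2δᶜ_{ℓ−1} − 2δᶜ_ℓ = ℓ − i_{m−1}. -/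
private lemma combine3 {α : Type*} (s : Finset α) (f g h : α → ℤ) :
    -(∑ x ∈ s, f x) + 2*(∑ x ∈ s, g x) - 2*(∑ x ∈ s, h x)
      = ∑ x ∈ s, (-f x + 2*g x - 2*h x) := by
  rw [Finset.sum_sub_distrib, Finset.sum_add_distrib, Finset.sum_neg_distrib,
    Finset.mul_sum, Finset.mul_sum]

set_option maxHeartbeats 1000000 in
/-- type `C_ℓ`, `i_m = ℓ−1`, `ℓ ∉ S`:
`−δᶜ_{ℓ−2} + 2δᶜ_{ℓ−1} − 2δᶜ_ℓ = ℓ − i_{m−1}`. -/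
theorem stmt12 (ℓ m : ℕ) (hℓ : 3 ≤ ℓ) (hm : 1 ≤ m)
    (i : ℕ → ℕ) (h0 : i 0 = 0)
    (hmono : ∀ k ≤ m, i k < i (k + 1)) (him : i m = ℓ - 1)
    (hnot : ℓ ∉ (Finset.Icc 1 m).image i) :
    -(deltaC ℓ ((Finset.Icc 1 m).image i) (ℓ - 2))
      + 2 * deltaC ℓ ((Finset.Icc 1 m).image i) (ℓ - 1)
      - 2 * deltaC ℓ ((Finset.Icc 1 m).image i) ℓ
      = (ℓ : ℤ) - (i (m - 1) : ℤ) := by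
  obtain ⟨L, rfl⟩ : ∃ L, ℓ = L + 3 := ⟨ℓ - 3, by omega⟩
  set S := (Finset.Icc 1 m).image i with hS
  have him' : i m = L + 2 := by omega
  have hmono2 : ∀ j k, j ≤ k → k ≤ m → i j ≤ i k := by
    intro j k hjk hkm
    induction k with
    | zero => have : j = 0 := by omega
              subst this; exact le_rfl
    | succ n ih =>
      by_cases hj : j = n + 1
      · subst hj; exact le_rfl
      · exact le_trans (ih (by omega) (by omega)) (le_of_lt (hmono n (by omega)))
  have hstrict : ∀ j k, j < k → k ≤ m → i j < i k := by
    intro j k hjk hkm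
    have h1 : i j ≤ i (k - 1) := hmono2 j (k - 1) (by omega) (by omega)
    have h2 : i (k - 1) < i k := by
      have := hmono (k - 1) (by omega)
      rwa [show k - 1 + 1 = k from by omega] at this
    omega
  have hmemS : ∀ x ∈ S, 1 ≤ x ∧ x ≤ L + 2 := by
    intro x hx
    rw [hS, Finset.mem_image] at hx
    obtain ⟨k, hk, rfl⟩ := hx
    rw [Finset.mem_Icc] at hk
    have h1 := hstrict 0 k (by omega) (by omega)
    have h2 := hmono2 k m (by omega) le_rfl
    omega
  have hl2 : L + 2 ∈ S := by
    rw [hS, Finset.mem_image]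
    exact ⟨m, Finset.mem_Icc.mpr ⟨hm, le_rfl⟩, him'⟩
  set p := i (m - 1) with hp
  have hpL : p ≤ L + 1 := by
    have := hmono (m - 1) (by omega)
    rw [show m - 1 + 1 = m from by omega, him'] at this
    omega
  have hkey : ∀ a, 1 ≤ a → (0 < (S ∩ Finset.Icc a (L + 1)).card ↔ a ≤ p) := by
    intro a ha
    rw [Finset.card_pos]
    constructor
    · rintro ⟨x, hx⟩
      rw [Finset.mem_inter] at hx
      obtain ⟨hx1, hx2⟩ := hx
      rw [Finset.mem_Icc] at hx2
      rw [hS, Finset.mem_image] at hx1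
      obtain ⟨k, hk, rfl⟩ := hx1
      rw [Finset.mem_Icc] at hk
      have hkm : k ≤ m - 1 := by
        by_contra hc
        have hkm' : k = m := by omega
        rw [hkm', him'] at hx2
        omega
      have := hmono2 k (m - 1) hkm (by omega)
      omega
    · intro hap
      refine ⟨p, Finset.mem_inter.mpr ⟨?_, Finset.mem_Icc.mpr ⟨hap, hpL⟩⟩⟩
      rcases Nat.lt_or_ge m 2 with h2 | h2
      · exfalso
        have hm1 : m = 1 := by omega
        have : p = 0 := by rw [hp, hm1]; simpa using h0
        omega
      · rw [hS, Finset.mem_image]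
        exact ⟨m - 1, Finset.mem_Icc.mpr ⟨by omega, by omega⟩, rfl⟩
  have c12 : ∀ a, a ≤ L + 2 →
      (S ∩ Finset.Icc a (L + 2)).card = (S ∩ Finset.Icc a (L + 1)).card + 1 := by
    intro a ha
    have h1 : Finset.Icc a (L + 2) = insert (L + 2) (Finset.Icc a (L + 1)) := by
      ext x
      simp only [Finset.mem_Icc, Finset.mem_insert]
      omega
    rw [h1, Finset.inter_insert_of_mem hl2, Finset.card_insert_of_notMem]
    simp only [Finset.mem_inter, Finset.mem_Icc]
    omega
  have c13 : ∀ a, (S ∩ Finset.Icc a (L + 3)).card = (S ∩ Finset.Icc a (L + 2)).card := by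
    intro a
    congr 1
    ext x
    simp only [Finset.mem_inter, Finset.mem_Icc]
    constructor
    · rintro ⟨h1, h2, h3⟩
      exact ⟨h1, h2, (hmemS x h1).2⟩
    · rintro ⟨h1, h2, h3⟩
      exact ⟨h1, h2, by omega⟩
  have c22 : (S ∩ Finset.Icc (L + 2) (L + 2)).card = 1 := by
    rw [Finset.Icc_self, Finset.inter_singleton_of_mem hl2, Finset.card_singleton]
  have c33 : (S ∩ Finset.Icc (L + 3) (L + 3)).card = 0 := by
    rw [Finset.Icc_self, Finset.inter_singleton_of_notMem hnot, Finset.card_empty]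
  unfold deltaC
  simp only [show L + 3 - 2 = L + 1 from by omega, show L + 3 - 1 = L + 2 from by omega,
    if_neg hnot, add_zero, le_refl, and_true, and_false, if_true, if_false, zero_add,
    eq_false (show ¬(L + 1 = L + 3) from by omega),
    eq_false (show ¬(L + 2 = L + 3) from by omega),
    eq_false (show ¬(L + 3 ≤ L + 2) from by omega),
    eq_true (show L + 1 ≤ L + 2 from by omega),
    eq_self_iff_true]

  set F1 := Finset.filter
      (fun p : ℕ × ℕ => p.1 ≤ p.2 ∧ Even (S ∩ Finset.Icc p.1 p.2).card ∧
        0 < (S ∩ Finset.Icc p.1 p.2).card)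
      (Finset.Icc 1 (L + 3) ×ˢ Finset.Icc 1 (L + 3)) with hF1
  set F2 := Finset.filter
      (fun a => Even (2 * (S ∩ Finset.Icc a (L + 2)).card) ∧
        0 < 2 * (S ∩ Finset.Icc a (L + 2)).card)
      (Finset.Icc 1 (L + 2)) with hF2
  set F3 := Finset.filter
      (fun p : ℕ × ℕ => p.1 ≤ p.2 ∧
        Even ((S ∩ Finset.Icc p.1 p.2).card + 2 * (S ∩ Finset.Icc (p.2 + 1) (L + 2)).card) ∧
        0 < (S ∩ Finset.Icc p.1 p.2).card + 2 * (S ∩ Finset.Icc (p.2 + 1) (L + 2)).card)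
      (Finset.Icc 1 (L + 3) ×ˢ Finset.Icc 1 (L + 1)) with hF3
  have e1 : -(∑ x ∈ F1, if x.1 ≤ L + 1 ∧ L + 1 ≤ x.2 then (1:ℤ) else 0)
      + 2*(∑ x ∈ F1, if x.1 ≤ L + 2 ∧ L + 2 ≤ x.2 then (1:ℤ) else 0)
      - 2*(∑ x ∈ F1, if x.1 ≤ L + 3 ∧ L + 3 ≤ x.2 then (1:ℤ) else 0)
      = -(∑ a ∈ Finset.Icc 1 (L+3), if a ≤ L + 1 ∧ Even (S ∩ Finset.Icc a (L+1)).card ∧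
            0 < (S ∩ Finset.Icc a (L+1)).card then (1:ℤ) else 0) := by
    rw [combine3, hF1, Finset.sum_filter, Finset.sum_product, ← Finset.sum_neg_distrib]
    refine Finset.sum_congr rfl ?_
    intro a ha
    rw [Finset.mem_Icc] at ha
    refine Eq.trans (Finset.sum_subset (s₁ := ({L+1, L+2, L+3} : Finset ℕ)) ?_ ?_).symm ?_
    · intro x hx
      simp only [Finset.mem_insert, Finset.mem_singleton] at hx
      rw [Finset.mem_Icc]
      omega
    · intro b hb hnb
      rw [Finset.mem_Icc] at hb
      simp only [Finset.mem_insert, Finset.mem_singleton] at hnb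
      dsimp only
      simp only [Nat.even_iff]
      split_ifs <;> omega
    · rw [Finset.sum_insert (by simp only [Finset.mem_insert, Finset.mem_singleton]; omega),
        Finset.sum_insert (by simp only [Finset.mem_singleton]; omega),
        Finset.sum_singleton]
      dsimp only
      by_cases hA : a ≤ L + 2
      · rw [c13 a, c12 a hA]
        have hz : L + 1 < a → (S ∩ Finset.Icc a (L + 1)).card = 0 := fun h => by
          rw [Finset.Icc_eq_empty (by omega), Finset.inter_empty, Finset.card_empty]
        simp only [Nat.even_iff, le_refl, and_true, and_false, true_and, false_and, if_true, if_false,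
          eq_true (show L+1 ≤ L+2 from by omega), eq_true (show L+1 ≤ L+3 from by omega),
          eq_true (show L+2 ≤ L+3 from by omega),
          eq_false (show ¬(L+2 ≤ L+1) from by omega),
          eq_false (show ¬(L+3 ≤ L+1) from by omega),
          eq_false (show ¬(L+3 ≤ L+2) from by omega)]
        split_ifs <;> omega
      · have haeq : a = L + 3 := by omega
        subst haeq
        rw [c33]
        simp only [Nat.even_iff, le_refl, and_true, and_false, true_and, false_and, if_true, if_false,
          eq_true (show L+1 ≤ L+2 from by omega), eq_true (show L+1 ≤ L+3 from by omega),
          eq_true (show L+2 ≤ L+3 from by omega),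
          eq_false (show ¬(L+2 ≤ L+1) from by omega),
          eq_false (show ¬(L+3 ≤ L+1) from by omega),
          eq_false (show ¬(L+3 ≤ L+2) from by omega)]
        split_ifs <;> omega
  have e3 : -(∑ x ∈ F3, ((if x.1 ≤ L + 1 ∧ L + 1 ≤ x.2 then (1:ℤ) else 0)
          + if x.2 ≤ L then (2:ℤ) else 0))
      + 2*(∑ x ∈ F3, ((if x.1 ≤ L + 2 ∧ L + 2 ≤ x.2 then (1:ℤ) else 0)
          + if x.2 ≤ L + 1 then (2:ℤ) else 0))
      - 2*(∑ x ∈ F3, ((if x.1 ≤ L + 3 ∧ L + 3 ≤ x.2 then (1:ℤ) else 0) + 1))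
      = ∑ a ∈ Finset.Icc 1 (L+3),
          (if a ≤ L + 1 ∧ Even (S ∩ Finset.Icc a (L+1)).card then (1:ℤ) else 0) := by
    rw [combine3, hF3, Finset.sum_filter, Finset.sum_product]
    refine Finset.sum_congr rfl ?_
    intro a ha
    rw [Finset.mem_Icc] at ha
    refine Eq.trans (Finset.sum_subset (s₁ := ({L+1} : Finset ℕ)) ?_ ?_).symm ?_
    · intro x hx
      rw [Finset.mem_singleton] at hx
      rw [Finset.mem_Icc]
      omega
    · intro b hb hnb
      rw [Finset.mem_Icc] at hb
      rw [Finset.mem_singleton] at hnb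
      dsimp only
      simp only [Nat.even_iff]
      split_ifs <;> omega
    · rw [Finset.sum_singleton]
      dsimp only
      rw [show L + 1 + 1 = L + 2 from rfl, c22]
      simp only [Nat.even_iff, le_refl, and_true, and_false, true_and, false_and, if_true, if_false,
          eq_true (show L+1 ≤ L+2 from by omega), eq_true (show L+1 ≤ L+3 from by omega),
          eq_true (show L+2 ≤ L+3 from by omega),
          eq_false (show ¬(L+2 ≤ L+1) from by omega),
          eq_false (show ¬(L+3 ≤ L+1) from by omega),
          eq_false (show ¬(L+3 ≤ L+2) from by omega)]
      split_ifs <;> omega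
  have e2 : -(∑ x ∈ F2, if x ≤ L + 1 then (2:ℤ) else 0)
      + 2*(∑ x ∈ F2, if x ≤ L + 2 then (2:ℤ) else 0)
      - 2*(∑ x ∈ F2, (1:ℤ)) = 2 := by
    have hF2' : F2 = Finset.Icc 1 (L + 2) := by
      rw [hF2]
      apply Finset.filter_true_of_mem
      intro a ha
      rw [Finset.mem_Icc] at ha
      constructor
      · exact even_two_mul _
      · have hmem : L + 2 ∈ S ∩ Finset.Icc a (L + 2) :=
          Finset.mem_inter.mpr ⟨hl2, Finset.mem_Icc.mpr ⟨ha.2, le_rfl⟩⟩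
        have := Finset.card_pos.mpr ⟨_, hmem⟩
        omega
    rw [combine3, hF2']
    have step : ∀ a ∈ Finset.Icc 1 (L+2),
        (-(if a ≤ L + 1 then (2:ℤ) else 0) + 2 * (if a ≤ L + 2 then (2:ℤ) else 0) - 2 * 1)
          = if a = L + 2 then (2:ℤ) else 0 := by
      intro a ha
      rw [Finset.mem_Icc] at ha
      split_ifs <;> omega
    rw [Finset.sum_congr rfl step,
      Finset.sum_ite_eq' (Finset.Icc 1 (L+2)) (L+2) (fun _ => (2:ℤ)),
      if_pos (Finset.mem_Icc.mpr ⟨by omega, le_rfl⟩)]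
  have e13 : (∑ a ∈ Finset.Icc 1 (L+3),
        (if a ≤ L + 1 ∧ Even (S ∩ Finset.Icc a (L+1)).card then (1:ℤ) else 0))
      - (∑ a ∈ Finset.Icc 1 (L+3), (if a ≤ L + 1 ∧ Even (S ∩ Finset.Icc a (L+1)).card ∧
          0 < (S ∩ Finset.Icc a (L+1)).card then (1:ℤ) else 0))
      = (L : ℤ) + 1 - (p : ℤ) := by
    rw [← Finset.sum_sub_distrib]
    have step : ∀ a ∈ Finset.Icc 1 (L+3),
        ((if a ≤ L + 1 ∧ Even (S ∩ Finset.Icc a (L+1)).card then (1:ℤ) else 0)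
          - (if a ≤ L + 1 ∧ Even (S ∩ Finset.Icc a (L+1)).card ∧
              0 < (S ∩ Finset.Icc a (L+1)).card then (1:ℤ) else 0))
          = if a ∈ Finset.Icc (p+1) (L+1) then (1:ℤ) else 0 := by
      intro a ha
      rw [Finset.mem_Icc] at ha
      have hk := hkey a ha.1
      simp only [Finset.mem_Icc, Nat.even_iff]
      split_ifs <;> omega
    rw [Finset.sum_congr rfl step, Finset.sum_ite_mem,
      Finset.inter_eq_right.mpr (Finset.Icc_subset_Icc (by omega) (by omega)),
      Finset.sum_const, Nat.card_Icc, nsmul_eq_mul, mul_one]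
    omega
  push_cast
  linear_combination e1 + e2 + e3 + e13
end

section
/- Let ℓ ≥ 4 and let S = {i₁ < ⋯ < i_m} ⊆ {1,…,ℓ} be nonempty with i_m ≤ ℓ−3 (convention i₀ = 0). In the root system of type D_ℓ, positive roots are: Σ_{i=a}^{b} γ_i (1 ≤ a ≤ b ≤ ℓ−2), Σ_{i=a}^{ℓ−2} γ_i + γ_ν for ν ∈ {ℓ−1, ℓ} (1 ≤ a ≤ ℓ−2), Σ_{i=a}^{ℓ−2} γ_i + γ_{ℓ−1} + γ_ℓ (1 ≤ a ≤ ℓ−2), and Σ_{i=a}^{b} γ_i + Σ_{i=b+1}^{ℓ−2} 2γ_i + γ_{ℓ−1} + γ_ℓ (1 ≤ a ≤ b ≤ ℓ−3), together with γ_{ℓ−1}, γ_ℓ; a root α = Σ n_i γ_i is compact iff Σ_{i∈S} n_i is even, and relevant iff moreover Σ_{i∈S} n_i > 0. Let δᶜ ∈ ℤ^ℓ be the coefficient vector of the sum of all relevant compact positive roots. Then −δᶜ_{i_m−1} + 2δᶜ_{i_m} − δᶜ_{i_m+1} = i_m − i_{m−1} − 1 (with δᶜ_0 = 0). -/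
/-- `n`-th coefficient of the sum of all relevant compact positive roots of type `D_ℓ`.
Positive roots: `Σ_{i=a}^{b} γ_i` (`1 ≤ a ≤ b ≤ ℓ−2`), `Σ_{i=a}^{ℓ−2} γ_i + γ_{ℓ−1}`,
`Σ_{i=a}^{ℓ−2} γ_i + γ_ℓ`, `Σ_{i=a}^{ℓ−2} γ_i + γ_{ℓ−1} + γ_ℓ` (`1 ≤ a ≤ ℓ−2`),
`Σ_{i=a}^{b} γ_i + Σ_{i=b+1}^{ℓ−2} 2γ_i + γ_{ℓ−1} + γ_ℓ` (`1 ≤ a ≤ b ≤ ℓ−3`), and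
the simple roots `γ_{ℓ−1}`, `γ_ℓ`; a root `Σ nᵢγᵢ` is compact iff `Σ_{i∈S} nᵢ` is even,
relevant iff moreover `Σ_{i∈S} nᵢ > 0`. -/
def deltaD (ℓ : ℕ) (S : Finset ℕ) (n : ℕ) : ℤ :=
  (∑ p ∈ (Finset.Icc 1 (ℓ - 2) ×ˢ Finset.Icc 1 (ℓ - 2)).filter
      (fun p => p.1 ≤ p.2 ∧
        Even ((S ∩ Finset.Icc p.1 p.2).card) ∧
        0 < (S ∩ Finset.Icc p.1 p.2).card),
      (if p.1 ≤ n ∧ n ≤ p.2 then (1 : ℤ) else 0))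
  + (∑ a ∈ (Finset.Icc 1 (ℓ - 2)).filter
      (fun a =>
        Even ((S ∩ Finset.Icc a (ℓ - 2)).card + (if ℓ - 1 ∈ S then 1 else 0)) ∧
        0 < (S ∩ Finset.Icc a (ℓ - 2)).card + (if ℓ - 1 ∈ S then 1 else 0)),
      ((if a ≤ n ∧ n ≤ ℓ - 2 then (1 : ℤ) else 0) + (if n = ℓ - 1 then (1 : ℤ) else 0)))
  + (∑ a ∈ (Finset.Icc 1 (ℓ - 2)).filter
      (fun a =>
        Even ((S ∩ Finset.Icc a (ℓ - 2)).card + (if ℓ ∈ S then 1 else 0)) ∧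
        0 < (S ∩ Finset.Icc a (ℓ - 2)).card + (if ℓ ∈ S then 1 else 0)),
      ((if a ≤ n ∧ n ≤ ℓ - 2 then (1 : ℤ) else 0) + (if n = ℓ then (1 : ℤ) else 0)))
  + (∑ a ∈ (Finset.Icc 1 (ℓ - 2)).filter
      (fun a =>
        Even ((S ∩ Finset.Icc a (ℓ - 2)).card + (if ℓ - 1 ∈ S then 1 else 0)
          + (if ℓ ∈ S then 1 else 0)) ∧
        0 < (S ∩ Finset.Icc a (ℓ - 2)).card + (if ℓ - 1 ∈ S then 1 else 0)
          + (if ℓ ∈ S then 1 else 0)),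
      ((if a ≤ n ∧ n ≤ ℓ - 2 then (1 : ℤ) else 0)
        + (if n = ℓ - 1 ∨ n = ℓ then (1 : ℤ) else 0)))
  + (∑ p ∈ (Finset.Icc 1 (ℓ - 3) ×ˢ Finset.Icc 1 (ℓ - 3)).filter
      (fun p => p.1 ≤ p.2 ∧
        Even ((S ∩ Finset.Icc p.1 p.2).card
          + 2 * (S ∩ Finset.Icc (p.2 + 1) (ℓ - 2)).card
          + (if ℓ - 1 ∈ S then 1 else 0) + (if ℓ ∈ S then 1 else 0)) ∧
        0 < (S ∩ Finset.Icc p.1 p.2).card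
          + 2 * (S ∩ Finset.Icc (p.2 + 1) (ℓ - 2)).card
          + (if ℓ - 1 ∈ S then 1 else 0) + (if ℓ ∈ S then 1 else 0)),
      ((if p.1 ≤ n ∧ n ≤ p.2 then (1 : ℤ) else 0)
        + (if p.2 + 1 ≤ n ∧ n ≤ ℓ - 2 then (2 : ℤ) else 0)
        + (if n = ℓ - 1 ∨ n = ℓ then (1 : ℤ) else 0)))
  + (if Even (if ℓ - 1 ∈ S then 1 else 0) ∧ 0 < (if ℓ - 1 ∈ S then 1 else 0) ∧ n = ℓ - 1
      then (1 : ℤ) else 0)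
  + (if Even (if ℓ ∈ S then 1 else 0) ∧ 0 < (if ℓ ∈ S then 1 else 0) ∧ n = ℓ
      then (1 : ℤ) else 0)

def T1 (ℓ : ℕ) (S : Finset ℕ) (n : ℕ) : ℤ :=
  (∑ p ∈ (Finset.Icc 1 (ℓ - 2) ×ˢ Finset.Icc 1 (ℓ - 2)).filter
      (fun p => p.1 ≤ p.2 ∧
        Even ((S ∩ Finset.Icc p.1 p.2).card) ∧
        0 < (S ∩ Finset.Icc p.1 p.2).card),
      (if p.1 ≤ n ∧ n ≤ p.2 then (1 : ℤ) else 0))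

def T2 (ℓ : ℕ) (S : Finset ℕ) (n : ℕ) : ℤ :=
  (∑ a ∈ (Finset.Icc 1 (ℓ - 2)).filter
      (fun a =>
        Even ((S ∩ Finset.Icc a (ℓ - 2)).card + (if ℓ - 1 ∈ S then 1 else 0)) ∧
        0 < (S ∩ Finset.Icc a (ℓ - 2)).card + (if ℓ - 1 ∈ S then 1 else 0)),
      ((if a ≤ n ∧ n ≤ ℓ - 2 then (1 : ℤ) else 0) + (if n = ℓ - 1 then (1 : ℤ) else 0)))

def T3 (ℓ : ℕ) (S : Finset ℕ) (n : ℕ) : ℤ :=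
  (∑ a ∈ (Finset.Icc 1 (ℓ - 2)).filter
      (fun a =>
        Even ((S ∩ Finset.Icc a (ℓ - 2)).card + (if ℓ ∈ S then 1 else 0)) ∧
        0 < (S ∩ Finset.Icc a (ℓ - 2)).card + (if ℓ ∈ S then 1 else 0)),
      ((if a ≤ n ∧ n ≤ ℓ - 2 then (1 : ℤ) else 0) + (if n = ℓ then (1 : ℤ) else 0)))

def T4 (ℓ : ℕ) (S : Finset ℕ) (n : ℕ) : ℤ :=
  (∑ a ∈ (Finset.Icc 1 (ℓ - 2)).filter
      (fun a =>
        Even ((S ∩ Finset.Icc a (ℓ - 2)).card + (if ℓ - 1 ∈ S then 1 else 0)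
          + (if ℓ ∈ S then 1 else 0)) ∧
        0 < (S ∩ Finset.Icc a (ℓ - 2)).card + (if ℓ - 1 ∈ S then 1 else 0)
          + (if ℓ ∈ S then 1 else 0)),
      ((if a ≤ n ∧ n ≤ ℓ - 2 then (1 : ℤ) else 0)
        + (if n = ℓ - 1 ∨ n = ℓ then (1 : ℤ) else 0)))

def T5 (ℓ : ℕ) (S : Finset ℕ) (n : ℕ) : ℤ :=
  (∑ p ∈ (Finset.Icc 1 (ℓ - 3) ×ˢ Finset.Icc 1 (ℓ - 3)).filter
      (fun p => p.1 ≤ p.2 ∧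
        Even ((S ∩ Finset.Icc p.1 p.2).card
          + 2 * (S ∩ Finset.Icc (p.2 + 1) (ℓ - 2)).card
          + (if ℓ - 1 ∈ S then 1 else 0) + (if ℓ ∈ S then 1 else 0)) ∧
        0 < (S ∩ Finset.Icc p.1 p.2).card
          + 2 * (S ∩ Finset.Icc (p.2 + 1) (ℓ - 2)).card
          + (if ℓ - 1 ∈ S then 1 else 0) + (if ℓ ∈ S then 1 else 0)),
      ((if p.1 ≤ n ∧ n ≤ p.2 then (1 : ℤ) else 0)
        + (if p.2 + 1 ≤ n ∧ n ≤ ℓ - 2 then (2 : ℤ) else 0)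
        + (if n = ℓ - 1 ∨ n = ℓ then (1 : ℤ) else 0)))

def T6 (ℓ : ℕ) (S : Finset ℕ) (n : ℕ) : ℤ :=
  (if Even (if ℓ - 1 ∈ S then 1 else 0) ∧ 0 < (if ℓ - 1 ∈ S then 1 else 0) ∧ n = ℓ - 1
      then (1 : ℤ) else 0)

def T7 (ℓ : ℕ) (S : Finset ℕ) (n : ℕ) : ℤ :=
  (if Even (if ℓ ∈ S then 1 else 0) ∧ 0 < (if ℓ ∈ S then 1 else 0) ∧ n = ℓ
      then (1 : ℤ) else 0)


def FF (ℓ : ℕ) (S : Finset ℕ) : Finset (ℕ × ℕ) :=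
  (Finset.Icc 1 (ℓ - 2) ×ˢ Finset.Icc 1 (ℓ - 2)).filter
      (fun p => p.1 ≤ p.2 ∧
        Even ((S ∩ Finset.Icc p.1 p.2).card) ∧
        0 < (S ∩ Finset.Icc p.1 p.2).card)

def FF' (ℓ : ℕ) (S : Finset ℕ) : Finset (ℕ × ℕ) :=
  (Finset.Icc 1 (ℓ - 3) ×ˢ Finset.Icc 1 (ℓ - 3)).filter
      (fun p => p.1 ≤ p.2 ∧
        Even ((S ∩ Finset.Icc p.1 p.2).card
          + 2 * (S ∩ Finset.Icc (p.2 + 1) (ℓ - 2)).card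
          + (if ℓ - 1 ∈ S then 1 else 0) + (if ℓ ∈ S then 1 else 0)) ∧
        0 < (S ∩ Finset.Icc p.1 p.2).card
          + 2 * (S ∩ Finset.Icc (p.2 + 1) (ℓ - 2)).card
          + (if ℓ - 1 ∈ S then 1 else 0) + (if ℓ ∈ S then 1 else 0))




lemma combo_sum {α : Type*} [DecidableEq α] (F : Finset α) (f1 f2 f3 : α → ℤ)
    (P1 P2 : α → Prop) [DecidablePred P1] [DecidablePred P2]
    (h : ∀ p ∈ F, -(f1 p) + 2 * f2 p - f3 p
      = (if P1 p then (1 : ℤ) else 0) - (if P2 p then (1 : ℤ) else 0)) :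
    -(∑ p ∈ F, f1 p) + 2 * ∑ p ∈ F, f2 p - ∑ p ∈ F, f3 p
      = ((F.filter P1).card : ℤ) - ((F.filter P2).card : ℤ) := by
  rw [Finset.mul_sum, ← Finset.sum_neg_distrib, ← Finset.sum_add_distrib,
    ← Finset.sum_sub_distrib, Finset.sum_congr rfl h, Finset.sum_sub_distrib,
    Finset.sum_boole, Finset.sum_boole]

lemma combo_zero {α : Type*} (F : Finset α) (f1 f2 f3 : α → ℤ)
    (h : ∀ p ∈ F, -(f1 p) + 2 * f2 p - f3 p = 0) :
    -(∑ p ∈ F, f1 p) + 2 * ∑ p ∈ F, f2 p - ∑ p ∈ F, f3 p = 0 := by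
  rw [Finset.mul_sum, ← Finset.sum_neg_distrib, ← Finset.sum_add_distrib,
    ← Finset.sum_sub_distrib, Finset.sum_congr rfl h, Finset.sum_const, smul_zero]

lemma combo1 (ℓ : ℕ) (S : Finset ℕ) (n0 : ℕ) (hn01 : 1 ≤ n0) (hl2 : n0 + 1 ≤ ℓ - 2)
    (hsing : ∀ b, n0 ≤ b → S ∩ Finset.Icc n0 b = {n0})
    (hemp : ∀ a b : ℕ, n0 < a → S ∩ Finset.Icc a b = ∅) :
    -(T1 ℓ S (n0 - 1)) + 2 * T1 ℓ S n0 - T1 ℓ S (n0 + 1)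
      = (((FF ℓ S).filter (fun p => p.2 = n0 ∧ p.1 ≤ n0)).card : ℤ)
        - (((FF ℓ S).filter (fun p => p.2 + 1 = n0 ∧ p.1 + 1 ≤ n0)).card : ℤ) := by
  refine combo_sum (FF ℓ S) _ _ _ _ _ ?_
  intro p hp
  simp only [FF, Finset.mem_filter, Finset.mem_product, Finset.mem_Icc] at hp
  obtain ⟨⟨⟨ha1, ha2⟩, hb1, hb2⟩, hab, heven, hpos⟩ := hp
  have hA : ¬(p.1 = n0 ∧ n0 ≤ p.2) := by
    rintro ⟨he, hle'⟩
    rw [he, hsing p.2 hle'] at heven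
    simp at heven
  have hB : ¬(p.1 = n0 + 1) := by
    intro he
    rw [he, hemp (n0 + 1) p.2 (by omega)] at hpos
    simp at hpos
  split_ifs <;> omega


lemma combo2 (ℓ : ℕ) (S : Finset ℕ) (n0 : ℕ) (hℓ : 4 ≤ ℓ) (hn01 : 1 ≤ n0)
    (hle : n0 ≤ ℓ - 3) (hS1 : ℓ - 1 ∉ S)
    (hsing : ∀ b, n0 ≤ b → S ∩ Finset.Icc n0 b = {n0})
    (hemp : ∀ a b : ℕ, n0 < a → S ∩ Finset.Icc a b = ∅) :
    -(T2 ℓ S (n0 - 1)) + 2 * T2 ℓ S n0 - T2 ℓ S (n0 + 1) = 0 := by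
  refine combo_zero ((Finset.Icc 1 (ℓ - 2)).filter
      (fun a =>
        Even ((S ∩ Finset.Icc a (ℓ - 2)).card + (if ℓ - 1 ∈ S then 1 else 0)) ∧
        0 < (S ∩ Finset.Icc a (ℓ - 2)).card + (if ℓ - 1 ∈ S then 1 else 0)))
    (fun a => (if a ≤ n0 - 1 ∧ n0 - 1 ≤ ℓ - 2 then (1 : ℤ) else 0)
      + (if n0 - 1 = ℓ - 1 then (1 : ℤ) else 0))
    (fun a => (if a ≤ n0 ∧ n0 ≤ ℓ - 2 then (1 : ℤ) else 0)
      + (if n0 = ℓ - 1 then (1 : ℤ) else 0))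
    (fun a => (if a ≤ n0 + 1 ∧ n0 + 1 ≤ ℓ - 2 then (1 : ℤ) else 0)
      + (if n0 + 1 = ℓ - 1 then (1 : ℤ) else 0)) ?_
  intro a ha
  beta_reduce
  simp only [Finset.mem_filter, Finset.mem_Icc, if_neg hS1, add_zero] at ha
  obtain ⟨⟨ha1, ha2⟩, heven, hpos⟩ := ha
  have hA : a ≠ n0 := by
    intro he
    rw [he, hsing (ℓ - 2) (by omega)] at heven
    simp at heven
  have hB : a ≠ n0 + 1 := by
    intro he
    rw [he, hemp (n0 + 1) (ℓ - 2) (by omega)] at hpos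
    simp at hpos
  split_ifs <;> omega


set_option maxHeartbeats 1000000 in
lemma combo5 (ℓ : ℕ) (S : Finset ℕ) (n0 : ℕ) (hℓ : 4 ≤ ℓ) (hn01 : 1 ≤ n0)
    (hle : n0 ≤ ℓ - 3)
    (hS1 : ℓ - 1 ∉ S) (hS2 : ℓ ∉ S)
    (hsing : ∀ b, n0 ≤ b → S ∩ Finset.Icc n0 b = {n0})
    (hemp : ∀ a b : ℕ, n0 < a → S ∩ Finset.Icc a b = ∅) :
    -(T5 ℓ S (n0 - 1)) + 2 * T5 ℓ S n0 - T5 ℓ S (n0 + 1)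
      = (((FF' ℓ S).filter (fun p => p.2 + 1 = n0)).card : ℤ)
        - (((FF' ℓ S).filter (fun p => p.2 = n0)).card : ℤ) := by
  refine combo_sum (FF' ℓ S)
    (fun p => (if p.1 ≤ n0 - 1 ∧ n0 - 1 ≤ p.2 then (1 : ℤ) else 0)
      + (if p.2 + 1 ≤ n0 - 1 ∧ n0 - 1 ≤ ℓ - 2 then (2 : ℤ) else 0)
      + (if n0 - 1 = ℓ - 1 ∨ n0 - 1 = ℓ then (1 : ℤ) else 0))
    (fun p => (if p.1 ≤ n0 ∧ n0 ≤ p.2 then (1 : ℤ) else 0)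
      + (if p.2 + 1 ≤ n0 ∧ n0 ≤ ℓ - 2 then (2 : ℤ) else 0)
      + (if n0 = ℓ - 1 ∨ n0 = ℓ then (1 : ℤ) else 0))
    (fun p => (if p.1 ≤ n0 + 1 ∧ n0 + 1 ≤ p.2 then (1 : ℤ) else 0)
      + (if p.2 + 1 ≤ n0 + 1 ∧ n0 + 1 ≤ ℓ - 2 then (2 : ℤ) else 0)
      + (if n0 + 1 = ℓ - 1 ∨ n0 + 1 = ℓ then (1 : ℤ) else 0))
    (fun p => p.2 + 1 = n0) (fun p => p.2 = n0) ?_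
  intro p hp
  beta_reduce
  simp only [FF', Finset.mem_filter, Finset.mem_product, Finset.mem_Icc,
    if_neg hS1, if_neg hS2, add_zero] at hp
  obtain ⟨⟨⟨ha1, ha2⟩, hb1, hb2⟩, hab, heven, hpos⟩ := hp
  have hA : ¬(p.1 = n0 ∧ n0 ≤ p.2) := by
    rintro ⟨he, hle'⟩
    rw [he, hsing p.2 hle', hemp (p.2 + 1) (ℓ - 2) (by omega)] at heven
    simp at heven
  have hB : ¬(p.1 = n0 + 1) := by
    intro he
    rw [he, hemp (n0 + 1) p.2 (by omega), hemp (p.2 + 1) (ℓ - 2) (by omega)] at hpos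
    simp at hpos
  have hl2 : n0 + 1 ≤ ℓ - 2 := by omega
  split_ifs <;> omega


lemma cardE (ℓ : ℕ) (S : Finset ℕ) (n0 : ℕ) (hℓ : 4 ≤ ℓ) (hn01 : 1 ≤ n0)
    (hle : n0 ≤ ℓ - 3) (hS1 : ℓ - 1 ∉ S) (hS2 : ℓ ∉ S)
    (hemp : ∀ a b : ℕ, n0 < a → S ∩ Finset.Icc a b = ∅) :
    (FF ℓ S).filter (fun p => p.2 = n0 ∧ p.1 ≤ n0)
      = (FF' ℓ S).filter (fun p => p.2 = n0) := by
  have hc0 : (S ∩ Finset.Icc (n0 + 1) (ℓ - 2)).card = 0 := by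
    rw [hemp (n0 + 1) (ℓ - 2) (by omega)]; simp
  ext ⟨a, b⟩
  simp only [FF, FF', Finset.mem_filter, Finset.mem_product, Finset.mem_Icc,
    if_neg hS1, if_neg hS2, add_zero]
  constructor
  · rintro ⟨⟨⟨⟨ha1, ha2⟩, hb1, hb2⟩, hab, hev, hp⟩, hbn, han⟩
    rw [hbn] at hab hev hp ⊢
    rw [hc0]
    exact ⟨⟨⟨⟨ha1, by omega⟩, by omega, by omega⟩, hab, by simpa using hev,
      by simpa using hp⟩, rfl⟩
  · rintro ⟨⟨⟨⟨ha1, ha2⟩, hb1, hb2⟩, hab, hev, hp⟩, hbn⟩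
    rw [hbn] at hab hev hp ⊢
    rw [hc0] at hev hp
    simp only [mul_zero, add_zero] at hev hp
    exact ⟨⟨⟨⟨ha1, by omega⟩, by omega, by omega⟩, hab, hev, hp⟩, rfl, hab⟩

lemma cardBA (ℓ : ℕ) (S : Finset ℕ) (n0 nm : ℕ) (hℓ : 4 ≤ ℓ) (hn01 : 1 ≤ n0)
    (hle : n0 ≤ ℓ - 3) (hS1 : ℓ - 1 ∉ S) (hS2 : ℓ ∉ S) (hlt : nm < n0)
    (hsing : ∀ b, n0 ≤ b → S ∩ Finset.Icc n0 b = {n0})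
    (hzero : ∀ a : ℕ, 1 ≤ a → ((S ∩ Finset.Icc a (n0 - 1)).card = 0 ↔ nm < a)) :
    ((FF' ℓ S).filter (fun p => p.2 + 1 = n0)).card
      = ((FF ℓ S).filter (fun p => p.2 + 1 = n0 ∧ p.1 + 1 ≤ n0)).card + (n0 - 1 - nm) := by
  have hc1 : (S ∩ Finset.Icc n0 (ℓ - 2)).card = 1 := by
    rw [hsing (ℓ - 2) (by omega)]; simp
  set t := (FF' ℓ S).filter (fun p => p.2 + 1 = n0) with ht
  set s := (FF ℓ S).filter (fun p => p.2 + 1 = n0 ∧ p.1 + 1 ≤ n0) with hs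
  have hsub : s ⊆ t := by
    intro ⟨a, b⟩ hmem
    simp only [hs, ht, FF, FF', Finset.mem_filter, Finset.mem_product, Finset.mem_Icc,
      if_neg hS1, if_neg hS2, add_zero] at hmem ⊢
    obtain ⟨⟨⟨⟨ha1, ha2⟩, hb1, hb2⟩, hab, hev, hp⟩, hbn, han⟩ := hmem
    rw [hbn, hc1]
    refine ⟨⟨⟨⟨ha1, by omega⟩, by omega, by omega⟩, hab, ?_, by omega⟩, rfl⟩
    rw [Nat.even_iff] at hev ⊢
    omega
  have hdiff : t \ s = (Finset.Icc (nm + 1) (n0 - 1)).image (fun a => (a, n0 - 1)) := by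
    ext ⟨a, b⟩
    simp only [Finset.mem_sdiff, Finset.mem_image, Finset.mem_Icc, hs, ht, FF, FF',
      Finset.mem_filter, Finset.mem_product, Finset.mem_Icc,
      if_neg hS1, if_neg hS2, add_zero, Prod.mk.injEq]
    constructor
    · rintro ⟨⟨⟨⟨⟨ha1, ha2⟩, hb1, hb2⟩, hab, hev, hp⟩, hbn⟩, hns⟩
      rw [hbn, hc1] at hev
      have hb : b = n0 - 1 := by omega
      refine ⟨a, ⟨?_, by omega⟩, rfl, hb.symm⟩
      by_contra hcon
      push_neg at hcon
      have hcpos : 0 < (S ∩ Finset.Icc a b).card := by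
        have h2 := hzero a (by omega)
        rw [← hb] at h2
        omega
      apply hns
      refine ⟨⟨⟨⟨ha1, by omega⟩, by omega, by omega⟩, hab, ?_, hcpos⟩, hbn, by omega⟩
      rw [Nat.even_iff] at hev ⊢
      omega
    · rintro ⟨x, ⟨hx1, hx2⟩, rfl, rfl⟩
      have hc0 : (S ∩ Finset.Icc x (n0 - 1)).card = 0 := (hzero x (by omega)).mpr (by omega)
      have hn1 : n0 - 1 + 1 = n0 := by omega
      rw [hn1, hc1, hc0]
      constructor
      · exact ⟨⟨⟨⟨by omega, by omega⟩, by omega, by omega⟩, by omega, by decide, by omega⟩,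
          rfl⟩
      · intro hmem
        obtain ⟨⟨_, _, _, hp⟩, _, _⟩ := hmem
        omega
  have hinj : Function.Injective (fun a : ℕ => (a, n0 - 1)) := by
    intro x y h; simpa using h
  have hcard := Finset.card_sdiff_add_card_eq_card hsub
  rw [hdiff, Finset.card_image_of_injective _ hinj, Nat.card_Icc] at hcard
  omega


theorem deltaD_eq (ℓ : ℕ) (S : Finset ℕ) (n : ℕ) :
    deltaD ℓ S n = T1 ℓ S n + T2 ℓ S n + T3 ℓ S n + T4 ℓ S n + T5 ℓ S n
      + T6 ℓ S n + T7 ℓ S n := rfl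

lemma combo3 (ℓ : ℕ) (S : Finset ℕ) (n0 : ℕ) (hℓ : 4 ≤ ℓ) (hn01 : 1 ≤ n0)
    (hle : n0 ≤ ℓ - 3) (hS2 : ℓ ∉ S)
    (hsing : ∀ b, n0 ≤ b → S ∩ Finset.Icc n0 b = {n0})
    (hemp : ∀ a b : ℕ, n0 < a → S ∩ Finset.Icc a b = ∅) :
    -(T3 ℓ S (n0 - 1)) + 2 * T3 ℓ S n0 - T3 ℓ S (n0 + 1) = 0 := by
  refine combo_zero ((Finset.Icc 1 (ℓ - 2)).filter
      (fun a =>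
        Even ((S ∩ Finset.Icc a (ℓ - 2)).card + (if ℓ ∈ S then 1 else 0)) ∧
        0 < (S ∩ Finset.Icc a (ℓ - 2)).card + (if ℓ ∈ S then 1 else 0)))
    (fun a => (if a ≤ n0 - 1 ∧ n0 - 1 ≤ ℓ - 2 then (1 : ℤ) else 0)
      + (if n0 - 1 = ℓ then (1 : ℤ) else 0))
    (fun a => (if a ≤ n0 ∧ n0 ≤ ℓ - 2 then (1 : ℤ) else 0)
      + (if n0 = ℓ then (1 : ℤ) else 0))
    (fun a => (if a ≤ n0 + 1 ∧ n0 + 1 ≤ ℓ - 2 then (1 : ℤ) else 0)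
      + (if n0 + 1 = ℓ then (1 : ℤ) else 0)) ?_
  intro a ha
  beta_reduce
  simp only [Finset.mem_filter, Finset.mem_Icc, if_neg hS2, add_zero] at ha
  obtain ⟨⟨ha1, ha2⟩, heven, hpos⟩ := ha
  have hA : a ≠ n0 := by
    intro he
    rw [he, hsing (ℓ - 2) (by omega)] at heven
    simp at heven
  have hB : a ≠ n0 + 1 := by
    intro he
    rw [he, hemp (n0 + 1) (ℓ - 2) (by omega)] at hpos
    simp at hpos
  split_ifs <;> omega

lemma combo4 (ℓ : ℕ) (S : Finset ℕ) (n0 : ℕ) (hℓ : 4 ≤ ℓ) (hn01 : 1 ≤ n0)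
    (hle : n0 ≤ ℓ - 3) (hS1 : ℓ - 1 ∉ S) (hS2 : ℓ ∉ S)
    (hsing : ∀ b, n0 ≤ b → S ∩ Finset.Icc n0 b = {n0})
    (hemp : ∀ a b : ℕ, n0 < a → S ∩ Finset.Icc a b = ∅) :
    -(T4 ℓ S (n0 - 1)) + 2 * T4 ℓ S n0 - T4 ℓ S (n0 + 1) = 0 := by
  refine combo_zero ((Finset.Icc 1 (ℓ - 2)).filter
      (fun a =>
        Even ((S ∩ Finset.Icc a (ℓ - 2)).card + (if ℓ - 1 ∈ S then 1 else 0)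
          + (if ℓ ∈ S then 1 else 0)) ∧
        0 < (S ∩ Finset.Icc a (ℓ - 2)).card + (if ℓ - 1 ∈ S then 1 else 0)
          + (if ℓ ∈ S then 1 else 0)))
    (fun a => (if a ≤ n0 - 1 ∧ n0 - 1 ≤ ℓ - 2 then (1 : ℤ) else 0)
      + (if n0 - 1 = ℓ - 1 ∨ n0 - 1 = ℓ then (1 : ℤ) else 0))
    (fun a => (if a ≤ n0 ∧ n0 ≤ ℓ - 2 then (1 : ℤ) else 0)
      + (if n0 = ℓ - 1 ∨ n0 = ℓ then (1 : ℤ) else 0))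
    (fun a => (if a ≤ n0 + 1 ∧ n0 + 1 ≤ ℓ - 2 then (1 : ℤ) else 0)
      + (if n0 + 1 = ℓ - 1 ∨ n0 + 1 = ℓ then (1 : ℤ) else 0)) ?_
  intro a ha
  beta_reduce
  simp only [Finset.mem_filter, Finset.mem_Icc, if_neg hS1, if_neg hS2, add_zero] at ha
  obtain ⟨⟨ha1, ha2⟩, heven, hpos⟩ := ha
  have hA : a ≠ n0 := by
    intro he
    rw [he, hsing (ℓ - 2) (by omega)] at heven
    simp at heven
  have hB : a ≠ n0 + 1 := by
    intro he
    rw [he, hemp (n0 + 1) (ℓ - 2) (by omega)] at hpos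
    simp at hpos
  split_ifs <;> omega

theorem main (ℓ : ℕ) (S : Finset ℕ) (n0 nm : ℕ) (hℓ : 4 ≤ ℓ) (hn0S : n0 ∈ S)
    (hub : ∀ x ∈ S, 1 ≤ x ∧ x ≤ n0)
    (hsec : ∀ x ∈ S, x ≠ n0 → x ≤ nm)
    (hmem : nm = 0 ∨ nm ∈ S)
    (hlt : nm < n0) (hle : n0 ≤ ℓ - 3) :
    -(deltaD ℓ S (n0 - 1)) + 2 * deltaD ℓ S n0 - deltaD ℓ S (n0 + 1)
      = (n0 : ℤ) - (nm : ℤ) - 1 := by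
  have hn01 : 1 ≤ n0 := (hub n0 hn0S).1
  have hS1 : ℓ - 1 ∉ S := fun h => by have := (hub _ h).2; omega
  have hS2 : ℓ ∉ S := fun h => by have := (hub _ h).2; omega
  have hemp : ∀ a b : ℕ, n0 < a → S ∩ Finset.Icc a b = ∅ := by
    intro a b ha
    ext x
    simp only [Finset.mem_inter, Finset.mem_Icc, Finset.notMem_empty, iff_false, not_and]
    intro hx h1 h2
    have := (hub x hx).2; omega
  have hsing : ∀ b : ℕ, n0 ≤ b → S ∩ Finset.Icc n0 b = {n0} := by
    intro b hb
    ext x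
    simp only [Finset.mem_inter, Finset.mem_Icc, Finset.mem_singleton]
    constructor
    · rintro ⟨hx, h1, h2⟩; have := (hub x hx).2; omega
    · rintro rfl; exact ⟨hn0S, le_refl _, hb⟩
  have hzero : ∀ a : ℕ, 1 ≤ a → ((S ∩ Finset.Icc a (n0 - 1)).card = 0 ↔ nm < a) := by
    intro a ha
    rw [Finset.card_eq_zero]
    constructor
    · intro h
      by_contra hcon
      push_neg at hcon
      rcases hmem with h0 | hmemS
      · omega
      · have : nm ∈ S ∩ Finset.Icc a (n0 - 1) :=
          Finset.mem_inter.mpr ⟨hmemS, Finset.mem_Icc.mpr ⟨hcon, by omega⟩⟩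
        rw [h] at this; exact absurd this (Finset.notMem_empty _)
    · intro h
      ext x
      simp only [Finset.mem_inter, Finset.mem_Icc, Finset.notMem_empty, iff_false, not_and]
      intro hx h1 h2
      have hxn : x ≠ n0 := by omega
      have := hsec x hx hxn
      omega
  have h1 := combo1 ℓ S n0 hn01 (by omega) hsing hemp
  have h2 := combo2 ℓ S n0 hℓ hn01 hle hS1 hsing hemp
  have h3 := combo3 ℓ S n0 hℓ hn01 hle hS2 hsing hemp
  have h4 := combo4 ℓ S n0 hℓ hn01 hle hS1 hS2 hsing hemp
  have h5 := combo5 ℓ S n0 hℓ hn01 hle hS1 hS2 hsing hemp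
  have hE := cardE ℓ S n0 hℓ hn01 hle hS1 hS2 hemp
  have hBA := cardBA ℓ S n0 nm hℓ hn01 hle hS1 hS2 hlt hsing hzero
  have h6 : ∀ n, T6 ℓ S n = 0 := by intro n; simp [T6, hS1]
  have h7 : ∀ n, T7 ℓ S n = 0 := by intro n; simp [T7, hS2]
  rw [hE] at h1
  have hBA' : (((FF' ℓ S).filter (fun p => p.2 + 1 = n0)).card : ℤ)
      - (((FF ℓ S).filter (fun p => p.2 + 1 = n0 ∧ p.1 + 1 ≤ n0)).card : ℤ)
      = (n0 : ℤ) - (nm : ℤ) - 1 := by omega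
  simp only [deltaD_eq, h6, h7]
  linarith [h1, h2, h3, h4, h5, hBA']


/-- type `D_ℓ`, case `j = m`, `i_m ≤ ℓ−3`:
`−δᶜ_{i_m−1} + 2δᶜ_{i_m} − δᶜ_{i_m+1} = i_m − i_{m−1} − 1`. -/
theorem stmt13 (ℓ m : ℕ) (hℓ : 4 ≤ ℓ) (hm : 1 ≤ m)
    (i : ℕ → ℕ) (h0 : i 0 = 0)
    (hmono : ∀ k ≤ m, i k < i (k + 1)) (him : i m ≤ ℓ - 3) :
    -(deltaD ℓ ((Finset.Icc 1 m).image i) (i m - 1))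
      + 2 * deltaD ℓ ((Finset.Icc 1 m).image i) (i m)
      - deltaD ℓ ((Finset.Icc 1 m).image i) (i m + 1)
      = (i m : ℤ) - (i (m - 1) : ℤ) - 1 := by
  set S := (Finset.Icc 1 m).image i with hS
  have mono : ∀ l, l ≤ m → ∀ k, k ≤ l → i k ≤ i l := by
    intro l
    induction l with
    | zero => intro _ k hk; rw [Nat.le_zero.mp hk]
    | succ l ih =>
      intro hl k hk
      rcases Nat.eq_or_lt_of_le hk with rfl | hlt'
      · exact le_rfl
      · have hkl : i k ≤ i l := ih (by omega) k (by omega)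
        have h2 : i l < i (l + 1) := hmono l (by omega)
        omega
  have hn0S : i m ∈ S := Finset.mem_image.mpr ⟨m, Finset.mem_Icc.mpr ⟨hm, le_rfl⟩, rfl⟩
  have hub : ∀ x ∈ S, 1 ≤ x ∧ x ≤ i m := by
    intro x hx
    obtain ⟨k, hk, rfl⟩ := Finset.mem_image.mp hx
    rw [Finset.mem_Icc] at hk
    constructor
    · have h01 : i 0 < i 1 := hmono 0 (by omega)
      have h1k : i 1 ≤ i k := mono k hk.2 1 hk.1
      omega
    · exact mono m le_rfl k hk.2
  have hsec : ∀ x ∈ S, x ≠ i m → x ≤ i (m - 1) := by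
    intro x hx hne
    obtain ⟨k, hk, rfl⟩ := Finset.mem_image.mp hx
    rw [Finset.mem_Icc] at hk
    rcases Nat.eq_or_lt_of_le hk.2 with rfl | hlt'
    · exact absurd rfl hne
    · exact mono (m - 1) (by omega) k (by omega)
  have hmem : i (m - 1) = 0 ∨ i (m - 1) ∈ S := by
    rcases Nat.eq_or_lt_of_le hm with h1 | h2
    · left; rw [← h1]; simpa using h0
    · right
      exact Finset.mem_image.mpr ⟨m - 1, Finset.mem_Icc.mpr ⟨by omega, by omega⟩, rfl⟩
  have hlt : i (m - 1) < i m := by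
    have := hmono (m - 1) (by omega)
    rwa [show m - 1 + 1 = m by omega] at this
  exact main ℓ S (i m) (i (m - 1)) hℓ hn0S hub hsec hmem hlt him
end
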